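/- arXiv:0911.5151 — 6 statements merged into one kernel-verified Lean document; each statement's English description precedes it below -/
import Mathlib

section
/- If an infinite word w over a finite alphabet has exactly one Abelian factor of some length m ≥ 1 (all factors of length m are anagrams of each other), then w cannot be recurrent and aperiodic; more precisely, if w is recurrent and all its factors of length m are anagrams, then w is periodic. -/
/-- The factor of the infinite word `w` of length `m` starting at position `i`. -/
def factorAt {α : Type*} (w : ℕ → α) (i m : ℕ) : List α :=
  (List.range m).map fun k => w (i + k)

/-- `u` is a (finite) factor of the infinite word `w`. -/
def IsFactor {α : Type*} (w : ℕ → α) (u : List α) : Prop :=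
  ∃ i, u = factorAt w i u.length

/-- `w` is recurrent: every factor occurs infinitely often. -/
def Recurrent {α : Type*} (w : ℕ → α) : Prop :=
  ∀ u, IsFactor w u → ∀ N, ∃ i, N ≤ i ∧ u = factorAt w i u.length

/-- The set of Abelian factors (anagram classes, i.e. multisets) of length `m` of `w`. -/
def abelianFactors {α : Type*} (w : ℕ → α) (m : ℕ) : Set (Multiset α) :=
  {s | ∃ i, s = (factorAt w i m : Multiset α)}

/-- `{a,b}` is an edge of the factor graph of `w` (loops allowed). -/
def HasEdge {α : Type*} (w : ℕ → α) (a b : α) : Prop :=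
  IsFactor w [a, b] ∨ IsFactor w [b, a]

/-- The set of triples associated with the letter `a`: anagram classes of
length-3 factors of `w` whose middle letter is `a`. -/
def triples {α : Type*} (w : ℕ → α) (a : α) : Set (Multiset α) :=
  {s | ∃ x y, IsFactor w [x, a, y] ∧ s = ({x, a, y} : Multiset α)}

/-- The edge sets of cycles of a graph with edge set `E` (loops allowed):
a cycle is either a loop or a cycle on `m ≥ 3` distinct vertices. -/
def cycleEdgeSets {V : Type*} (E : Set (Sym2 V)) : Set (Set (Sym2 V)) :=
  {C | (∃ v, s(v, v) ∈ E ∧ C = {s(v, v)}) ∨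
       (∃ m : ℕ, 3 ≤ m ∧ ∃ f : ZMod m → V, Function.Injective f ∧
          (∀ k, s(f k, f (k + 1)) ∈ E) ∧ C = {e | ∃ k, e = s(f k, f (k + 1))})}

/-- The edge set of the factor graph of a word `w`. -/
def factorGraphEdges {α : Type*} (w : ℕ → α) : Set (Sym2 α) :=
  {e | ∃ a b, e = s(a, b) ∧ HasEdge w a b}

/-- If a recurrent infinite word has all its factors of some length
`m ≥ 1` anagrams of each other, then it is periodic. -/
theorem stmt1 {α : Type*} (w : ℕ → α) (m : ℕ) (hm : 1 ≤ m)
    (hrec : Recurrent w)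
    (h : ∀ i j, (factorAt w i m : Multiset α) = (factorAt w j m : Multiset α)) :
    ∃ p, 1 ≤ p ∧ ∀ i, w (i + p) = w i := by
  obtain ⟨n, rfl⟩ : ∃ n, m = n + 1 := ⟨m - 1, by omega⟩
  refine ⟨n + 1, by omega, fun i => ?_⟩
  have h1 : factorAt w i (n + 1) = w i :: factorAt w (i + 1) n := by
    simp only [factorAt, List.range_succ_eq_map, List.map_cons, List.map_map, add_zero]
    congr 1
    apply List.map_congr_left
    intro k _
    simp [Function.comp]
    ring_nf
  have h2 : factorAt w (i + 1) (n + 1) = factorAt w (i + 1) n ++ [w (i + 1 + n)] := by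
    simp [factorAt, List.range_succ]
  have key := h i (i + 1)
  rw [h1, h2] at key
  push_cast at key
  rw [← Multiset.cons_coe, ← Multiset.coe_add, Multiset.coe_singleton, add_comm (↑(factorAt w (i + 1) n) : Multiset α) {w (i + 1 + n)}, Multiset.singleton_add] at key
  have heq : w i = w (i + 1 + n) := (Multiset.cons_inj_left _).mp key
  rw [show i + (n + 1) = i + 1 + n by ring, ← heq]
end

section
/- Let w be an infinite word over an n-letter alphabet Σ containing all n letters, with exactly n Abelian factors of length 2. Then the graph G on vertex set Σ, with an edge {i,j} (possibly a loop i=j) whenever ij or ji is a factor of w, is connected and has exactly n edges; hence G consists of a spanning tree plus one additional edge and contains a unique cycle (possibly a loop). -/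
namespace Stmt2Aux

open Relation

variable {V : Type*}

def Step (E : Set (Sym2 V)) (a b : V) : Prop := a ≠ b ∧ s(a, b) ∈ E

lemma step_symm {E : Set (Sym2 V)} : Symmetric (Step E) :=
  fun _ _ h => ⟨h.1.symm, Sym2.eq_swap ▸ h.2⟩

def Conn (E : Set (Sym2 V)) : Prop := ∀ u v : V, ReflTransGen (Step E) u v

lemma conn_mono {E E' : Set (Sym2 V)}
    (h : ∀ a b : V, Step E a b → ReflTransGen (Step E') a b) (hc : Conn E) : Conn E' := by
  intro u v
  induction hc u v with
  | refl => exact .refl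
  | tail _ hstep ih => exact ih.trans (h _ _ hstep)

lemma natCast_zmod_ne_zero {m t : ℕ} (h1 : 1 ≤ t) (h2 : t < m) : ((t : ℕ) : ZMod m) ≠ 0 := by
  haveI : NeZero m := ⟨by omega⟩
  rw [Ne, ZMod.natCast_eq_zero_iff]
  intro hd; have := Nat.le_of_dvd (by omega) hd; omega

lemma cycle_edge_inj {m : ℕ} (hm : 3 ≤ m) {f : ZMod m → V} (hf : Function.Injective f)
    {j k : ZMod m} (h : s(f j, f (j + 1)) = s(f k, f (k + 1))) : j = k := by
  rw [Sym2.eq_iff] at h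
  rcases h with ⟨h1, _⟩ | ⟨h1, h2⟩
  · exact hf h1
  · have e1 : j = k + 1 := hf h1
    have e2 : j + 1 = k := hf h2
    have h2 : ((2 : ℕ) : ZMod m) = 0 := by
      push_cast
      linear_combination e2 - e1
    exact absurd h2 (natCast_zmod_ne_zero (by omega) (by omega))

lemma cycle_subset {E C : Set (Sym2 V)} (h : C ∈ cycleEdgeSets E) : C ⊆ E := by
  rcases h with ⟨v, hv, rfl⟩ | ⟨m, hm, f, hf, hfe, rfl⟩
  · intro e he; rwa [Set.mem_singleton_iff.mp he]
  · rintro e ⟨k, rfl⟩; exact hfe k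

lemma cycle_nonempty {E C : Set (Sym2 V)} (h : C ∈ cycleEdgeSets E) : ∃ e, e ∈ C := by
  rcases h with ⟨v, hv, rfl⟩ | ⟨m, hm, f, hf, hfe, rfl⟩
  · exact ⟨s(v, v), rfl⟩
  · exact ⟨s(f 0, f 1), 0, by norm_num⟩

lemma cycle_mono {E E' C : Set (Sym2 V)} (hE : E ⊆ E') (h : C ∈ cycleEdgeSets E) :
    C ∈ cycleEdgeSets E' := by
  rcases h with ⟨v, hv, rfl⟩ | ⟨m, hm, f, hf, hfe, rfl⟩
  · exact Or.inl ⟨v, hE hv, rfl⟩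
  · exact Or.inr ⟨m, hm, f, hf, fun k => hE (hfe k), rfl⟩


lemma rtg_symm {E : Set (Sym2 V)} {a b : V} (h : ReflTransGen (Step E) a b) :
    ReflTransGen (Step E) b a := by
  haveI : Std.Symm (Step E) := ⟨step_symm⟩
  exact Std.Symm.symm _ _ h

lemma conn_remove_cycle_edge {E C : Set (Sym2 V)} (hC : C ∈ cycleEdgeSets E)
    {e : Sym2 V} (he : e ∈ C) (hc : Conn E) : Conn (E \ {e}) := by
  refine conn_mono (fun a b hab => ?_) hc
  by_cases hne : s(a, b) = e
  swap
  · exact ReflTransGen.single ⟨hab.1, hab.2, hne⟩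
  rcases hC with ⟨v, hv, rfl⟩ | ⟨m, hm, f, hf, hfe, rfl⟩
  · rw [Set.mem_singleton_iff.mp he, Sym2.eq_iff] at hne
    rcases hne with ⟨rfl, rfl⟩ | ⟨rfl, rfl⟩ <;> exact absurd rfl hab.1
  · obtain ⟨k₀, rfl⟩ := he
    set e := s(f k₀, f (k₀ + 1)) with hedef
    -- chain around the cycle
    have key : ∀ t : ℕ, t ≤ m - 1 →
        ReflTransGen (Step (E \ {e})) (f (k₀ + 1)) (f (k₀ + 1 + (t : ℕ))) := by
      intro t ht
      induction t with
      | zero => simpa using ReflTransGen.refl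
      | succ t ih =>
        refine (ih (by omega)).tail ?_
        set j : ZMod m := k₀ + 1 + (t : ℕ) with hj
        have hjk : j ≠ k₀ := by
          intro hcon
          have : ((1 + t : ℕ) : ZMod m) = 0 := by
            push_cast
            linear_combination hcon - hj.symm
          exact natCast_zmod_ne_zero (by omega) (by omega) this
        have hone : (1 : ZMod m) ≠ 0 := by
          have := natCast_zmod_ne_zero (m := m) (t := 1) le_rfl (by omega)
          simpa using this
        have hstep : Step (E \ {e}) (f j) (f (j + 1)) := by
          refine ⟨fun hcon => ?_, hfe j, fun hcon => hjk (cycle_edge_inj hm hf hcon)⟩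
          have := hf hcon
          exact hone (by linear_combination this.symm)
        have : (↑(t + 1) : ZMod m) = (t : ℕ) + 1 := by push_cast; ring
        rw [this, ← add_assoc]
        exact hstep
    have hlast := key (m - 1) le_rfl
    have hcast : ((m - 1 : ℕ) : ZMod m) = -1 := by
      have : (((m - 1 : ℕ) + 1 : ℕ) : ZMod m) = 0 := by
        rw [Nat.sub_add_cancel (by omega)]; exact ZMod.natCast_self m
      push_cast at this
      linear_combination this
    rw [hcast] at hlast
    have hback : ReflTransGen (Step (E \ {e})) (f (k₀ + 1)) (f k₀) := by
      simpa using hlast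
    rw [Sym2.eq_iff] at hne
    rcases hne with ⟨rfl, rfl⟩ | ⟨rfl, rfl⟩
    · exact rtg_symm hback
    · exact hback


/-- The simple graph with adjacency `Step E`. -/
def G (E : Set (Sym2 V)) : SimpleGraph V where
  Adj := Step E
  symm := ⟨step_symm⟩
  loopless := ⟨fun _ h => h.1 rfl⟩

lemma edgeSet_G (E : Set (Sym2 V)) : (G E).edgeSet = {e ∈ E | ¬ e.IsDiag} := by
  ext e
  induction e with
  | _ a b =>
    simp only [SimpleGraph.mem_edgeSet, Set.mem_setOf_eq, Sym2.isDiag_iff_proj_eq]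
    constructor
    · exact fun (h : Step E a b) => ⟨h.2, h.1⟩
    · exact fun h => show Step E a b from ⟨h.2, h.1⟩

lemma edgeSet_G_of_no_diag {E : Set (Sym2 V)} (h : ∀ e ∈ E, ¬ e.IsDiag) :
    (G E).edgeSet = E := by
  rw [edgeSet_G]
  ext e
  exact ⟨fun he => he.1, fun he => ⟨he, h e he⟩⟩

lemma conn_G {E : Set (Sym2 V)} (hc : Conn E) [Nonempty V] : (G E).Connected :=
  ⟨fun u v => (SimpleGraph.reachable_iff_reflTransGen u v).mpr (show ReflTransGen (Step E) u v from hc u v)⟩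

lemma getVert_support_getElem? {G : SimpleGraph V} {u v : V} (p : G.Walk u v) {i : ℕ}
    (hi : i ≤ p.length) : p.support[i]? = some (p.getVert i) := by
  induction p generalizing i with
  | nil =>
    simp only [SimpleGraph.Walk.length_nil, Nat.le_zero] at hi
    subst hi
    simp [SimpleGraph.Walk.support_nil, SimpleGraph.Walk.getVert_zero]
  | cons h q ih =>
    cases i with
    | zero => simp [SimpleGraph.Walk.support_cons, SimpleGraph.Walk.getVert_zero]
    | succ i =>
      simp only [SimpleGraph.Walk.support_cons, List.getElem?_cons_succ,
        SimpleGraph.Walk.getVert_cons_succ]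
      exact ih (by simpa using hi)

/-- A cycle walk gives rise to a `ZMod`-indexed cycle. -/
lemma walk_cycle_to_zmod {G : SimpleGraph V} {v : V} {p : G.Walk v v} (hp : p.IsCycle) :
    ∃ C, C ∈ cycleEdgeSets G.edgeSet := by
  set m := p.length with hmdef
  have hm : 3 ≤ m := hp.three_le_length
  haveI : NeZero m := ⟨by omega⟩
  set f : ZMod m → V := fun k => p.getVert (k.val + 1) with hf
  have hsupp : p.support = v :: p.support.tail := by
    cases p with
    | nil => exact absurd rfl hp.ne_nil
    | cons h q => simp [SimpleGraph.Walk.support_cons]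
  have htail : ∀ i : ℕ, i < m → p.support.tail[i]? = some (p.getVert (i + 1)) := by
    intro i hi
    have := getVert_support_getElem? p (i := i + 1) (by omega)
    rw [hsupp, List.getElem?_cons_succ] at this
    exact this
  have htaillen : p.support.tail.length = m := by
    have := SimpleGraph.Walk.length_support p
    rw [hsupp] at this
    simp only [List.length_cons] at this
    omega
  have hinj : Function.Injective f := by
    intro k k' hkk
    have h1 := htail k.val (ZMod.val_lt k)
    have h2 := htail k'.val (ZMod.val_lt k')
    rw [hf] at hkk
    simp only at hkk
    rw [hkk] at h1
    have := (List.getElem?_inj (by rw [htaillen]; exact ZMod.val_lt k) hp.support_nodup).mp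
      (h1.trans h2.symm)
    exact ZMod.val_injective _ this
  refine ⟨_, Or.inr ⟨m, hm, f, hinj, fun k => ?_, rfl⟩⟩
  rw [SimpleGraph.mem_edgeSet]
  have hval : (k + 1).val = (k.val + 1) % m := by
    have : k + 1 = ((k.val + 1 : ℕ) : ZMod m) := by
      push_cast
      rw [ZMod.natCast_val, ZMod.cast_id]
    rw [this, ZMod.val_natCast]
  by_cases hcase : k.val + 1 < m
  · have : (k + 1).val = k.val + 1 := by rw [hval, Nat.mod_eq_of_lt hcase]
    rw [hf]
    simp only
    rw [this]
    exact p.adj_getVert_succ (by omega)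
  · have hkv : k.val + 1 = m := by have := ZMod.val_lt k; omega
    have : (k + 1).val = 0 := by rw [hval, hkv, Nat.mod_self]
    rw [hf]
    simp only
    rw [this, hkv]
    have h0 : p.getVert m = p.getVert 0 := by
      rw [SimpleGraph.Walk.getVert_zero, hmdef, SimpleGraph.Walk.getVert_length]
    rw [h0, SimpleGraph.Walk.getVert_zero]
    have := p.adj_getVert_succ (i := 0) (by omega)
    rwa [SimpleGraph.Walk.getVert_zero] at this


lemma conn_diff_diag {E : Set (Sym2 V)} {e : Sym2 V} (hd : e.IsDiag) (hc : Conn E) :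
    Conn (E \ {e}) := by
  refine conn_mono (fun a b hab => ReflTransGen.single ⟨hab.1, hab.2, fun hcon => ?_⟩) hc
  rw [← hcon] at hd
  exact hab.1 (Sym2.mk_isDiag_iff.mp hd)

lemma card_le_of_conn [Fintype V] {E : Set (Sym2 V)} (hE : E.Finite) (hc : Conn E) :
    Fintype.card V ≤ E.ncard + 1 := by
  classical
  generalize hN : E.ncard = N
  induction N using Nat.strong_induction_on generalizing E with
  | _ N ih =>
  by_cases hdiag : ∃ e ∈ E, e.IsDiag
  · obtain ⟨e, heE, hd⟩ := hdiag
    have hcard : (E \ {e}).ncard = N - 1 := by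
      rw [Set.ncard_diff_singleton_of_mem heE, hN]
    have hNpos : 1 ≤ N := by
      rw [← hN]
      exact (Set.ncard_pos hE).mpr ⟨e, heE⟩
    have := ih (N - 1) (by omega) hE.diff (conn_diff_diag hd hc) hcard
    omega
  · push_neg at hdiag
    by_cases hacyc : (G E).IsAcyclic
    · rcases isEmpty_or_nonempty V with hV | hV
      · simp [Fintype.card_eq_zero]
      · have htree : (G E).IsTree := ⟨conn_G hc, hacyc⟩
        have hES : (G E).edgeSet = E := edgeSet_G_of_no_diag hdiag
        haveI : Fintype (G E).edgeSet := (hES ▸ hE).fintype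
        have hcard := htree.card_edgeFinset
        have : (G E).edgeFinset.card = E.ncard := by
          rw [SimpleGraph.edgeFinset, ← Set.ncard_eq_toFinset_card', hES]
        omega
    · simp only [SimpleGraph.IsAcyclic, not_forall, not_not] at hacyc
      obtain ⟨v, c, hcyc⟩ := hacyc
      obtain ⟨C, hC⟩ := walk_cycle_to_zmod hcyc
      have hCE : C ∈ cycleEdgeSets E := by
        rw [edgeSet_G_of_no_diag hdiag] at hC; exact hC
      obtain ⟨e, heC⟩ := cycle_nonempty hCE
      have heE : e ∈ E := cycle_subset hCE heC
      have hcard : (E \ {e}).ncard = N - 1 := by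
        rw [Set.ncard_diff_singleton_of_mem heE, hN]
      have hNpos : 1 ≤ N := by
        rw [← hN]; exact (Set.ncard_pos hE).mpr ⟨e, heE⟩
      have := ih (N - 1) (by omega) hE.diff (conn_remove_cycle_edge hCE heC hc) hcard
      omega


lemma exists_cycle [Fintype V] [Nonempty V] {E : Set (Sym2 V)} (hE : E.Finite) (hc : Conn E)
    (hcard : Fintype.card V ≤ E.ncard) : ∃ C, C ∈ cycleEdgeSets E := by
  classical
  by_cases hdiag : ∃ e ∈ E, e.IsDiag
  · obtain ⟨e, heE, hd⟩ := hdiag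
    induction e with
    | _ a b =>
      obtain rfl : a = b := Sym2.mk_isDiag_iff.mp hd
      exact ⟨{s(a, a)}, Or.inl ⟨a, heE, rfl⟩⟩
  · push_neg at hdiag
    by_cases hacyc : (G E).IsAcyclic
    · exfalso
      have htree : (G E).IsTree := ⟨conn_G hc, hacyc⟩
      have hES : (G E).edgeSet = E := edgeSet_G_of_no_diag hdiag
      haveI : Fintype (G E).edgeSet := (hES ▸ hE).fintype
      have hcard2 := htree.card_edgeFinset
      have : (G E).edgeFinset.card = E.ncard := by
        rw [SimpleGraph.edgeFinset, ← Set.ncard_eq_toFinset_card', hES]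
      have hpos : 0 < Fintype.card V := Fintype.card_pos
      omega
    · simp only [SimpleGraph.IsAcyclic, not_forall, not_not] at hacyc
      obtain ⟨v, c, hcyc⟩ := hacyc
      obtain ⟨C, hC⟩ := walk_cycle_to_zmod hcyc
      rw [edgeSet_G_of_no_diag hdiag] at hC
      exact ⟨C, hC⟩

lemma unique_cycle [Fintype V] {E : Set (Sym2 V)} (hE : E.Finite) (hc : Conn E)
    (hcard : E.ncard ≤ Fintype.card V) :
    ∀ C₁ ∈ cycleEdgeSets E, ∀ C₂ ∈ cycleEdgeSets E, C₁ = C₂ := by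
  classical
  have key : ∀ C₁ ∈ cycleEdgeSets E, ∀ C₂ ∈ cycleEdgeSets E,
      ∀ e₁ ∈ C₁, e₁ ∉ C₂ → False := by
    intro C₁ h₁ C₂ h₂ e₁ he₁ hne
    have he₁E : e₁ ∈ E := cycle_subset h₁ he₁
    have h₂' : C₂ ∈ cycleEdgeSets (E \ {e₁}) := by
      rcases h₂ with ⟨v, hv, rfl⟩ | ⟨m, hm, f, hf, hfe, rfl⟩
      · exact Or.inl ⟨v, ⟨hv, fun hcon => hne (by rw [← hcon]; exact rfl)⟩, rfl⟩
      · exact Or.inr ⟨m, hm, f, hf,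
          fun k => ⟨hfe k, fun hcon => hne (by rw [← hcon]; exact ⟨k, rfl⟩)⟩, rfl⟩
    obtain ⟨e₂, he₂⟩ := cycle_nonempty h₂
    have he₂E : e₂ ∈ E := cycle_subset h₂ he₂
    have hne12 : e₂ ≠ e₁ := fun h => hne (h ▸ he₂)
    have hconn1 : Conn (E \ {e₁}) := conn_remove_cycle_edge h₁ he₁ hc
    have hconn2 : Conn ((E \ {e₁}) \ {e₂}) := conn_remove_cycle_edge h₂' he₂ hconn1
    have hb := card_le_of_conn (hE.diff.diff) hconn2
    have h2n : 2 ≤ E.ncard := by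
      have hsub : {e₁, e₂} ⊆ E := by
        intro x hx; rcases hx with rfl | rfl
        · exact he₁E
        · exact he₂E
      have := Set.ncard_le_ncard hsub hE
      rwa [Set.ncard_pair (Ne.symm hne12)] at this
    have hc1 : (E \ {e₁}).ncard = E.ncard - 1 :=
      Set.ncard_diff_singleton_of_mem he₁E
    have hc2 : ((E \ {e₁}) \ {e₂}).ncard = E.ncard - 2 := by
      rw [Set.ncard_diff_singleton_of_mem ((Set.mem_diff _).mpr ⟨he₂E, hne12⟩),
        hc1]
      omega
    omega
  intro C₁ h₁ C₂ h₂
  by_contra hne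
  rcases Set.not_subset.mp (fun hsub => hne (Set.Subset.antisymm hsub (fun e he => by
      by_contra hcon
      exact key C₂ h₂ C₁ h₁ e he hcon))) with ⟨e, heC₁, heC₂⟩
  exact key C₁ h₁ C₂ h₂ e heC₁ heC₂

section Word

lemma factorAt_two {α : Type*} (w : ℕ → α) (i : ℕ) : factorAt w i 2 = [w i, w (i + 1)] := by
  simp [factorAt, List.range_succ]

lemma hasEdge_step {α : Type*} (w : ℕ → α) (i : ℕ) : HasEdge w (w i) (w (i + 1)) :=
  Or.inl ⟨i, by simp [IsFactor, factorAt_two]⟩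

lemma mem_factorGraphEdges {α : Type*} {w : ℕ → α} {a b : α} :
    s(a, b) ∈ factorGraphEdges w ↔ HasEdge w a b := by
  constructor
  · rintro ⟨c, d, hcd, h⟩
    rw [Sym2.eq_iff] at hcd
    rcases hcd with ⟨rfl, rfl⟩ | ⟨rfl, rfl⟩
    · exact h
    · exact Or.symm h
  · exact fun h => ⟨a, b, rfl, h⟩

/-- The multiset associated to an unordered pair. -/
def pairMul {α : Type*} : Sym2 α → Multiset α :=
  Sym2.lift ⟨fun a b => {a, b}, fun a b => by
    show ({a, b} : Multiset α) = ({b, a} : Multiset α)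
    exact Multiset.pair_comm a b⟩

lemma pairMul_mk {α : Type*} (a b : α) : pairMul s(a, b) = ({a, b} : Multiset α) := rfl

lemma pairMul_injective {α : Type*} : Function.Injective (pairMul (α := α)) := by
  intro e e'
  induction e with
  | _ a b =>
  induction e' with
  | _ c d =>
  intro h
  rw [pairMul_mk, pairMul_mk, Multiset.insert_eq_cons, Multiset.insert_eq_cons,
    Multiset.cons_eq_cons] at h
  rw [Sym2.eq_iff]
  rcases h with ⟨rfl, h⟩ | ⟨hne, cs, h1, h2⟩
  · exact Or.inl ⟨rfl, Multiset.singleton_inj.mp h⟩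
  · rw [Multiset.singleton_eq_cons_iff] at h1 h2
    exact Or.inr ⟨h2.1.symm, h1.1⟩

lemma image_pairMul {α : Type*} (w : ℕ → α) :
    pairMul '' factorGraphEdges w = abelianFactors w 2 := by
  ext s
  constructor
  · rintro ⟨e, he, rfl⟩
    induction e with
    | _ a b =>
    rw [mem_factorGraphEdges] at he
    rcases he with ⟨i, hi⟩ | ⟨i, hi⟩
    all_goals simp only [List.length_cons, List.length_nil] at hi
    · exact ⟨i, by rw [← hi, pairMul_mk]; rfl⟩
    · exact ⟨i, by rw [← hi, pairMul_mk, Multiset.pair_comm]; rfl⟩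
  · rintro ⟨i, rfl⟩
    refine ⟨s(w i, w (i + 1)), mem_factorGraphEdges.mpr (hasEdge_step w i), ?_⟩
    rw [pairMul_mk, factorAt_two]
    rfl

end Word

end Stmt2Aux

/-- if `w` over an `n`-letter alphabet contains all `n` letters and has
exactly `n` Abelian factors of length 2, then its factor graph is connected and has
exactly `n` edges; hence it contains a unique cycle (possibly a loop). -/
theorem stmt2 (n : ℕ) (w : ℕ → Fin n)
    (hall : ∀ a : Fin n, ∃ i, w i = a)
    (hcomp : (abelianFactors w 2).ncard = n) :
    (∀ u v : Fin n, Relation.ReflTransGen (fun a b => HasEdge w a b) u v) ∧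
    (factorGraphEdges w).ncard = n ∧
    (∃! C, C ∈ cycleEdgeSets (factorGraphEdges w)) := by
  classical
  have hn : 0 < n := (w 0).pos
  have fwd : ∀ i t : ℕ, Relation.ReflTransGen (fun a b => HasEdge w a b) (w i) (w (i + t)) := by
    intro i t
    induction t with
    | zero => exact Relation.ReflTransGen.refl
    | succ t ih =>
      have := ih.tail (Stmt2Aux.hasEdge_step w (i + t))
      rwa [show i + t + 1 = i + (t + 1) from by ring] at this
  have hsym : Symmetric (fun a b : Fin n => HasEdge w a b) := fun a b h => Or.symm h
  have conn1 : ∀ u v : Fin n, Relation.ReflTransGen (fun a b => HasEdge w a b) u v := by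
    intro u v
    obtain ⟨i, rfl⟩ := hall u
    obtain ⟨j, rfl⟩ := hall v
    rcases le_total i j with h | h
    · have := fwd i (j - i)
      rwa [Nat.add_sub_cancel' h] at this
    · haveI : Std.Symm (fun a b : Fin n => HasEdge w a b) := ⟨hsym⟩
      refine Std.Symm.symm _ _ ?_
      have := fwd j (i - j)
      rwa [Nat.add_sub_cancel' h] at this
  have hEfin : (factorGraphEdges w).Finite := Set.toFinite _
  have hEcard : (factorGraphEdges w).ncard = n := by
    rw [← Set.ncard_image_of_injective (factorGraphEdges w) Stmt2Aux.pairMul_injective,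
      Stmt2Aux.image_pairMul w, hcomp]
  have conn0 : Stmt2Aux.Conn (factorGraphEdges w) := by
    intro u v
    have h := conn1 u v
    induction h with
    | refl => exact Relation.ReflTransGen.refl
    | @tail b c _ hbc ih =>
      rcases eq_or_ne b c with rfl | hne
      · exact ih
      · exact ih.tail ⟨hne, Stmt2Aux.mem_factorGraphEdges.mpr hbc⟩
  haveI : Nonempty (Fin n) := ⟨⟨0, hn⟩⟩
  have hcardV : Fintype.card (Fin n) = n := Fintype.card_fin n
  obtain ⟨C₀, hC₀⟩ := Stmt2Aux.exists_cycle hEfin conn0 (by rw [hcardV, hEcard])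
  refine ⟨conn1, hEcard, C₀, hC₀, fun C hC => ?_⟩
  exact Stmt2Aux.unique_cycle hEfin conn0 (by rw [hcardV, hEcard]) C hC C₀ hC₀
end

section
/- Let w be a recurrent infinite word with factor graph G, and suppose a letter a has two distinct neighbours b and c in G. Then either [bac] ∈ T(a) or |T(a)| ≥ 2. -/
lemma exists_triple_mem {α : Type*} (w : ℕ → α) (hrec : Recurrent w) (a b : α)
    (h : HasEdge w a b) : ∃ s ∈ triples w a, b ∈ s := by
  have h3 : ∀ j, factorAt w j 3 = [w j, w (j+1), w (j+2)] := by
    intro j; simp [factorAt, List.range_succ]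
  cases h with
  | inl h =>
    obtain ⟨i, hi, heq⟩ := hrec [a, b] h 1
    have h2 : factorAt w i 2 = [w i, w (i+1)] := by simp [factorAt, List.range_succ]
    rw [show ([a,b] : List α).length = 2 from rfl, h2] at heq
    injection heq with ha heq'
    injection heq' with hb _
    obtain ⟨j, rfl⟩ : ∃ j, i = j + 1 := ⟨i - 1, by omega⟩
    refine ⟨{w j, a, b}, ⟨w j, b, ⟨j, ?_⟩, rfl⟩, by simp⟩
    rw [show ([w j, a, b] : List α).length = 3 from rfl, h3, ha, hb]
  | inr h =>
    obtain ⟨i, heq⟩ := h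
    have h2 : factorAt w i 2 = [w i, w (i+1)] := by simp [factorAt, List.range_succ]
    rw [show ([b,a] : List α).length = 2 from rfl, h2] at heq
    injection heq with hb heq'
    injection heq' with ha _
    refine ⟨{b, a, w (i+2)}, ⟨b, w (i+2), ⟨i, ?_⟩, rfl⟩, by simp⟩
    rw [show ([b, a, w (i+2)] : List α).length = 3 from rfl, h3, hb, ha]

/-- if a letter `a` has two distinct neighbours `b` and `c` in the
factor graph of a recurrent word `w`, then `[bac] ∈ T(a)` or `|T(a)| ≥ 2`. -/
theorem stmt7 {α : Type*} (w : ℕ → α) (hrec : Recurrent w) (a b c : α)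
    (hbc : b ≠ c)
    (hb : b ≠ a ∧ HasEdge w a b)
    (hc : c ≠ a ∧ HasEdge w a c) :
    ({b, a, c} : Multiset α) ∈ triples w a ∨
    ∃ s ∈ triples w a, ∃ t ∈ triples w a, s ≠ t := by
  obtain ⟨sb, hsb, hbsb⟩ := exists_triple_mem w hrec a b hb.2
  obtain ⟨sc, hsc, hcsc⟩ := exists_triple_mem w hrec a c hc.2
  by_cases hst : sb = sc
  · left
    obtain ⟨x, y, hfac, rfl⟩ := hsb
    subst hst
    have hb' : b = x ∨ b = y := by
      simp only [Multiset.insert_eq_cons, Multiset.mem_cons, Multiset.mem_singleton] at hbsb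
      rcases hbsb with h | h | h
      · exact Or.inl h
      · exact absurd h hb.1
      · exact Or.inr h
    have hc' : c = x ∨ c = y := by
      simp only [Multiset.insert_eq_cons, Multiset.mem_cons, Multiset.mem_singleton] at hcsc
      rcases hcsc with h | h | h
      · exact Or.inl h
      · exact absurd h hc.1
      · exact Or.inr h
    have hkey : ({b, a, c} : Multiset α) = {x, a, y} := by
      rcases hb' with rfl | rfl <;> rcases hc' with h | h
      · exact absurd h.symm hbc
      · subst h; rfl
      · subst h
        simp only [Multiset.insert_eq_cons]
        rw [Multiset.cons_swap b a, Multiset.cons_swap c a]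
        congr 1
        exact Multiset.cons_swap b c 0
      · exact absurd h.symm hbc
    rw [hkey]
    exact ⟨x, y, hfac, rfl⟩
  · exact Or.inr ⟨sb, hsb, sc, hsc, hst⟩
end

section
/- Let n ≥ 4 and let w be a recurrent infinite word over an n-letter alphabet with exactly n Abelian factors of every length m ≥ 1. Then the unique cycle of the factor graph G of w cannot be an m-cycle with m ≥ 4. (Indeed, if it were, G would be an n-cycle and w would be a suffix of (12...n)^ω or (n...21)^ω, contradicting constant Abelian complexity n.) -/
section Aux

open SimpleGraph

/-- A connected graph on a finite vertex type has at least `card V - 1` edges. -/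
lemma conn_card_le {V : Type*} [Fintype V] (G : SimpleGraph V) (hc : G.Connected) :
    Fintype.card V ≤ G.edgeSet.ncard + 1 := by
  classical
  obtain ⟨r⟩ : Nonempty V := hc.nonempty
  have key : ∀ v : V, v ≠ r → ∃ u, G.Adj v u ∧ G.dist u r < G.dist v r := by
    intro v hv
    have hd : 0 < G.dist v r := hc.pos_dist_of_ne hv
    obtain ⟨p, hp⟩ := (hc.preconnected v r).exists_walk_length_eq_dist
    cases p with
    | nil => simp at hd
    | cons h q =>
      refine ⟨_, h, ?_⟩
      have := SimpleGraph.dist_le q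
      simp [SimpleGraph.Walk.length_cons] at hp
      omega
  choose nxt hnxt1 hnxt2 using key
  set F : V → Sym2 V := fun v => if h : v ≠ r then s(v, nxt v h) else s(r, r) with hF
  have hmaps : Set.MapsTo F ({r}ᶜ : Set V) G.edgeSet := by
    intro v hv
    simp only [Set.mem_compl_iff, Set.mem_singleton_iff] at hv
    simp only [hF, dif_pos hv, SimpleGraph.mem_edgeSet]
    exact hnxt1 v hv
  have hinj : Set.InjOn F ({r}ᶜ : Set V) := by
    intro v hv u hu h
    simp only [Set.mem_compl_iff, Set.mem_singleton_iff] at hv hu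
    simp only [hF, dif_pos hv, dif_pos hu, Sym2.eq_iff] at h
    rcases h with ⟨h1, h2⟩ | ⟨h1, h2⟩
    · exact h1
    · exfalso
      have := hnxt2 v hv; have := hnxt2 u hu
      rw [← h1] at *; rw [← h2] at *; omega
  have h1 : ({r}ᶜ : Set V).ncard ≤ G.edgeSet.ncard := by
    have := Set.ncard_image_of_injOn hinj
    rw [← this]
    exact Set.ncard_le_ncard (Set.image_subset_iff.2 hmaps) (Set.toFinite _)
  have h2 : ({r} : Set V).ncard + ({r}ᶜ : Set V).ncard = Nat.card V :=
    Set.ncard_add_ncard_compl _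
  simp only [Set.ncard_singleton] at h2
  rw [Nat.card_eq_fintype_card] at h2
  omega

/-- Deleting an edge whose endpoints remain reachable preserves connectivity. -/
lemma conn_delete {V : Type*} (G : SimpleGraph V) (hc : G.Connected) (a b : V)
    (h : (G.deleteEdges {s(a, b)}).Reachable a b) :
    (G.deleteEdges {s(a, b)}).Connected := by
  rw [SimpleGraph.connected_iff]
  refine ⟨?_, hc.nonempty⟩
  intro u v
  obtain ⟨p⟩ := hc.preconnected u v
  induction p with
  | nil => exact SimpleGraph.Reachable.refl _
  | @cons x y z hadj q ih =>
    refine SimpleGraph.Reachable.trans ?_ ih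
    by_cases he : s(x, y) = s(a, b)
    · rw [Sym2.eq_iff] at he
      rcases he with ⟨rfl, rfl⟩ | ⟨rfl, rfl⟩
      · exact h
      · exact h.symm
    · exact SimpleGraph.Adj.reachable
        (by rw [SimpleGraph.deleteEdges_adj]; exact ⟨hadj, by simpa using he⟩)

lemma cast_inj_aux {m : ℕ} (hm : 0 < m) {j1 j2 : ℕ} (h1 : j1 < m) (h2 : j2 < m)
    (h : (j1 : ZMod m) = (j2 : ZMod m)) : j1 = j2 := by
  haveI : NeZero m := ⟨by omega⟩
  have := congrArg ZMod.val h
  rwa [ZMod.val_cast_of_lt h1, ZMod.val_cast_of_lt h2] at this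

/-- In a graph containing an `m`-cycle (`m ≥ 4`), the endpoints of a cycle edge
remain reachable after deleting that edge. -/
lemma cycle_detour {V : Type*} (G : SimpleGraph V) {m : ℕ} (hm : 4 ≤ m)
    (f : ZMod m → V) (hinj : Function.Injective f)
    (hadj : ∀ k, G.Adj (f k) (f (k + 1))) :
    (G.deleteEdges {s(f 0, f 1)}).Reachable (f 0) (f 1) := by
  have hmain : ∀ t : ℕ, t ≤ m - 1 →
      (G.deleteEdges {s(f 0, f 1)}).Reachable (f 1) (f (1 + (t : ZMod m))) := by
    intro t ht
    induction t with
    | zero => simp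
    | succ t ih =>
      refine SimpleGraph.Reachable.trans (ih (by omega)) (SimpleGraph.Adj.reachable ?_)
      rw [SimpleGraph.deleteEdges_adj]
      rw [show ((t + 1 : ℕ) : ZMod m) = (t : ZMod m) + 1 by push_cast; ring,
        show (1 : ZMod m) + ((t : ZMod m) + 1) = 1 + (t : ZMod m) + 1 by ring]
      have e1 : (1 : ZMod m) + (t : ZMod m) = ((1 + t : ℕ) : ZMod m) := by push_cast; ring
      have e2 : (1 : ZMod m) + (t : ZMod m) + 1 = ((2 + t : ℕ) : ZMod m) := by push_cast; ring
      constructor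
      · exact hadj (1 + (t : ZMod m))
      · simp only [Set.mem_singleton_iff, Sym2.eq_iff]
        push_neg
        constructor
        · intro hq
          exfalso
          have h0 : ((1 + t : ℕ) : ZMod m) = ((0 : ℕ) : ZMod m) := by
            rw [← e1]; rw [hinj hq]; simp
          have := cast_inj_aux (by omega) (by omega) (by omega) h0
          omega
        · intro hq hq'
          exfalso
          have h0 : ((1 + t : ℕ) : ZMod m) = ((1 : ℕ) : ZMod m) := by
            rw [← e1]; rw [hinj hq]; simp
          have ht0 : 1 + t = 1 := cast_inj_aux (by omega) (by omega) (by omega) h0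
          have h2 : ((2 + t : ℕ) : ZMod m) = ((0 : ℕ) : ZMod m) := by
            rw [← e2]; rw [hinj hq']; simp
          have := cast_inj_aux (m := m) (by omega) (j1 := 2 + t) (by omega) (j2 := 0) (by omega) h2
          omega
  have := hmain (m - 1) le_rfl
  have hcast : (1 : ZMod m) + ((m - 1 : ℕ) : ZMod m) = 0 := by
    have h : (((m - 1 : ℕ) + 1 : ℕ) : ZMod m) = 0 := by
      rw [show (m - 1) + 1 = m by omega]; exact ZMod.natCast_self m
    push_cast at h
    rw [← h]; ring
  rw [hcast] at this
  exact this.symm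

/-- A connected graph containing an `m`-cycle (`m ≥ 4`) has at least `card V` edges. -/
lemma keyfact {V : Type*} [Fintype V] (G : SimpleGraph V) (hc : G.Connected) {m : ℕ}
    (hm : 4 ≤ m) (f : ZMod m → V) (hinj : Function.Injective f)
    (hadj : ∀ k, G.Adj (f k) (f (k + 1))) :
    Fintype.card V ≤ G.edgeSet.ncard := by
  have hdel := conn_delete G hc (f 0) (f 1) (cycle_detour G hm f hinj hadj)
  have h1 : Fintype.card V ≤ (G.deleteEdges {s(f 0, f 1)}).edgeSet.ncard + 1 :=
    conn_card_le _ hdel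
  rw [SimpleGraph.edgeSet_deleteEdges] at h1
  have hmem : s(f 0, f 1) ∈ G.edgeSet := by
    have := hadj 0; rw [zero_add] at this; exact this
  have h2 := Set.ncard_diff_singleton_add_one hmem (Set.toFinite _)
  omega

end Aux
section WordAux

variable {α : Type*}

lemma factorAt_one (w : ℕ → α) (i : ℕ) : factorAt w i 1 = [w i] := rfl

lemma factorAt_two (w : ℕ → α) (i : ℕ) : factorAt w i 2 = [w i, w (i + 1)] := rfl

lemma factorAt_three (w : ℕ → α) (i : ℕ) :
    factorAt w i 3 = [w i, w (i + 1), w (i + 2)] := rfl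

lemma isFactor_pair (w : ℕ → α) (i : ℕ) : IsFactor w [w i, w (i + 1)] := ⟨i, rfl⟩

lemma isFactor_triple (w : ℕ → α) (i : ℕ) :
    IsFactor w [w i, w (i + 1), w (i + 2)] := ⟨i, rfl⟩

lemma pair_occ {w : ℕ → α} {a b : α} (h : IsFactor w [a, b]) :
    ∃ i, w i = a ∧ w (i + 1) = b := by
  obtain ⟨i, hi⟩ := h
  rw [show ([a, b] : List α).length = 2 from rfl, factorAt_two] at hi
  simp only [List.cons.injEq, List.nil_eq] at hi
  exact ⟨i, hi.1.symm, hi.2.1.symm⟩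

lemma triple_occ {w : ℕ → α} {a b c : α} (h : IsFactor w [a, b, c]) :
    ∃ i, w i = a ∧ w (i + 1) = b ∧ w (i + 2) = c := by
  obtain ⟨i, hi⟩ := h
  rw [show ([a, b, c] : List α).length = 3 from rfl, factorAt_three] at hi
  simp only [List.cons.injEq, List.nil_eq] at hi
  exact ⟨i, hi.1.symm, hi.2.1.symm, hi.2.2.1.symm⟩

lemma hasEdge_of_occ {w : ℕ → α} {i : ℕ} {p q : α} (hp : w i = p) (hq : w (i + 1) = q) :
    HasEdge w p q := by
  subst hp; subst hq; exact Or.inl (isFactor_pair w i)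

lemma hasEdge_consec (w : ℕ → α) (j : ℕ) : HasEdge w (w j) (w (j + 1)) :=
  Or.inl (isFactor_pair w j)

lemma hasEdge_symm {w : ℕ → α} {a b : α} (h : HasEdge w a b) : HasEdge w b a := h.symm

lemma pairMS {a b c d : α} (h : ({a, b} : Multiset α) = {c, d}) :
    (a = c ∧ b = d) ∨ (a = d ∧ b = c) := by
  have h' : a ::ₘ ({b} : Multiset α) = c ::ₘ {d} := h
  rcases Multiset.cons_eq_cons.1 h' with ⟨h1, h2⟩ | ⟨h1, cs, h2, h3⟩
  · exact Or.inl ⟨h1, Multiset.singleton_inj.1 h2⟩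
  · have hcs : cs = 0 := by
      have := congrArg Multiset.card h2
      simp at this
      exact this
    subst hcs
    simp only [Multiset.cons_zero, Multiset.singleton_inj] at h2 h3
    exact Or.inr ⟨h3.symm, h2⟩

lemma tripleMS_cancel {a x y x' y' : α} (h : ({x, a, y} : Multiset α) = {x', a, y'}) :
    ({x, y} : Multiset α) = {x', y'} := by
  have e1 : ({x, a, y} : Multiset α) = a ::ₘ {x, y} := by
    show x ::ₘ a ::ₘ {y} = a ::ₘ x ::ₘ {y}
    rw [Multiset.cons_swap]
  have e2 : ({x', a, y'} : Multiset α) = a ::ₘ {x', y'} := by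
    show x' ::ₘ a ::ₘ {y'} = a ::ₘ x' ::ₘ {y'}
    rw [Multiset.cons_swap]
  rw [e1, e2] at h
  exact (Multiset.cons_inj_right _).1 h

lemma mem_tripleMS {a x y z : α} (h : z ∈ ({x, a, y} : Multiset α)) :
    z = x ∨ z = a ∨ z = y := by
  simpa using h

end WordAux

/-- for `n ≥ 4`, a recurrent word over an `n`-letter alphabet with
exactly `n` Abelian factors of every length has no `m`-cycle with `m ≥ 4` in its
factor graph. -/
theorem stmt8 (n : ℕ) (hn : 4 ≤ n) (w : ℕ → Fin n) (hrec : Recurrent w)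
    (hcomp : ∀ m, 1 ≤ m → (abelianFactors w m).ncard = n) :
    ¬ ∃ m : ℕ, 4 ≤ m ∧ ∃ f : ZMod m → Fin n, Function.Injective f ∧
        ∀ k, HasEdge w (f k) (f (k + 1)) := by
  rintro ⟨m, hm, f, hinj, hadj⟩
  haveI : NeZero m := ⟨by omega⟩
  -- small facts in `ZMod m`
  have hsmall : ∀ c : ℕ, 0 < c → c < m → ((c : ℕ) : ZMod m) ≠ 0 := by
    intro c hc hcm h
    rw [ZMod.natCast_eq_zero_iff] at h
    have := Nat.le_of_dvd hc h
    omega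
  have hone : (1 : ZMod m) ≠ 0 := by
    intro h; exact hsmall 1 (by omega) (by omega) (by exact_mod_cast h)
  have htwo : (2 : ZMod m) ≠ 0 := by
    intro h; exact hsmall 2 (by omega) (by omega) (by exact_mod_cast h)
  have hthree : (3 : ZMod m) ≠ 0 := by
    intro h; exact hsmall 3 (by omega) (by omega) (by exact_mod_cast h)
  have hk_ne : ∀ k : ZMod m, f k ≠ f (k + 1) := by
    intro k h
    have h2 := hinj h
    exact hone (by linear_combination -h2)
  have hk2_ne : ∀ k : ZMod m, f (k - 1) ≠ f (k + 1) := by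
    intro k h
    have h2 := hinj h
    exact htwo (by linear_combination -h2)
  -- every letter occurs
  have hsurj : Function.Surjective w := by
    have himg : abelianFactors w 1 = (fun a => ({a} : Multiset (Fin n))) '' Set.range w := by
      ext s
      constructor
      · rintro ⟨i, rfl⟩
        exact ⟨w i, ⟨i, rfl⟩, rfl⟩
      · rintro ⟨a, ⟨i, rfl⟩, rfl⟩
        exact ⟨i, rfl⟩
    have hinj1 : Function.Injective (fun a : Fin n => ({a} : Multiset (Fin n))) :=
      fun a b h => by simpa using h
    have hcard := hcomp 1 le_rfl
    rw [himg, Set.ncard_image_of_injective _ hinj1] at hcard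
    have hr : Set.range w = Set.univ := by
      apply Set.eq_of_subset_of_ncard_le (Set.subset_univ _)
      rw [hcard, Set.ncard_univ, Nat.card_eq_fintype_card, Fintype.card_fin]
    exact Set.range_eq_univ.mp hr
  -- the edge set has `n` elements
  have hpf_comm : ∀ a b : Fin n, ({a, b} : Multiset (Fin n)) = {b, a} := by
    intro a b
    show a ::ₘ b ::ₘ 0 = b ::ₘ a ::ₘ 0
    rw [Multiset.cons_swap]
  set pf : Sym2 (Fin n) → Multiset (Fin n) :=
    Sym2.lift ⟨fun a b => {a, b}, hpf_comm⟩ with hpf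
  have hpf_mk : ∀ a b : Fin n, pf s(a, b) = {a, b} := fun a b => rfl
  have hpfinj : Function.Injective pf := by
    intro e1 e2
    induction e1 using Sym2.ind with | _ a b =>
    induction e2 using Sym2.ind with | _ c d =>
    intro h
    rw [hpf_mk, hpf_mk] at h
    rcases pairMS h with ⟨rfl, rfl⟩ | ⟨rfl, rfl⟩
    · rfl
    · exact Sym2.eq_swap
  have hE2 : abelianFactors w 2 = pf '' factorGraphEdges w := by
    ext s
    constructor
    · rintro ⟨i, rfl⟩
      exact ⟨s(w i, w (i + 1)), ⟨w i, w (i + 1), rfl, Or.inl (isFactor_pair w i)⟩, rfl⟩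
    · rintro ⟨e, ⟨a, b, rfl, hedge⟩, rfl⟩
      rcases hedge with hf | hf
      · obtain ⟨i, hi1, hi2⟩ := pair_occ hf
        exact ⟨i, by rw [hpf_mk, ← hi1, ← hi2]; rfl⟩
      · obtain ⟨i, hi1, hi2⟩ := pair_occ hf
        refine ⟨i, ?_⟩
        rw [hpf_mk, hpf_comm, ← hi1, ← hi2]; rfl
  have hEfin : (factorGraphEdges w).Finite := Set.toFinite _
  have hEcard : (factorGraphEdges w).ncard = n := by
    have h := hcomp 2 (by omega)
    rwa [hE2, Set.ncard_image_of_injective _ hpfinj] at h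
  -- the factor graph as a simple graph
  set G : SimpleGraph (Fin n) := SimpleGraph.fromRel (HasEdge w) with hG
  have hGadj : ∀ a b : Fin n, G.Adj a b ↔ a ≠ b ∧ HasEdge w a b := by
    intro a b
    rw [hG, SimpleGraph.fromRel_adj]
    constructor
    · rintro ⟨h1, h2 | h2⟩
      exacts [⟨h1, h2⟩, ⟨h1, h2.symm⟩]
    · rintro ⟨h1, h2⟩; exact ⟨h1, Or.inl h2⟩
  have hGsub : G.edgeSet ⊆ factorGraphEdges w := by
    intro e he
    induction e using Sym2.ind with | _ a b =>
    rw [SimpleGraph.mem_edgeSet, hGadj] at he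
    exact ⟨a, b, rfl, he.2⟩
  have hGcard : G.edgeSet.ncard ≤ n :=
    le_trans (Set.ncard_le_ncard hGsub hEfin) (le_of_eq hEcard)
  have hreach : ∀ i j : ℕ, i ≤ j → G.Reachable (w i) (w j) := by
    intro i j hij
    induction j, hij using Nat.le_induction with
    | base => exact SimpleGraph.Reachable.refl _
    | succ j hij ih =>
      refine ih.trans ?_
      by_cases h : w j = w (j + 1)
      · rw [h]
      · exact SimpleGraph.Adj.reachable ((hGadj _ _).2 ⟨h, hasEdge_consec w j⟩)
  have hconn : G.Connected := by
    rw [SimpleGraph.connected_iff]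
    refine ⟨fun a b => ?_, ⟨⟨0, by omega⟩⟩⟩
    obtain ⟨i, rfl⟩ := hsurj a
    obtain ⟨j, rfl⟩ := hsurj b
    rcases le_total i j with h | h
    · exact hreach i j h
    · exact (hreach j i h).symm
  have hGadjk : ∀ k : ZMod m, G.Adj (f k) (f (k + 1)) :=
    fun k => (hGadj _ _).2 ⟨hk_ne k, hadj k⟩
  have hkey : n ≤ G.edgeSet.ncard := by
    have h := keyfact G hconn hm f hinj hGadjk
    rwa [Fintype.card_fin] at h
  -- no loops
  have hnoloop : ∀ v : Fin n, ¬ HasEdge w v v := by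
    intro v hv
    have h1 : s(v, v) ∈ factorGraphEdges w := ⟨v, v, rfl, hv⟩
    have h2 : s(v, v) ∉ G.edgeSet := by
      rw [SimpleGraph.mem_edgeSet]
      exact fun h => G.irrefl h
    have h3 : insert (s(v, v)) G.edgeSet ⊆ factorGraphEdges w :=
      Set.insert_subset h1 hGsub
    have h4 := Set.ncard_insert_of_notMem h2 (Set.toFinite _)
    have h5 := Set.ncard_le_ncard h3 hEfin
    omega
  have hwne : ∀ j : ℕ, w j ≠ w (j + 1) := by
    intro j h
    have he := hasEdge_consec w j
    rw [← h] at he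
    exact hnoloop _ he
  -- no triangles
  have hdel : ∀ x y z : Fin n, G.Adj x y → G.Adj y z → G.Adj x z →
      (∀ k : ZMod m, s(x, z) ≠ s(f k, f (k + 1))) → False := by
    intro x y z hxy hyz hxz hout
    have hRxy : (G.deleteEdges {s(x, z)}).Adj x y := by
      rw [SimpleGraph.deleteEdges_adj]
      refine ⟨hxy, ?_⟩
      simp only [Set.mem_singleton_iff, Sym2.eq_iff, not_or]
      exact ⟨fun hc => hyz.ne hc.2, fun hc => hxz.ne hc.1⟩
    have hRyz : (G.deleteEdges {s(x, z)}).Adj y z := by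
      rw [SimpleGraph.deleteEdges_adj]
      refine ⟨hyz, ?_⟩
      simp only [Set.mem_singleton_iff, Sym2.eq_iff, not_or]
      exact ⟨fun hc => hxy.ne hc.1.symm, fun hc => hyz.ne hc.1⟩
    have hR : (G.deleteEdges {s(x, z)}).Reachable x z := hRxy.reachable.trans hRyz.reachable
    have hconn' := conn_delete G hconn x z hR
    have hadj' : ∀ k : ZMod m, (G.deleteEdges {s(x, z)}).Adj (f k) (f (k + 1)) := by
      intro k
      rw [SimpleGraph.deleteEdges_adj]
      exact ⟨hGadjk k, by simp only [Set.mem_singleton_iff]; exact fun h => hout k h.symm⟩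
    have h1 := keyfact _ hconn' hm f hinj hadj'
    rw [Fintype.card_fin, SimpleGraph.edgeSet_deleteEdges] at h1
    have hmem : s(x, z) ∈ G.edgeSet := hxz
    have h2 := Set.ncard_diff_singleton_add_one hmem (Set.toFinite _)
    omega
  have hnotri : ∀ a b c : Fin n, a ≠ b → b ≠ c → a ≠ c →
      HasEdge w a b → HasEdge w b c → HasEdge w a c → False := by
    intro a b c hab hbc hac eab ebc eac
    have Aab : G.Adj a b := (hGadj _ _).2 ⟨hab, eab⟩
    have Abc : G.Adj b c := (hGadj _ _).2 ⟨hbc, ebc⟩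
    have Aac : G.Adj a c := (hGadj _ _).2 ⟨hac, eac⟩
    by_cases h1 : ∀ k : ZMod m, s(a, b) ≠ s(f k, f (k + 1))
    · exact hdel a c b Aac Abc.symm Aab h1
    by_cases h2 : ∀ k : ZMod m, s(b, c) ≠ s(f k, f (k + 1))
    · exact hdel b a c Aab.symm Aac Abc h2
    by_cases h3 : ∀ k : ZMod m, s(a, c) ≠ s(f k, f (k + 1))
    · exact hdel a b c Aab Abc Aac h3
    push_neg at h1 h2 h3
    obtain ⟨k1, hk1⟩ := h1
    obtain ⟨k2, hk2⟩ := h2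
    obtain ⟨k3, hk3⟩ := h3
    rw [Sym2.eq_iff] at hk1 hk2 hk3
    obtain ⟨α, β, ha, hb, hd1⟩ : ∃ α β : ZMod m, a = f α ∧ b = f β ∧ (β = α + 1 ∨ α = β + 1) := by
      rcases hk1 with ⟨h, h'⟩ | ⟨h, h'⟩
      exacts [⟨k1, k1 + 1, h, h', Or.inl rfl⟩, ⟨k1 + 1, k1, h, h', Or.inr rfl⟩]
    obtain ⟨β', γ, hb', hc', hd2⟩ : ∃ β' γ : ZMod m, b = f β' ∧ c = f γ ∧ (γ = β' + 1 ∨ β' = γ + 1) := by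
      rcases hk2 with ⟨h, h'⟩ | ⟨h, h'⟩
      exacts [⟨k2, k2 + 1, h, h', Or.inl rfl⟩, ⟨k2 + 1, k2, h, h', Or.inr rfl⟩]
    obtain ⟨α', γ', ha', hc'', hd3⟩ : ∃ α' γ' : ZMod m, a = f α' ∧ c = f γ' ∧ (γ' = α' + 1 ∨ α' = γ' + 1) := by
      rcases hk3 with ⟨h, h'⟩ | ⟨h, h'⟩
      exacts [⟨k3, k3 + 1, h, h', Or.inl rfl⟩, ⟨k3 + 1, k3, h, h', Or.inr rfl⟩]
    have eβ : β = β' := hinj (by rw [← hb, ← hb'])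
    have eα : α = α' := hinj (by rw [← ha, ← ha'])
    have eγ : γ = γ' := hinj (by rw [← hc', ← hc''])
    subst eβ; subst eα; subst eγ
    have e1 : β - α = 1 ∨ β - α = -1 := by
      rcases hd1 with h | h
      · left; rw [h]; ring
      · right; rw [h]; ring
    have e2 : γ - β = 1 ∨ γ - β = -1 := by
      rcases hd2 with h | h
      · left; rw [h]; ring
      · right; rw [h]; ring
    have e3 : γ - α = 1 ∨ γ - α = -1 := by
      rcases hd3 with h | h
      · left; rw [h]; ring
      · right; rw [h]; ring
    have esum : γ - α = (β - α) + (γ - β) := by ring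
    rcases e1 with h1' | h1' <;> rcases e2 with h2' | h2' <;> rcases e3 with h3' | h3' <;>
      rw [h3', h1', h2'] at esum <;>
      first
        | exact hone (by linear_combination esum)
        | exact hone (by linear_combination -esum)
        | exact hthree (by linear_combination esum)
        | exact hthree (by linear_combination -esum)
  -- triples
  have htrip_mem : ∀ j : ℕ,
      ({w j, w (j + 1), w (j + 2)} : Multiset (Fin n)) ∈ triples w (w (j + 1)) :=
    fun j => ⟨w j, w (j + 2), isFactor_triple w j, rfl⟩
  have htrip_sub : ∀ a : Fin n, triples w a ⊆ abelianFactors w 3 := by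
    rintro a s ⟨x, y, hf, rfl⟩
    obtain ⟨i, h1, h2, h3⟩ := triple_occ hf
    exact ⟨i, by rw [← h1, ← h2, ← h3]; rfl⟩
  have hocc : ∀ a : Fin n, ∃ i, 1 ≤ i ∧ w i = a := by
    intro a
    obtain ⟨i0, rfl⟩ := hsurj a
    obtain ⟨i, hi1, hi2⟩ := hrec [w i0] ⟨i0, rfl⟩ 1
    rw [show ([w i0] : List (Fin n)).length = 1 from rfl, factorAt_one] at hi2
    injection hi2 with h _
    exact ⟨i, hi1, h.symm⟩
  choose it hit1 hit2 using hocc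
  have hTdef : ∀ a : Fin n,
      ({w (it a - 1), a, w (it a + 1)} : Multiset (Fin n)) =
      {w (it a - 1), a, w (it a + 1)} := fun _ => rfl
  set T : Fin n → Multiset (Fin n) := fun a => {w (it a - 1), a, w (it a + 1)} with hT
  have hTmem : ∀ a : Fin n, T a ∈ triples w a := by
    intro a
    have h1 : it a - 1 + 1 = it a := by have := hit1 a; omega
    have h2 : it a - 1 + 2 = it a + 1 := by have := hit1 a; omega
    have h := htrip_mem (it a - 1)
    rw [h1, h2, hit2 a] at h
    exact h
  -- disjointness of triples of distinct letters
  have hdisj : ∀ a b : Fin n, a ≠ b → ∀ s, s ∈ triples w a → s ∈ triples w b → False := by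
    rintro a b hab s ⟨x, y, hfa, rfl⟩ ⟨x', y', hfb, hs'⟩
    obtain ⟨i, hi1, hi2, hi3⟩ := triple_occ hfa
    obtain ⟨i', hi1', hi2', hi3'⟩ := triple_occ hfb
    have exa : HasEdge w x a := hasEdge_of_occ hi1 hi2
    have eay : HasEdge w a y := hasEdge_of_occ hi2 hi3
    have exb : HasEdge w x' b := hasEdge_of_occ hi1' hi2'
    have eby : HasEdge w b y' := hasEdge_of_occ hi2' hi3'
    have hxa : x ≠ a := fun h => hnoloop a (h ▸ exa)
    have hya : y ≠ a := fun h => hnoloop a (by rw [h] at eay; exact eay)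
    have hxb : x' ≠ b := fun h => hnoloop b (h ▸ exb)
    have hyb : y' ≠ b := fun h => hnoloop b (by rw [h] at eby; exact eby)
    have hbmem : b ∈ ({x, a, y} : Multiset (Fin n)) := by rw [hs']; simp
    rcases mem_tripleMS hbmem with hbx | hba' | hby
    · -- b = x
      rw [← hbx] at hs'
      have hpair : ({a, y} : Multiset (Fin n)) = {x', y'} := by
        have e1 : ({b, a, y} : Multiset (Fin n)) = b ::ₘ {a, y} := rfl
        have e2 : ({x', b, y'} : Multiset (Fin n)) = b ::ₘ {x', y'} := by
          show x' ::ₘ b ::ₘ {y'} = b ::ₘ x' ::ₘ {y'}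
          rw [Multiset.cons_swap]
        rw [e1, e2] at hs'
        exact (Multiset.cons_inj_right _).1 hs'
      rcases pairMS hpair with ⟨h1, h2⟩ | ⟨h1, h2⟩
      · refine hnotri a b y hab ?_ (Ne.symm hya) ?_ ?_ eay
        · rw [h2]; exact Ne.symm hyb
        · rw [h1]; exact exb
        · rw [h2]; exact eby
      · refine hnotri a b y hab ?_ (Ne.symm hya) ?_ ?_ eay
        · rw [h2]; exact Ne.symm hxb
        · rw [h1]; exact hasEdge_symm eby
        · rw [h2]; exact hasEdge_symm exb
    · exact hab hba'.symm
    · -- b = y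
      rw [← hby] at hs'
      have hpair : ({x, a} : Multiset (Fin n)) = {x', y'} := by
        have e1 : ({x, a, b} : Multiset (Fin n)) = b ::ₘ {x, a} := by
          show x ::ₘ a ::ₘ b ::ₘ 0 = b ::ₘ x ::ₘ a ::ₘ 0
          rw [Multiset.cons_swap a b, Multiset.cons_swap x b]
        have e2 : ({x', b, y'} : Multiset (Fin n)) = b ::ₘ {x', y'} := by
          show x' ::ₘ b ::ₘ {y'} = b ::ₘ x' ::ₘ {y'}
          rw [Multiset.cons_swap]
        rw [e1, e2] at hs'
        exact (Multiset.cons_inj_right _).1 hs'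
      rcases pairMS hpair with ⟨h1, h2⟩ | ⟨h1, h2⟩
      · refine hnotri x a b hxa hab ?_ exa ?_ ?_
        · rw [h1]; exact hxb
        · rw [hby]; exact eay
        · rw [h1]; exact exb
      · refine hnotri x a b hxa hab ?_ exa ?_ ?_
        · rw [h1]; exact hyb
        · rw [hby]; exact eay
        · rw [h1]; exact hasEdge_symm eby
  have hA3fin : (abelianFactors w 3).Finite := by
    rw [← Set.not_infinite]
    intro h
    have h0 := h.ncard
    rw [hcomp 3 (by omega)] at h0
    omega
  have hTinj : Function.Injective T := by
    intro a b h
    by_contra hab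
    exact hdisj a b hab (T a) (hTmem a) (h ▸ hTmem b)
  have hTrange : Set.range T = abelianFactors w 3 := by
    apply Set.eq_of_subset_of_ncard_le
    · rintro s ⟨a, rfl⟩; exact htrip_sub a (hTmem a)
    · rw [hcomp 3 (by omega), ← Set.image_univ, Set.ncard_image_of_injective _ hTinj,
        Set.ncard_univ, Nat.card_eq_fintype_card, Fintype.card_fin]
    · exact hA3fin
  have huniq : ∀ a : Fin n, ∀ s, s ∈ triples w a → s = T a := by
    intro a s hs
    have hmem : s ∈ Set.range T := hTrange ▸ htrip_sub a hs
    obtain ⟨b, rfl⟩ := hmem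
    rcases eq_or_ne b a with rfl | hba
    · rfl
    · exact (hdisj b a hba (T b) (hTmem b) hs).elim
  -- neighbours of a letter lie in its unique triple
  have hnbr : ∀ a z : Fin n, HasEdge w a z → z = w (it a - 1) ∨ z = w (it a + 1) := by
    intro a z hz
    have hza : z ≠ a := fun h => hnoloop a (by rw [h] at hz; exact hz)
    have key : ∃ j : ℕ, w (j + 1) = a ∧ (z = w j ∨ z = w (j + 2)) := by
      rcases hz with hf | hf
      · obtain ⟨i, hi1, hi2⟩ := hrec [a, z] hf 1
        rw [show ([a, z] : List (Fin n)).length = 2 from rfl, factorAt_two] at hi2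
        simp only [List.cons.injEq, and_true] at hi2
        obtain ⟨ha, hz'⟩ := hi2
        refine ⟨i - 1, ?_, Or.inr ?_⟩
        · rw [show i - 1 + 1 = i by omega]; exact ha.symm
        · rw [show i - 1 + 2 = i + 1 by omega]; exact hz'
      · obtain ⟨i, hi⟩ := hf
        rw [show ([z, a] : List (Fin n)).length = 2 from rfl, factorAt_two] at hi
        simp only [List.cons.injEq, and_true] at hi
        obtain ⟨hz', ha⟩ := hi
        exact ⟨i, ha.symm, Or.inl hz'⟩
    obtain ⟨j, hj1, hj2⟩ := key
    have hmem := htrip_mem j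
    rw [hj1] at hmem
    have heqT := huniq a _ hmem
    have hzmem : z ∈ T a := by
      rw [← heqT]
      rcases hj2 with rfl | rfl <;> simp
    have hzmem' : z ∈ ({w (it a - 1), a, w (it a + 1)} : Multiset (Fin n)) := hzmem
    rcases mem_tripleMS hzmem' with h | h | h
    · exact Or.inl h
    · exact absurd h hza
    · exact Or.inr h
  -- neighbours of cycle vertices
  have hnbrf : ∀ (k : ZMod m) (z : Fin n),
      HasEdge w (f k) z → z = f (k - 1) ∨ z = f (k + 1) := by
    intro k z hz
    have hs1 : HasEdge w (f k) (f (k - 1)) := by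
      have h := hadj (k - 1)
      rw [show k - 1 + 1 = k by ring] at h
      exact hasEdge_symm h
    have h1 := hnbr _ _ hs1
    have h2 := hnbr _ _ (hadj k)
    have h3 := hnbr _ _ hz
    have hne := hk2_ne k
    rcases h1 with h1 | h1 <;> rcases h2 with h2 | h2 <;> rcases h3 with h3 | h3 <;>
      first
        | exact absurd (h1.trans h2.symm) hne
        | exact Or.inl (h3.trans h1.symm)
        | exact Or.inr (h3.trans h2.symm)
  -- every letter lies on the cycle
  have hall : ∀ z : Fin n, ∃ k : ZMod m, z = f k := by
    intro z
    by_contra hz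
    push_neg at hz
    have hwalkind : ∀ (u v : Fin n) (p : G.Walk u v), (∃ k : ZMod m, v = f k) →
        (∀ k, u ≠ f k) → False := by
      intro u v p
      induction p with
      | nil =>
        rintro ⟨k, rfl⟩ h
        exact h k rfl
      | @cons x y z' hadjxy q ih =>
        intro hv hx
        by_cases hy : ∃ k : ZMod m, y = f k
        · obtain ⟨k, rfl⟩ := hy
          have he : HasEdge w (f k) x := hasEdge_symm ((hGadj _ _).1 hadjxy).2
          rcases hnbrf k x he with h | h
          · exact hx _ h
          · exact hx _ h
        · push_neg at hy
          exact ih hv hy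
    obtain ⟨p⟩ := hconn.preconnected z (f 0)
    exact hwalkind z (f 0) p ⟨0, rfl⟩ hz
  have hfsurj : Function.Surjective f := fun z => (hall z).imp fun k hk => hk.symm
  have hmn : m = n := by
    have h := Fintype.card_of_bijective ⟨hinj, hfsurj⟩
    rwa [ZMod.card, Fintype.card_fin] at h
  -- the two outer letters of each triple are distinct
  have houter : ∀ a : Fin n, w (it a - 1) ≠ w (it a + 1) := by
    intro a
    obtain ⟨k, rfl⟩ := hall a
    have hs1 : HasEdge w (f k) (f (k - 1)) := by
      have h := hadj (k - 1)
      rw [show k - 1 + 1 = k by ring] at h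
      exact hasEdge_symm h
    have h1 := hnbr _ _ hs1
    have h2 := hnbr _ _ (hadj k)
    intro heq
    rcases h1 with h1 | h1 <;> rcases h2 with h2 | h2 <;>
      first
        | exact hk2_ne k (h1.trans h2.symm)
        | exact hk2_ne k (h1.trans (heq.trans h2.symm))
        | exact hk2_ne k (h1.trans (heq.symm.trans h2.symm))
  -- no backtracking
  have hnb : ∀ j : ℕ, w (j + 2) ≠ w j := by
    intro j heq
    have hmem := htrip_mem j
    have huq0 : ({w j, w (j + 1), w (j + 2)} : Multiset (Fin n)) =
        {w (it (w (j + 1)) - 1), w (j + 1), w (it (w (j + 1)) + 1)} := huniq _ _ hmem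
    rw [heq] at huq0
    have hpair : ({w j, w j} : Multiset (Fin n)) =
        {w (it (w (j + 1)) - 1), w (it (w (j + 1)) + 1)} := by
      have e1 : ({w j, w (j + 1), w j} : Multiset (Fin n)) = w (j + 1) ::ₘ {w j, w j} := by
        show (w j) ::ₘ (w (j + 1)) ::ₘ {w j} = (w (j + 1)) ::ₘ (w j) ::ₘ {w j}
        rw [Multiset.cons_swap]
      have e2 : ({w (it (w (j + 1)) - 1), w (j + 1), w (it (w (j + 1)) + 1)} : Multiset (Fin n)) =
          w (j + 1) ::ₘ {w (it (w (j + 1)) - 1), w (it (w (j + 1)) + 1)} := by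
        show _ ::ₘ (w (j + 1)) ::ₘ _ = (w (j + 1)) ::ₘ _ ::ₘ _
        rw [Multiset.cons_swap]
      rw [e1, e2] at huq0
      exact (Multiset.cons_inj_right _).1 huq0
    rcases pairMS hpair with ⟨h1, h2⟩ | ⟨h1, h2⟩
    · exact houter (w (j + 1)) (h1.symm.trans h2)
    · exact houter (w (j + 1)) (h2.symm.trans h1)
  -- the word follows the cycle, in one of the two directions
  have hfinal : ∀ g : ZMod m → Fin n, Function.Injective g →
      (∀ (k : ZMod m) (z : Fin n), HasEdge w (g k) z → z = g (k - 1) ∨ z = g (k + 1)) →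
      ∀ k0 : ZMod m, w 0 = g (k0 - 1) → w 1 = g k0 → False := by
    intro g hg hgnbr k0 h0 h1
    have H : ∀ j : ℕ, w j = g (k0 - 1 + (j : ZMod m)) ∧
        w (j + 1) = g (k0 - 1 + (j : ZMod m) + 1) := by
      intro j
      induction j with
      | zero =>
        constructor
        · rw [h0]; norm_num
        · rw [h1]; congr 1; push_cast; ring
      | succ j ih =>
        constructor
        · rw [ih.2]; congr 1; push_cast; ring
        · have hedge : HasEdge w (w (j + 1)) (w (j + 2)) := hasEdge_consec w (j + 1)
          rw [ih.2] at hedge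
          rcases hgnbr _ _ hedge with h | h
          · exfalso
            apply hnb j
            rw [h, ih.1]
            congr 1; ring
          · rw [show j + 1 + 1 = j + 2 by omega, h]
            congr 1; push_cast; ring
    have hw : ∀ j : ℕ, w j = g (k0 - 1 + (j : ZMod m)) := fun j => (H j).1
    have hconst : ∀ i : ℕ,
        ((factorAt w i m : List (Fin n)) : Multiset (Fin n)) =
        (Finset.univ : Finset (Fin n)).val := by
      intro i
      have hnodup : ((List.range m).map fun j => w (i + j)).Nodup := by
        refine List.Nodup.map_on ?_ List.nodup_range
        intro j1 hj1 j2 hj2 hEq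
        rw [List.mem_range] at hj1 hj2
        rw [hw (i + j1), hw (i + j2)] at hEq
        have harg := hg hEq
        have hj : (j1 : ZMod m) = (j2 : ZMod m) := by
          push_cast at harg
          linear_combination harg
        exact cast_inj_aux (by omega) hj1 hj2 hj
      set S : Finset (Fin n) :=
        ⟨(((List.range m).map fun j => w (i + j) : List (Fin n)) : Multiset (Fin n)),
          by exact_mod_cast hnodup⟩ with hS
      have hcard : S.card = Fintype.card (Fin n) := by
        rw [Fintype.card_fin]
        have hSm : S.card = m := by simp [hS]
        omega
      have hSuniv : S = Finset.univ := Finset.eq_univ_of_card S hcard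
      have hfact : ((factorAt w i m : List (Fin n)) : Multiset (Fin n)) = S.val := rfl
      rw [hfact, hSuniv]
    have hsingle : abelianFactors w m = {(Finset.univ : Finset (Fin n)).val} := by
      ext s
      constructor
      · rintro ⟨i, rfl⟩
        exact Set.mem_singleton_iff.mpr (hconst i)
      · intro h
        rw [Set.mem_singleton_iff] at h
        exact ⟨0, h.trans (hconst 0).symm⟩
    have hc := hcomp m (by omega)
    rw [hsingle, Set.ncard_singleton] at hc
    omega
  -- conclude
  obtain ⟨k0, hk0⟩ := hall (w 1)
  have hw0 : HasEdge w (f k0) (w 0) := by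
    have h := hasEdge_consec w 0
    rw [hk0] at h
    exact hasEdge_symm h
  rcases hnbrf k0 (w 0) hw0 with h | h
  · exact hfinal f hinj hnbrf k0 h hk0
  · refine hfinal (fun k => f (-k)) (fun k1 k2 hk => neg_injective (hinj hk)) ?_ (-k0) ?_ ?_
    · intro k z hz
      rcases hnbrf (-k) z hz with h' | h'
      · refine Or.inr ?_
        rw [h']; congr 1; ring
      · refine Or.inl ?_
        rw [h']; congr 1; ring
    · rw [h]; congr 1; ring
    · rw [hk0]; congr 1; ring
end

section
/- Let n ≥ 4 and let w be a recurrent infinite word over {1,...,n} whose set of length-2 factors is contained in {1k, k1 : 1 ≤ k ≤ n} (i.e., the factor graph is a star centered at 1 together with the loop 11), and suppose 111 is a factor of w. If w has at most n Abelian factors of every length, a contradiction follows: w has at least n+1 distinct Abelian factors of some length. -/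
namespace Stmt10Aux

lemma factorAt_two (w : ℕ → ℕ) (i : ℕ) : factorAt w i 2 = [w i, w (i+1)] := by
  simp [factorAt, List.range_succ]

lemma factorAt_three (w : ℕ → ℕ) (i : ℕ) : factorAt w i 3 = [w i, w (i+1), w (i+2)] := by
  simp [factorAt, List.range_succ]

lemma filter_replicate_none (p : ℕ → Prop) [DecidablePred p] (n a : ℕ) (h : ¬ p a) :
    Multiset.filter p (Multiset.replicate n a) = 0 := by
  rw [Multiset.filter_eq_nil]; intro b hb; rw [Multiset.eq_of_mem_replicate hb]; exact h

lemma window_eq (w : ℕ → ℕ) (i m : ℕ) (e : Finset ℕ) (he : e ⊆ Finset.range m)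
    (hout : ∀ t, t < m → t ∉ e → w (i+t) = 1) :
    (factorAt w i m : Multiset ℕ)
      = Multiset.replicate (m - e.card) 1 + e.val.map (fun t => w (i+t)) := by
  have h0 : (factorAt w i m : Multiset ℕ) = (Finset.range m).val.map (fun t => w (i+t)) := rfl
  have hle : e.val ≤ (Finset.range m).val := Finset.val_le_iff.2 he
  have h1 : (Finset.range m).val = e.val + ((Finset.range m) \ e).val := by
    rw [Finset.sdiff_val, add_tsub_cancel_of_le hle]
  rw [h0, h1, Multiset.map_add, add_comm]
  congr 1
  · have hconst : ∀ t ∈ ((Finset.range m) \ e).val, w (i+t) = (fun _ => 1) t := by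
      intro t ht
      have ht' := Finset.mem_sdiff.1 ht
      exact hout t (Finset.mem_range.1 ht'.1) ht'.2
    rw [Multiset.map_congr rfl hconst, Multiset.map_const']
    congr 1
    have : ((Finset.range m) \ e).card = m - e.card := by
      rw [Finset.card_sdiff_of_subset he, Finset.card_range]
    exact this

lemma abFinite (n : ℕ) (w : ℕ → ℕ) (hrange : ∀ i, w i ∈ Finset.Icc 1 n) (m : ℕ) :
    (abelianFactors w m).Finite := by
  classical
  have hsub : abelianFactors w m ⊆ Set.range
      (fun f : Fin m → Fin (n+1) =>
        (((List.range m).map (fun k => if h : k < m then (f ⟨k, h⟩ : ℕ) else 0)) : Multiset ℕ)) := by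
    rintro s ⟨i, rfl⟩
    have hwlt : ∀ j : Fin m, w (i + (j : ℕ)) < n + 1 := by
      intro j
      have := Finset.mem_Icc.1 (hrange (i + (j : ℕ)))
      omega
    refine ⟨fun j => ⟨w (i + (j : ℕ)), hwlt j⟩, ?_⟩
    have hlist : ∀ l₁ l₂ : List ℕ, l₁ = l₂ → (l₁ : Multiset ℕ) = (l₂ : Multiset ℕ) :=
      fun _ _ h => by rw [h]
    apply hlist
    simp only [factorAt]
    apply List.map_congr_left
    intro k hk
    simp [List.mem_range.1 hk]
  exact (Set.finite_range _).subset hsub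

end Stmt10Aux


/-- let `w` be recurrent over `{1,…,n}` (`n ≥ 4`) whose factor graph
is the star centered at `1` together with the loop `11`, with `111` a factor of `w`.
If `w` has at most `n` Abelian factors of every length, a contradiction follows. -/
theorem stmt10 (n : ℕ) (hn : 4 ≤ n) (w : ℕ → ℕ)
    (hrange : ∀ i, w i ∈ Finset.Icc 1 n)
    (hrec : Recurrent w)
    (hstar : ∀ a b, IsFactor w [a, b] → a = 1 ∨ b = 1)
    (hedges : ∀ k, 2 ≤ k → k ≤ n → HasEdge w 1 k)
    (h111 : IsFactor w [1, 1, 1])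
    (hcomp : ∀ m, 1 ≤ m → (abelianFactors w m).ncard ≤ n) :
    False := by
  classical
  -- basic range facts
  have wlow : ∀ i, 1 ≤ w i ∧ w i ≤ n := by
    intro i; exact Finset.mem_Icc.1 (hrange i)
  -- occurrences of every letter at arbitrarily large positions
  have occ : ∀ c, 2 ≤ c → c ≤ n → ∀ N, ∃ i, N ≤ i ∧ w i = c := by
    intro c h2 hcn N
    rcases hedges c h2 hcn with h | h
    · rcases hrec _ h N with ⟨i, hi, he⟩
      rw [show ([1, c] : List ℕ).length = 2 from rfl, Stmt10Aux.factorAt_two] at he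
      have hc : c = w (i+1) := by
        simpa using congrArg (fun l => l.getLast?) he
      exact ⟨i + 1, by omega, hc.symm⟩
    · rcases hrec _ h N with ⟨i, hi, he⟩
      rw [show ([c, 1] : List ℕ).length = 2 from rfl, Stmt10Aux.factorAt_two] at he
      have hc : c = w i := by
        simpa using congrArg (fun l => l.head?) he
      exact ⟨i, hi, hc.symm⟩
  -- the set of gap sizes between consecutive non-1 letters
  set Sgap : Set ℕ :=
    {h | ∃ i, w i ≠ 1 ∧ w (i + h + 1) ≠ 1 ∧ ∀ t, 1 ≤ t → t ≤ h → w (i + t) = 1} with hSdef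
  have hSne : Sgap.Nonempty := by
    have key : ∀ b a, a < b → w a ≠ 1 → w b ≠ 1 → Sgap.Nonempty := by
      intro b
      induction b using Nat.strong_induction_on with
      | _ b ih =>
        intro a hab ha hb
        by_cases hmid : ∃ t, a < t ∧ t < b ∧ w t ≠ 1
        · obtain ⟨t, h1, h2, h3⟩ := hmid
          exact ih t h2 a h1 ha h3
        · push_neg at hmid
          refine ⟨b - a - 1, a, ha, ?_, ?_⟩
          · rw [show a + (b - a - 1) + 1 = b by omega]; exact hb
          · intro t ht1 ht2
            exact hmid (a + t) (by omega) (by omega)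
    obtain ⟨a, _, hav⟩ := occ 2 le_rfl (by omega) 0
    obtain ⟨b, hb2, hbv⟩ := occ 2 le_rfl (by omega) (a + 1)
    exact key b a (by omega) (by omega) (by omega)
  set g : ℕ := sInf Sgap with hgdef
  have hgS : g ∈ Sgap := Nat.sInf_mem hSne
  have hg1 : 1 ≤ g := by
    rcases Nat.eq_zero_or_pos g with h0 | h; swap; · exact h
    exfalso
    obtain ⟨i, hi1, hi2, -⟩ := hgS
    rw [h0] at hi2
    have hfac : IsFactor w [w i, w (i + 1)] := by
      exact ⟨i, by rw [show ([w i, w (i+1)] : List ℕ).length = 2 from rfl,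
        Stmt10Aux.factorAt_two]⟩
    rcases hstar _ _ hfac with h | h
    · exact hi1 h
    · exact hi2 (by simpa using h)
  -- after a non-1 letter come at least g ones
  have ones_after : ∀ i, w i ≠ 1 → ∀ t, 1 ≤ t → t ≤ g → w (i + t) = 1 := by
    intro i hi t
    induction t using Nat.strong_induction_on with
    | _ t ih =>
      intro ht1 htg
      by_contra hne
      have hmem : (t - 1) ∈ Sgap := by
        refine ⟨i, hi, ?_, ?_⟩
        · rw [show i + (t - 1) + 1 = i + t by omega]; exact hne
        · intro s hs1 hs2
          exact ih s (by omega) hs1 (by omega)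
      have hle := Nat.sInf_le hmem
      omega
  have ones_before : ∀ i t, 1 ≤ t → t ≤ g → t ≤ i → w i ≠ 1 → w (i - t) = 1 := by
    intro i t h1 h2 h3 hi
    by_contra hne
    have := ones_after (i - t) hne t h1 h2
    rw [show i - t + t = i by omega] at this
    exact hi this
  -- class membership helpers
  have mem_ab : ∀ m i (e : Finset ℕ), e ⊆ Finset.range m →
      (∀ t, t < m → t ∉ e → w (i + t) = 1) →
      (Multiset.replicate (m - e.card) 1 + e.val.map (fun t => w (i + t)))
        ∈ abelianFactors w m := by
    intro m i e he hout
    exact ⟨i, (Stmt10Aux.window_eq w i m e he hout).symm⟩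
  have mem_zero : ∀ m i, (∀ t, t < m → w (i + t) = 1) →
      (Multiset.replicate m 1 : Multiset ℕ) ∈ abelianFactors w m := by
    intro m i h
    have := mem_ab m i ∅ (by simp) (fun t ht _ => h t ht)
    simpa using this
  have mem_single : ∀ m i p c, p < m → w (i + p) = c →
      (∀ t, t < m → t ≠ p → w (i + t) = 1) →
      (Multiset.replicate (m - 1) 1 + {c}) ∈ abelianFactors w m := by
    intro m i p c hp hv ho
    have := mem_ab m i {p} (by simpa using hp)
      (fun t ht htp => ho t ht (by simpa using htp))
    simpa [hv] using this
  have mem_pair : ∀ m i p q c d, p < q → q < m → w (i + p) = c → w (i + q) = d →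
      (∀ t, t < m → t ≠ p → t ≠ q → w (i + t) = 1) →
      (Multiset.replicate (m - 2) 1 + {c, d}) ∈ abelianFactors w m := by
    intro m i p q c d hpq hq hvp hvq ho
    have hne : p ≠ q := by omega
    have hsub : ({p, q} : Finset ℕ) ⊆ Finset.range m := by
      intro t ht
      simp only [Finset.mem_insert, Finset.mem_singleton] at ht
      rcases ht with h | h <;> simp [h] <;> omega
    have hval : ({p, q} : Finset ℕ).val = (p ::ₘ {q} : Multiset ℕ) := by
      simp [Finset.insert_val, Multiset.ndinsert_of_notMem, hne]
    have hcard : ({p, q} : Finset ℕ).card = 2 := by simp [hne]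
    have := mem_ab m i {p, q} hsub
      (fun t ht htm => ho t ht (by simp at htm; tauto) (by simp at htm; tauto))
    rw [hcard, hval] at this
    simpa [hvp, hvq] using this
  -- the invariant: number of non-1 entries
  set ν : Multiset ℕ → ℕ := fun s => Multiset.card (s.filter (fun x => ¬ x = 1)) with hν
  have nu_rep : ∀ a (s : Multiset ℕ), ν (Multiset.replicate a 1 + s) = ν s := by
    intro a s
    simp only [hν, Multiset.filter_add,
      Stmt10Aux.filter_replicate_none (fun x => ¬ x = 1) a 1 (by simp)]
    simp
  have nu_single : ∀ c : ℕ, c ≠ 1 → ν {c} = 1 := by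
    intro c hc
    simp [hν, Multiset.filter_singleton, hc]
  have nu_pair : ∀ c d : ℕ, c ≠ 1 → d ≠ 1 → ν {c, d} = 2 := by
    intro c d hc hd
    simp [hν, Multiset.insert_eq_cons, Multiset.filter_cons, Multiset.filter_singleton, hc, hd]
  have nu_zero : ∀ a : ℕ, ν (Multiset.replicate a 1) = 0 := by
    intro a
    have h := nu_rep a 0
    simp only [add_zero] at h
    rw [h]
    simp [hν]
  -- main counting step
  have main : ∀ m, 1 ≤ m → ∀ s₀ s₁ : Multiset ℕ,
      s₀ ∈ abelianFactors w m → s₁ ∈ abelianFactors w m →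
      (∀ k, 2 ≤ k → k ≤ n →
        (Multiset.replicate (m - 1) 1 + ({k} : Multiset ℕ)) ∈ abelianFactors w m) →
      s₀ ≠ s₁ →
      (∀ k, 2 ≤ k → k ≤ n → s₀ ≠ Multiset.replicate (m - 1) 1 + ({k} : Multiset ℕ)) →
      (∀ k, 2 ≤ k → k ≤ n → s₁ ≠ Multiset.replicate (m - 1) 1 + ({k} : Multiset ℕ)) →
      False := by
    intro m hm s₀ s₁ h0 h1 hsing hne h0s h1s
    set B : Finset (Multiset ℕ) :=
      (Finset.Icc 2 n).image (fun k => Multiset.replicate (m - 1) 1 + ({k} : Multiset ℕ))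
      with hB
    have hBcard : B.card = n - 1 := by
      rw [hB, Finset.card_image_of_injective _ ?_, Nat.card_Icc]
      · omega
      · intro a b hab
        have := add_left_cancel hab
        simpa using this
    have h1B : s₁ ∉ B := by
      intro hmem
      rw [hB, Finset.mem_image] at hmem
      obtain ⟨k, hk, hk2⟩ := hmem
      have hk' := Finset.mem_Icc.1 hk
      exact h1s k hk'.1 hk'.2 hk2.symm
    have h0B : s₀ ∉ insert s₁ B := by
      intro hmem
      rcases Finset.mem_insert.1 hmem with h | h
      · exact hne h
      · rw [hB, Finset.mem_image] at h
        obtain ⟨k, hk, hk2⟩ := h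
        have hk' := Finset.mem_Icc.1 hk
        exact h0s k hk'.1 hk'.2 hk2.symm
    set A : Finset (Multiset ℕ) := insert s₀ (insert s₁ B) with hA
    have hAcard : A.card = n + 1 := by
      rw [hA, Finset.card_insert_of_notMem h0B, Finset.card_insert_of_notMem h1B, hBcard]
      omega
    have hsub : ↑A ⊆ abelianFactors w m := by
      intro s hs
      simp only [hA, Finset.coe_insert, Set.mem_insert_iff, Finset.mem_coe] at hs
      rcases hs with rfl | rfl | hs
      · exact h0
      · exact h1
      · rw [hB, Finset.mem_image] at hs
        obtain ⟨k, hk, rfl⟩ := hs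
        have hk' := Finset.mem_Icc.1 hk
        exact hsing k hk'.1 hk'.2
    have hfin := Stmt10Aux.abFinite n w hrange m
    have hcard_le : A.card ≤ (abelianFactors w m).ncard := by
      rw [← Set.ncard_coe_finset]
      exact Set.ncard_le_ncard hsub hfin
    have := hcomp m hm
    omega
  -- singles exist at length m for suitable m
  have single_mem : ∀ m, g + 2 ≤ m → m ≤ g + 3 → (m = g + 3 → 2 ≤ g) → ∀ c, 2 ≤ c → c ≤ n →
      (Multiset.replicate (m - 1) 1 + ({c} : Multiset ℕ)) ∈ abelianFactors w m := by
    intro m hm1 hm2 hg2 c hc1 hc2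
    obtain ⟨i, hiN, hiv⟩ := occ c hc1 hc2 2
    have hwi : w i ≠ 1 := by omega
    -- window starts at i - (m - g - 2 + ... ) ; offset of c is p := m - g - 2 + 1? 
    -- For m = g+2 : start i-1, p = 1. For m = g+3 : start i-2, p = 2.
    set p : ℕ := m - (g + 1) with hp
    have hp12 : p = 1 ∨ p = 2 := by omega
    refine mem_single m (i - p) p c (by omega) ?_ ?_
    · rw [show i - p + p = i by omega]; exact hiv
    · intro t ht htp
      rcases lt_or_gt_of_ne htp with h | h
      · -- t < p : before c
        have hpt : 1 ≤ p - t ∧ p - t ≤ g := by omega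
        have := ones_before i (p - t) hpt.1 hpt.2 (by omega) hwi
        rw [show i - (p - t) = i - p + t by omega] at this
        exact this
      · -- t > p : after c
        have := ones_after i hwi (t - p) (by omega) (by omega)
        rw [show i + (t - p) = i - p + t by omega] at this
        exact this
  -- the minimal-gap pair
  obtain ⟨ig, hig1, hig2, higmid⟩ := hgS
  have hjlow := wlow ig
  have hklow := wlow (ig + g + 1)
  by_cases hrun : ∃ i, ∀ t, t < g + 2 → w (i + t) = 1
  · -- Case (i): a run of g+2 ones exists; work at length m = g+2
    obtain ⟨i0, hi0⟩ := hrun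
    set m := g + 2 with hm
    have s0mem : (Multiset.replicate m 1 : Multiset ℕ) ∈ abelianFactors w m :=
      mem_zero m i0 hi0
    have s1mem : (Multiset.replicate (m - 2) 1 + ({w ig, w (ig + g + 1)} : Multiset ℕ))
        ∈ abelianFactors w m := by
      refine mem_pair m ig 0 (g + 1) _ _ (by omega) (by omega) (by rw [Nat.add_zero]) rfl ?_
      intro t ht ht0 htg
      exact higmid t (by omega) (by omega)
    refine main m (by omega) _ _ s0mem s1mem
      (fun k hk1 hk2 => single_mem m (by omega) (by omega) (by omega) k hk1 hk2) ?_ ?_ ?_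
    · intro h
      have := congrArg ν h
      rw [nu_zero, nu_rep, nu_pair _ _ hig1 hig2] at this
      omega
    · intro k hk1 hk2 h
      have := congrArg ν h
      rw [nu_zero, nu_rep, nu_single k (by omega)] at this
      omega
    · intro k hk1 hk2 h
      have := congrArg ν h
      rw [nu_rep, nu_pair _ _ hig1 hig2, nu_rep, nu_single k (by omega)] at this
      omega
  · -- Case (ii): no run of g+2 ones; then g ≥ 2, work at length m = g+3
    push_neg at hrun
    have hg2 : 2 ≤ g := by
      rcases Nat.lt_or_ge g 2 with h | h; swap; · exact h
      exfalso
      have hgeq : g = 1 := by omega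
      obtain ⟨i, hi⟩ := h111
      rw [show ([1,1,1] : List ℕ).length = 3 from rfl, Stmt10Aux.factorAt_three] at hi
      obtain ⟨t, ht, htv⟩ := hrun i
      have h0 : w (i + 0) = 1 := by
        have : (1 : ℕ) = w i := by simpa using congrArg (fun l => l.head?) hi
        simpa using this.symm
      have h1' : w (i + 1) = 1 := by
        have : (1 : ℕ) = w (i + 1) := by
          simpa using congrArg (fun l : List ℕ => l.tail.head?) hi
        exact this.symm
      have h2' : w (i + 2) = 1 := by
        have : (1 : ℕ) = w (i + 2) := by
          simpa using congrArg (fun l => l.getLast?) hi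
        exact this.symm
      rcases (by omega : t = 0 ∨ t = 1 ∨ t = 2) with rfl | rfl | rfl
      · exact htv h0
      · exact htv h1'
      · exact htv h2'
    set m := g + 3 with hm
    -- every letter c has a neighbour d with pair class replicate (g+1) 1 + {c, d}
    have pairAt : ∀ c, 2 ≤ c → c ≤ n → ∃ d, 2 ≤ d ∧ d ≤ n ∧
        (Multiset.replicate (g + 1) 1 + ({c, d} : Multiset ℕ)) ∈ abelianFactors w m := by
      intro c hc1 hc2
      obtain ⟨i, hiN, hiv⟩ := occ c hc1 hc2 2
      have hwi : w i ≠ 1 := by omega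
      have hex : ∃ s, 1 ≤ s ∧ w (i + s) ≠ 1 := by
        obtain ⟨t, ht, htv⟩ := hrun (i + 1)
        exact ⟨1 + t, by omega, by rw [show i + (1 + t) = i + 1 + t by omega]; exact htv⟩
      obtain ⟨s, ⟨hs1, hsv⟩, hmin'⟩ :
          ∃ s, (1 ≤ s ∧ w (i + s) ≠ 1) ∧ ∀ t, t < s → ¬(1 ≤ t ∧ w (i + t) ≠ 1) :=
        ⟨Nat.find hex, Nat.find_spec hex, fun t ht => Nat.find_min hex ht⟩
      have hmin : ∀ t, 1 ≤ t → t < s → w (i + t) = 1 := by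
        intro t ht hts
        by_contra hne
        exact hmin' t hts ⟨ht, hne⟩
      have hsg : g + 1 ≤ s := by
        by_contra h
        exact hsv (ones_after i hwi s hs1 (by omega))
      have hsub : s ≤ g + 2 := by
        obtain ⟨t, ht, htv⟩ := hrun (i + 1)
        have hnlt : ¬ (1 + t < s) := fun hlt => hmin' (1 + t) hlt
          ⟨by omega, by rw [show i + (1 + t) = i + 1 + t by omega]; exact htv⟩
        omega
      have hdlow := wlow (i + s)
      refine ⟨w (i + s), by omega, by omega, ?_⟩
      rcases (by omega : s = g + 1 ∨ s = g + 2) with hse | hse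
      · -- window [1, c, 1^g, d] starting at i - 1
        have h := mem_pair m (i - 1) 1 (g + 2) c (w (i + s))
          (by omega) (by omega)
          (by rw [show i - 1 + 1 = i by omega]; exact hiv)
          (by rw [show i - 1 + (g + 2) = i + s by omega])
          ?_
        · simpa [hm] using h
        · intro t ht ht1 ht2
          rcases Nat.eq_zero_or_pos t with h0 | h0
          · subst h0
            have := ones_before i 1 le_rfl (by omega) (by omega) hwi
            simpa using this
          · have : 1 ≤ t - 1 ∧ t - 1 < s := by omega
            have := hmin (t - 1) this.1 this.2
            rw [show i + (t - 1) = i - 1 + t by omega] at this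
            exact this
      · -- window [c, 1^{g+1}, d] starting at i
        have h := mem_pair m i 0 (g + 2) c (w (i + s))
          (by omega) (by omega)
          (by simpa using hiv)
          (by rw [← hse])
          ?_
        · simpa [hm] using h
        · intro t ht ht0 ht2
          exact hmin t (by omega) (by omega)
    obtain ⟨d2, hd2a, hd2b, hP2⟩ := pairAt 2 le_rfl (by omega)
    obtain ⟨d3, hd3a, hd3b, hP3⟩ := pairAt 3 (by omega) (by omega)
    obtain ⟨d4, hd4a, hd4b, hP4⟩ := pairAt 4 (by omega) hn
    have hrepl : m - 2 = g + 1 := by omega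
    -- choose two distinct pair classes
    have hdistinct : ∃ c d c' d' : ℕ, 2 ≤ c ∧ 2 ≤ d ∧ 2 ≤ c' ∧ 2 ≤ d' ∧
        ({c, d} : Multiset ℕ) ≠ ({c', d'} : Multiset ℕ) ∧
        (Multiset.replicate (g + 1) 1 + ({c, d} : Multiset ℕ)) ∈ abelianFactors w m ∧
        (Multiset.replicate (g + 1) 1 + ({c', d'} : Multiset ℕ)) ∈ abelianFactors w m := by
      by_cases h23 : ({2, d2} : Multiset ℕ) = ({3, d3} : Multiset ℕ)
      · have h3mem : (3 : ℕ) ∈ ({2, d2} : Multiset ℕ) := by rw [h23]; simp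
        have hd2v : d2 = 3 := by
          rcases Multiset.mem_cons.1 h3mem with h | h
          · omega
          · simp at h; omega
        have hne : ({2, d2} : Multiset ℕ) ≠ ({4, d4} : Multiset ℕ) := by
          intro h
          have h4mem : (4 : ℕ) ∈ ({2, d2} : Multiset ℕ) := by rw [h]; simp
          rcases Multiset.mem_cons.1 h4mem with h' | h'
          · omega
          · simp at h'; omega
        exact ⟨2, d2, 4, d4, le_rfl, hd2a, by omega, hd4a, hne, hP2, hP4⟩
      · exact ⟨2, d2, 3, d3, le_rfl, hd2a, by omega, hd3a, h23, hP2, hP3⟩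
    obtain ⟨c, d, c', d', hc, hd, hc', hd', hpairne, hmem0, hmem1⟩ := hdistinct
    refine main m (by omega) _ _ hmem0 hmem1
      (fun k hk1 hk2 => single_mem m (by omega) (by omega) (fun _ => hg2) k hk1 hk2) ?_ ?_ ?_
    · intro h
      exact hpairne (add_left_cancel h)
    · intro k hk1 hk2 h
      have := congrArg ν h
      rw [nu_rep, nu_pair _ _ (by omega) (by omega), nu_rep, nu_single k (by omega)] at this
      omega
    · intro k hk1 hk2 h
      have := congrArg ν h
      rw [nu_rep, nu_pair _ _ (by omega) (by omega), nu_rep, nu_single k (by omega)] at this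
      omega
end

section
/- Every Sturmian word (an aperiodic infinite binary word with exactly m+1 factors of each length m) has exactly 2 Abelian factors of every length m ≥ 1. -/
set_option maxHeartbeats 1600000
namespace S17

variable {w : ℕ → Fin 2}

/-- the set of factors of length n -/
def Fw (w : ℕ → Fin 2) (n : ℕ) : Set (List (Fin 2)) := {u | ∃ i, u = factorAt w i n}

lemma factorAt_length (w : ℕ → Fin 2) (i n : ℕ) : (factorAt w i n).length = n := by
  simp [factorAt]

lemma factorAt_getElem (w : ℕ → Fin 2) (i n k : ℕ) (h : k < n) :
    (factorAt w i n)[k]'(by simp [factorAt_length, h]) = w (i + k) := by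
  simp [factorAt]

lemma factorAt_eq_iff {i j n : ℕ} :
    factorAt w i n = factorAt w j n ↔ ∀ k, k < n → w (i + k) = w (j + k) := by
  constructor
  · intro h k hk
    have := congrArg (fun l => l[k]?) h
    simp only [factorAt, List.getElem?_map] at this
    simpa [List.getElem?_range, hk] using this
  · intro h
    apply List.ext_getElem (by simp [factorAt_length])
    intro k h1 h2
    simp only [factorAt_length] at h1
    rw [factorAt_getElem w i n k h1, factorAt_getElem w j n k h1, h k h1]

lemma list_eq_factorAt_iff {u : List (Fin 2)} {i n : ℕ} (hu : u.length = n) :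
    u = factorAt w i n ↔ ∀ k, (hk : k < n) → u[k]'(by omega) = w (i + k) := by
  constructor
  · intro h k hk
    subst h; exact factorAt_getElem w i n k hk
  · intro h
    apply List.ext_getElem (by simp [factorAt_length, hu])
    intro k h1 h2
    rw [factorAt_getElem w i n k (by simpa [hu] using h1)]
    exact h k (by omega)

lemma factorAt_succ (w : ℕ → Fin 2) (i n : ℕ) :
    factorAt w i (n + 1) = factorAt w i n ++ [w (i + n)] := by
  simp [factorAt, List.range_succ]

lemma factorAt_cons (w : ℕ → Fin 2) (i n : ℕ) :
    factorAt w i (n + 1) = w i :: factorAt w (i + 1) n := by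
  apply List.ext_getElem (by simp [factorAt_length])
  intro k h1 h2
  simp only [factorAt_length] at h1
  rcases Nat.eq_zero_or_pos k with hk | hk
  · subst hk; simp [factorAt_getElem w i (n+1) 0 h1]
  · obtain ⟨k', rfl⟩ : ∃ k', k = k' + 1 := ⟨k - 1, by omega⟩
    rw [factorAt_getElem w i (n+1) (k'+1) h1]
    simp only [List.getElem_cons_succ]
    rw [factorAt_getElem w (i+1) n k' (by omega)]
    ring_nf

lemma factorAt_dropLast (w : ℕ → Fin 2) (i n : ℕ) :
    (factorAt w i (n + 1)).dropLast = factorAt w i n := by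
  rw [factorAt_succ, List.dropLast_concat]

lemma factorAt_tail (w : ℕ → Fin 2) (i n : ℕ) :
    (factorAt w i (n + 1)).tail = factorAt w (i + 1) n := by
  rw [factorAt_cons]; rfl

lemma factorAt_add (w : ℕ → Fin 2) (i a b : ℕ) :
    factorAt w i (a + b) = factorAt w i a ++ factorAt w (i + a) b := by
  induction b with
  | zero => simp [factorAt]
  | succ b ih =>
      have : i + a + b = i + (a + b) := by ring
      rw [show a + (b+1) = (a+b)+1 from rfl, factorAt_succ, ih, factorAt_succ,
        List.append_assoc, this]

lemma win_mem (w : ℕ → Fin 2) (i n : ℕ) : factorAt w i n ∈ Fw w n := ⟨i, rfl⟩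

lemma Fw_length {u : List (Fin 2)} {n : ℕ} (h : u ∈ Fw w n) : u.length = n := by
  obtain ⟨i, rfl⟩ := h; exact factorAt_length w i n

lemma Fw_dropLast {u : List (Fin 2)} {n : ℕ} (h : u ∈ Fw w (n + 1)) :
    u.dropLast ∈ Fw w n := by
  obtain ⟨i, rfl⟩ := h; rw [factorAt_dropLast]; exact win_mem w i n

lemma Fw_tail {u : List (Fin 2)} {n : ℕ} (h : u ∈ Fw w (n + 1)) :
    u.tail ∈ Fw w n := by
  obtain ⟨i, rfl⟩ := h; rw [factorAt_tail]; exact win_mem w (i+1) n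

lemma Fw_finite (w : ℕ → Fin 2) (n : ℕ) : (Fw w n).Finite := by
  apply Set.Finite.subset (Set.finite_range (fun f : Fin n → Fin 2 => List.ofFn f))
  rintro u ⟨i, rfl⟩
  refine ⟨fun k => w (i + k), ?_⟩
  apply List.ext_getElem (by simp [factorAt_length])
  intro k h1 h2
  simp only [List.getElem_ofFn]
  rw [factorAt_getElem w i n k (by simpa [factorAt_length] using h2)]

noncomputable def FwF (w : ℕ → Fin 2) (n : ℕ) : Finset (List (Fin 2)) :=
  (Fw_finite w n).toFinset

lemma mem_FwF {u : List (Fin 2)} {n : ℕ} : u ∈ FwF w n ↔ u ∈ Fw w n :=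
  Set.Finite.mem_toFinset _

lemma Fw_zero (w : ℕ → Fin 2) : Fw w 0 = {[]} := by
  ext u; constructor
  · rintro ⟨i, rfl⟩; simp [factorAt]
  · rintro rfl; exact ⟨0, by simp [factorAt]⟩

lemma cardFwF (hcomp : ∀ m, 1 ≤ m → (Fw w m).ncard = m + 1) (n : ℕ) : (FwF w n).card = n + 1 := by
  rcases Nat.eq_zero_or_pos n with rfl | hn
  · rw [show (FwF w 0) = {([] : List (Fin 2))} from ?_]
    · simp
    · apply Finset.ext_iff.mpr; intro u
      simp [mem_FwF, Fw_zero]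
  · have := hcomp n hn
    rwa [Set.ncard_eq_toFinset_card _ (Fw_finite w n)] at this

section Per
variable (haper : ¬ ∃ p, 1 ≤ p ∧ ∃ N, ∀ i, N ≤ i → w (i + p) = w i)

lemma no_det (haper : ¬ ∃ p, 1 ≤ p ∧ ∃ N, ∀ i, N ≤ i → w (i + p) = w i) (k N : ℕ)
    (hdet : ∀ i j, N ≤ i → N ≤ j → factorAt w i k = factorAt w j k → w (i + k) = w (j + k)) :
    False := by
  rcases Nat.eq_zero_or_pos k with rfl | hk
  · apply haper
    refine ⟨1, le_refl _, N, fun i hi => ?_⟩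
    have := hdet (i+1) i (by omega) hi (by simp [factorAt])
    simpa using this
  · have key : ∀ s1 s2 : ℕ, s1 < s2 →
        (factorAt w (N + s1) k = factorAt w (N + s2) k) → False := by
      intro s1 s2 hlt hw0
      have hwin : ∀ d, factorAt w (N + s1 + d) k = factorAt w (N + s2 + d) k := by
        intro d
        induction d with
        | zero => simpa using hw0
        | succ d ih =>
          rw [factorAt_eq_iff] at ih ⊢
          intro c hc
          rcases Nat.lt_or_ge (c + 1) k with h | h
          · have := ih (c+1) h
            have e1 : N + s1 + (d + 1) + c = N + s1 + d + (c + 1) := by omega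
            have e2 : N + s2 + (d + 1) + c = N + s2 + d + (c + 1) := by omega
            rw [e1, e2]; exact this
          · have hck : c + 1 = k := by omega
            have := hdet (N + s1 + d) (N + s2 + d) (by omega) (by omega)
              (factorAt_eq_iff.mpr ih)
            have e1 : N + s1 + (d + 1) + c = N + s1 + d + k := by omega
            have e2 : N + s2 + (d + 1) + c = N + s2 + d + k := by omega
            rw [e1, e2]; exact this
      apply haper
      refine ⟨s2 - s1, by omega, N + s1, fun i hi => ?_⟩
      have h0 := (factorAt_eq_iff.mp (hwin (i - (N + s1)))) 0 hk
      have e1 : N + s1 + (i - (N + s1)) + 0 = i := by omega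
      have e2 : N + s2 + (i - (N + s1)) + 0 = i + (s2 - s1) := by omega
      rw [e1, e2] at h0
      exact h0.symm
    obtain ⟨s1, s2, hne, heq⟩ := Finite.exists_ne_map_eq_of_infinite
      (fun s : ℕ => (fun c : Fin k => w (N + s + c)))
    have hwe : ∀ s1 s2 : ℕ, (fun c : Fin k => w (N + s1 + c)) = (fun c : Fin k => w (N + s2 + c)) →
        factorAt w (N + s1) k = factorAt w (N + s2) k := by
      intro a b h
      rw [factorAt_eq_iff]
      intro c hc
      exact congrFun h ⟨c, hc⟩
    rcases hne.lt_or_gt with h | h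
    · exact key s1 s2 h (hwe s1 s2 heq)
    · exact key s2 s1 h (hwe s2 s1 heq.symm)

lemma recur (haper : ¬ ∃ p, 1 ≤ p ∧ ∃ N, ∀ i, N ≤ i → w (i + p) = w i)
    (hcomp : ∀ m, 1 ≤ m → (Fw w m).ncard = m + 1)
    {n : ℕ} {u : List (Fin 2)} (hu : u ∈ Fw w n) (N : ℕ) :
    ∃ i, N ≤ i ∧ u = factorAt w i n := by
  classical
  by_contra hno
  push_neg at hno
  rcases Nat.eq_zero_or_pos n with rfl | hn
  · obtain ⟨i, rfl⟩ := hu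
    exact hno N le_rfl (by simp [factorAt])
  · have hTfin : ∀ j, {v : List (Fin 2) | ∃ i, N ≤ i ∧ v = factorAt w i j}.Finite := by
      intro j
      apply Set.Finite.subset (Fw_finite w j)
      rintro v ⟨i, _, rfl⟩; exact win_mem w i j
    set Tf : ℕ → Finset (List (Fin 2)) := fun j => (hTfin j).toFinset with hTf
    have memT : ∀ j v, v ∈ Tf j ↔ ∃ i, N ≤ i ∧ v = factorAt w i j := by
      intro j v; simp [hTf, Set.Finite.mem_toFinset]
    have grow : ∀ j, (Tf j).card < (Tf (j+1)).card := by
      intro j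
      by_cases hdet : ∀ i i', N ≤ i → N ≤ i' → factorAt w i j = factorAt w i' j →
          w (i + j) = w (i' + j)
      · exact absurd (no_det haper j N hdet) id
      · push_neg at hdet
        obtain ⟨i, i', hNi, hNi', hwinij, hnej⟩ := hdet
        have himg : (Tf (j+1)).image List.dropLast = Tf j := by
          apply Finset.ext_iff.mpr; intro v
          constructor
          · intro hv
            obtain ⟨v', hv', rfl⟩ := Finset.mem_image.mp hv
            obtain ⟨i0, hi0, rfl⟩ := (memT (j+1) v').mp hv'
            rw [factorAt_dropLast]
            exact (memT j _).mpr ⟨i0, hi0, rfl⟩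
          · intro hv
            obtain ⟨i0, hi0, rfl⟩ := (memT j v).mp hv
            exact Finset.mem_image.mpr ⟨factorAt w i0 (j+1), (memT (j+1) _).mpr ⟨i0, hi0, rfl⟩,
              factorAt_dropLast w i0 j⟩
        have hle : (Tf j).card ≤ (Tf (j+1)).card := by
          rw [← himg]; exact Finset.card_image_le
        rcases Nat.lt_or_ge (Tf j).card (Tf (j+1)).card with h | h
        · exact h
        · exfalso
          have hcardeq : ((Tf (j+1)).image List.dropLast).card = (Tf (j+1)).card := by
            rw [himg]; omega
          have hinj := Finset.card_image_iff.mp hcardeq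
          have hu1 : factorAt w i (j+1) ∈ Tf (j+1) := (memT _ _).mpr ⟨i, hNi, rfl⟩
          have hu2 : factorAt w i' (j+1) ∈ Tf (j+1) := (memT _ _).mpr ⟨i', hNi', rfl⟩
          have hdl : (factorAt w i (j+1)).dropLast = (factorAt w i' (j+1)).dropLast := by
            rw [factorAt_dropLast, factorAt_dropLast]; exact hwinij
          have heql := hinj hu1 hu2 hdl
          exact hnej (factorAt_eq_iff.mp heql j (by omega))
    have hmono : ∀ j, j + 1 ≤ (Tf j).card := by
      intro j
      induction j with
      | zero =>
        have : factorAt w N 0 ∈ Tf 0 := (memT _ _).mpr ⟨N, le_rfl, rfl⟩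
        have := Finset.card_pos.mpr ⟨_, this⟩
        omega
      | succ j ih => have := grow j; omega
    -- Tf n ⊆ FwF n, u ∉ Tf n, u ∈ FwF n
    have hsub : Tf n ⊆ FwF w n := by
      intro v hv
      obtain ⟨i, _, rfl⟩ := (memT n v).mp hv
      exact mem_FwF.mpr (win_mem w i n)
    have hun : u ∉ Tf n := by
      intro hmem
      obtain ⟨i, hi, hui⟩ := (memT n u).mp hmem
      exact hno i hi hui
    have hssub : Tf n ⊂ FwF w n := ⟨hsub, fun hsup => hun (hsup (mem_FwF.mpr hu))⟩
    have := Finset.card_lt_card hssub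
    have hc := cardFwF hcomp n
    have := hmono n
    omega

end Per
/-- right special factor of length n -/
def IsRS (w : ℕ → Fin 2) (n : ℕ) (z : List (Fin 2)) : Prop :=
  z ++ [0] ∈ Fw w (n+1) ∧ z ++ [1] ∈ Fw w (n+1)

/-- left special factor of length n -/
def IsLS (w : ℕ → Fin 2) (n : ℕ) (z : List (Fin 2)) : Prop :=
  (0 : Fin 2) :: z ∈ Fw w (n+1) ∧ (1 : Fin 2) :: z ∈ Fw w (n+1)

lemma IsRS_length {n : ℕ} {z : List (Fin 2)} (h : IsRS w n z) : z.length = n := by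
  have := Fw_length h.1; simpa using this

lemma IsLS_length {n : ℕ} {z : List (Fin 2)} (h : IsLS w n z) : z.length = n := by
  have := Fw_length h.1; simpa using this

section Specials
variable (hcomp : ∀ m, 1 ≤ m → (Fw w m).ncard = m + 1)

lemma RS_unique (hcomp : ∀ m, 1 ≤ m → (Fw w m).ncard = m + 1) (n : ℕ) :
    ∃ z, IsRS w n z ∧ ∀ z', IsRS w n z' → z' = z := by
  classical
  set eS : List (Fin 2) → Finset (Fin 2) :=
    fun z => Finset.univ.filter (fun y => z ++ [y] ∈ Fw w (n+1)) with heS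
  have hfib : ∀ z ∈ FwF w n,
      ((FwF w (n+1)).filter (fun u => u.dropLast = z)).card = (eS z).card := by
    intro z hz
    have : (FwF w (n+1)).filter (fun u => u.dropLast = z)
        = (eS z).image (fun y => z ++ [y]) := by
      apply Finset.ext_iff.mpr; intro u
      constructor
      · intro hu
        obtain ⟨hu1, hu2⟩ := Finset.mem_filter.mp hu
        have hlen : u.length = n + 1 := Fw_length (mem_FwF.mp hu1)
        have hne : u ≠ [] := by intro h; rw [h] at hlen; simp at hlen
        have hrep : u.dropLast ++ [u.getLast hne] = u := List.dropLast_append_getLast hne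
        refine Finset.mem_image.mpr ⟨u.getLast hne, ?_, by rw [← hu2, hrep]⟩
        rw [heS]
        refine Finset.mem_filter.mpr ⟨Finset.mem_univ _, ?_⟩
        rw [hu2] at hrep
        rw [hrep]
        exact mem_FwF.mp hu1
      · intro hu
        obtain ⟨y, hy, rfl⟩ := Finset.mem_image.mp hu
        have hyF : z ++ [y] ∈ Fw w (n+1) := (Finset.mem_filter.mp hy).2
        exact Finset.mem_filter.mpr ⟨mem_FwF.mpr hyF, by simp⟩
    rw [this, Finset.card_image_of_injective _ (fun y y' hyy => by simpa using hyy)]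
  have hsum : (FwF w (n+1)).card = ∑ z ∈ FwF w n, (eS z).card := by
    rw [Finset.card_eq_sum_card_fiberwise
      (f := List.dropLast) (t := FwF w n)
      (fun u hu => mem_FwF.mpr (Fw_dropLast (mem_FwF.mp hu)))]
    exact Finset.sum_congr rfl hfib
  have hlow : ∀ z ∈ FwF w n, 1 ≤ (eS z).card := by
    intro z hz
    obtain ⟨i, rfl⟩ := mem_FwF.mp hz
    refine Finset.card_pos.mpr ⟨w (i + n), ?_⟩
    rw [heS]
    refine Finset.mem_filter.mpr ⟨Finset.mem_univ _, ?_⟩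
    rw [← factorAt_succ]; exact win_mem w i (n+1)
  have hone : ∑ z ∈ FwF w n, ((eS z).card - 1) = 1 := by
    have h2 : ∑ z ∈ FwF w n, (eS z).card
        = ∑ z ∈ FwF w n, (1 + ((eS z).card - 1)) := by
      apply Finset.sum_congr rfl; intro z hz; have := hlow z hz; omega
    rw [Finset.sum_add_distrib, Finset.sum_const, smul_eq_mul, mul_one] at h2
    have hc1 := cardFwF hcomp n
    have hc2 := cardFwF hcomp (n+1)
    rw [← hsum, hc2, hc1] at h2
    omega
  have hex : ∃ z ∈ FwF w n, (eS z).card = 2 := by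
    have : ∃ z ∈ FwF w n, ((eS z).card - 1) ≠ 0 := by
      by_contra hz; push_neg at hz
      have : ∑ z ∈ FwF w n, ((eS z).card - 1) = 0 :=
        Finset.sum_eq_zero hz
      omega
    obtain ⟨z, hz, hz2⟩ := this
    have hle : (eS z).card ≤ 2 := by
      calc (eS z).card ≤ (Finset.univ : Finset (Fin 2)).card := Finset.card_filter_le _ _
      _ = 2 := by simp
    exact ⟨z, hz, by omega⟩
  obtain ⟨z₀, hz₀F, hz₀⟩ := hex
  have hRSiff : ∀ z', IsRS w n z' → z' ∈ FwF w n ∧ (eS z').card = 2 := by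
    intro z' hz'
    have hlen : z'.length = n := IsRS_length hz'
    have hmem : z' ∈ Fw w n := by
      have := Fw_dropLast (w := w) (n := n) hz'.1
      rwa [List.dropLast_concat] at this
    have : eS z' = Finset.univ := by
      apply Finset.eq_univ_of_forall
      intro y
      rw [heS]; refine Finset.mem_filter.mpr ⟨Finset.mem_univ _, ?_⟩
      fin_cases y
      · exact hz'.1
      · exact hz'.2
    exact ⟨mem_FwF.mpr hmem, by rw [this]; simp⟩
  have hz₀RS : IsRS w n z₀ := by
    have huniv : eS z₀ = Finset.univ := Finset.eq_univ_of_card _ (by rw [hz₀]; simp)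
    constructor
    · have : (0 : Fin 2) ∈ eS z₀ := by rw [huniv]; simp
      exact (Finset.mem_filter.mp this).2
    · have : (1 : Fin 2) ∈ eS z₀ := by rw [huniv]; simp
      exact (Finset.mem_filter.mp this).2
  refine ⟨z₀, hz₀RS, ?_⟩
  intro z' hz'
  by_contra hne
  obtain ⟨hz'F, hz'2⟩ := hRSiff z' hz'
  have hpair : ({z', z₀} : Finset (List (Fin 2))) ⊆ FwF w n := by
    intro x hx
    rcases Finset.mem_insert.mp hx with rfl | hx
    · exact hz'F
    · rw [Finset.mem_singleton.mp hx]; exact hz₀F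
  have hsumpair : ∑ z ∈ ({z', z₀} : Finset (List (Fin 2))), ((eS z).card - 1) = 2 := by
    rw [Finset.sum_pair hne, hz₀, hz'2]
  have hle := Finset.sum_le_sum_of_subset (f := fun z => (eS z).card - 1) hpair
  rw [hone, hsumpair] at hle
  omega

lemma LS_unique (haper : ¬ ∃ p, 1 ≤ p ∧ ∃ N, ∀ i, N ≤ i → w (i + p) = w i)
    (hcomp : ∀ m, 1 ≤ m → (Fw w m).ncard = m + 1) (n : ℕ) :
    ∃ z, IsLS w n z ∧ ∀ z', IsLS w n z' → z' = z := by
  classical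
  set eS : List (Fin 2) → Finset (Fin 2) :=
    fun z => Finset.univ.filter (fun y => y :: z ∈ Fw w (n+1)) with heS
  have hfib : ∀ z ∈ FwF w n,
      ((FwF w (n+1)).filter (fun u => u.tail = z)).card = (eS z).card := by
    intro z hz
    have : (FwF w (n+1)).filter (fun u => u.tail = z)
        = (eS z).image (fun y => y :: z) := by
      apply Finset.ext_iff.mpr; intro u
      constructor
      · intro hu
        obtain ⟨hu1, hu2⟩ := Finset.mem_filter.mp hu
        have hlen : u.length = n + 1 := Fw_length (mem_FwF.mp hu1)
        obtain ⟨y, v, rfl⟩ : ∃ y v, u = y :: v := by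
          cases u with
          | nil => simp at hlen
          | cons a l => exact ⟨a, l, rfl⟩
        simp only [List.tail_cons] at hu2
        subst hu2
        refine Finset.mem_image.mpr ⟨y, ?_, rfl⟩
        rw [heS]
        exact Finset.mem_filter.mpr ⟨Finset.mem_univ _, mem_FwF.mp hu1⟩
      · intro hu
        obtain ⟨y, hy, rfl⟩ := Finset.mem_image.mp hu
        have hyF : y :: z ∈ Fw w (n+1) := (Finset.mem_filter.mp hy).2
        exact Finset.mem_filter.mpr ⟨mem_FwF.mpr hyF, by simp⟩
    rw [this, Finset.card_image_of_injective _ (fun y y' hyy => by simpa using hyy)]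
  have hsum : (FwF w (n+1)).card = ∑ z ∈ FwF w n, (eS z).card := by
    rw [Finset.card_eq_sum_card_fiberwise
      (f := List.tail) (t := FwF w n)
      (fun u hu => mem_FwF.mpr (Fw_tail (mem_FwF.mp hu)))]
    exact Finset.sum_congr rfl hfib
  have hlow : ∀ z ∈ FwF w n, 1 ≤ (eS z).card := by
    intro z hz
    obtain ⟨i, rfl⟩ := mem_FwF.mp hz
    obtain ⟨j, hj, hjw⟩ := recur haper hcomp (win_mem w i n) 1
    refine Finset.card_pos.mpr ⟨w (j - 1), ?_⟩
    rw [heS]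
    refine Finset.mem_filter.mpr ⟨Finset.mem_univ _, ?_⟩
    rw [hjw]
    have : w (j-1) :: factorAt w j n = factorAt w (j-1) (n+1) := by
      rw [factorAt_cons]
      congr 2
      omega
    rw [this]; exact win_mem w (j-1) (n+1)
  have hone : ∑ z ∈ FwF w n, ((eS z).card - 1) = 1 := by
    have h2 : ∑ z ∈ FwF w n, (eS z).card
        = ∑ z ∈ FwF w n, (1 + ((eS z).card - 1)) := by
      apply Finset.sum_congr rfl; intro z hz; have := hlow z hz; omega
    rw [Finset.sum_add_distrib, Finset.sum_const, smul_eq_mul, mul_one] at h2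
    have hc1 := cardFwF hcomp n
    have hc2 := cardFwF hcomp (n+1)
    rw [← hsum, hc2, hc1] at h2
    omega
  have hex : ∃ z ∈ FwF w n, (eS z).card = 2 := by
    have : ∃ z ∈ FwF w n, ((eS z).card - 1) ≠ 0 := by
      by_contra hz; push_neg at hz
      have : ∑ z ∈ FwF w n, ((eS z).card - 1) = 0 :=
        Finset.sum_eq_zero hz
      omega
    obtain ⟨z, hz, hz2⟩ := this
    have hle : (eS z).card ≤ 2 := by
      calc (eS z).card ≤ (Finset.univ : Finset (Fin 2)).card := Finset.card_filter_le _ _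
      _ = 2 := by simp
    exact ⟨z, hz, by omega⟩
  obtain ⟨z₀, hz₀F, hz₀⟩ := hex
  have hLSiff : ∀ z', IsLS w n z' → z' ∈ FwF w n ∧ (eS z').card = 2 := by
    intro z' hz'
    have hmem : z' ∈ Fw w n := by
      have := Fw_tail (w := w) (n := n) hz'.1
      simpa using this
    have : eS z' = Finset.univ := by
      apply Finset.eq_univ_of_forall
      intro y
      rw [heS]; refine Finset.mem_filter.mpr ⟨Finset.mem_univ _, ?_⟩
      fin_cases y
      · exact hz'.1
      · exact hz'.2
    exact ⟨mem_FwF.mpr hmem, by rw [this]; simp⟩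
  have hz₀LS : IsLS w n z₀ := by
    have huniv : eS z₀ = Finset.univ := Finset.eq_univ_of_card _ (by rw [hz₀]; simp)
    constructor
    · have : (0 : Fin 2) ∈ eS z₀ := by rw [huniv]; simp
      exact (Finset.mem_filter.mp this).2
    · have : (1 : Fin 2) ∈ eS z₀ := by rw [huniv]; simp
      exact (Finset.mem_filter.mp this).2
  refine ⟨z₀, hz₀LS, ?_⟩
  intro z' hz'
  by_contra hne
  obtain ⟨hz'F, hz'2⟩ := hLSiff z' hz'
  have hpair : ({z', z₀} : Finset (List (Fin 2))) ⊆ FwF w n := by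
    intro x hx
    rcases Finset.mem_insert.mp hx with rfl | hx
    · exact hz'F
    · rw [Finset.mem_singleton.mp hx]; exact hz₀F
  have hsumpair : ∑ z ∈ ({z', z₀} : Finset (List (Fin 2))), ((eS z).card - 1) = 2 := by
    rw [Finset.sum_pair hne, hz₀, hz'2]
  have hle := Finset.sum_le_sum_of_subset (f := fun z => (eS z).card - 1) hpair
  rw [hone, hsumpair] at hle
  omega

end Specials

lemma ext_unique {n : ℕ} {z : List (Fin 2)} (hz : ¬ IsRS w n z)
    {y y' : Fin 2} (h1 : z ++ [y] ∈ Fw w (n+1)) (h2 : z ++ [y'] ∈ Fw w (n+1)) : y = y' := by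
  by_contra hne
  apply hz
  fin_cases y <;> fin_cases y'
  · exact absurd rfl hne
  · exact ⟨h1, h2⟩
  · exact ⟨h2, h1⟩
  · exact absurd rfl hne

lemma left_ext_unique {n : ℕ} {z : List (Fin 2)} (hz : ¬ IsLS w n z)
    {y y' : Fin 2} (h1 : y :: z ∈ Fw w (n+1)) (h2 : y' :: z ∈ Fw w (n+1)) : y = y' := by
  by_contra hne
  apply hz
  fin_cases y <;> fin_cases y'
  · exact absurd rfl hne
  · exact ⟨h1, h2⟩
  · exact ⟨h2, h1⟩
  · exact absurd rfl hne

lemma next_letter {n i i' : ℕ} (hwin : factorAt w i n = factorAt w i' n)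
    (hnot : ¬ IsRS w n (factorAt w i n)) : w (i + n) = w (i' + n) := by
  apply ext_unique hnot (y := w (i+n)) (y' := w (i'+n))
  · rw [← factorAt_succ]; exact win_mem w i (n+1)
  · rw [hwin, ← factorAt_succ]; exact win_mem w i' (n+1)

lemma prev_letter {n i i' : ℕ} (hwin : factorAt w (i+1) n = factorAt w (i'+1) n)
    (hnot : ¬ IsLS w n (factorAt w (i+1) n)) : w i = w i' := by
  have h1 : w i :: factorAt w (i+1) n ∈ Fw w (n+1) := by
    rw [← factorAt_cons]; exact win_mem w i (n+1)
  have h2 : w i' :: factorAt w (i+1) n ∈ Fw w (n+1) := by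
    rw [hwin, ← factorAt_cons]; exact win_mem w i' (n+1)
  exact left_ext_unique hnot h1 h2

lemma RS_tail {n : ℕ} {z : List (Fin 2)} (h : IsRS w (n+1) z) : IsRS w n z.tail := by
  have hlen : z.length = n + 1 := IsRS_length h
  have h1 := Fw_tail (w:=w) (n:=n+1) h.1
  have h2 := Fw_tail (w:=w) (n:=n+1) h.2
  obtain ⟨a, v, rfl⟩ : ∃ a v, z = a :: v := by
    cases z with
    | nil => simp at hlen
    | cons a v => exact ⟨a, v, rfl⟩
  constructor
  · simpa using h1
  · simpa using h2

lemma LS_dropLast {n : ℕ} {z : List (Fin 2)} (h : IsLS w (n+1) z) : IsLS w n z.dropLast := by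
  have hlen : z.length = n + 1 := IsLS_length h
  have h1 := Fw_dropLast (w:=w) (n:=n+1) h.1
  have h2 := Fw_dropLast (w:=w) (n:=n+1) h.2
  obtain ⟨v, c, rfl⟩ : ∃ v c, z = v ++ [c] := by
    rcases List.eq_nil_or_concat z with rfl | hvc
    · simp at hlen
    · obtain ⟨L, b, rfl⟩ := hvc
      exact ⟨L, b, by simp⟩
  have e : ∀ y : Fin 2, y :: (v ++ [c]) = (y :: v) ++ [c] := by intro y; simp
  rw [e 0, List.dropLast_concat] at h1
  rw [e 1, List.dropLast_concat] at h2
  rw [List.dropLast_concat]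
  exact ⟨h1, h2⟩

/-- occurrence of the word t at position j -/
def OccT (w : ℕ → Fin 2) (t : List (Fin 2)) (j : ℕ) : Prop :=
  factorAt w j t.length = t

lemma occT_of_window {t : List (Fin 2)} {i j : ℕ}
    (hwin : factorAt w i (t.length+1) = factorAt w j (t.length+1))
    (h : OccT w t i) : OccT w t j := by
  have heq : factorAt w j t.length = factorAt w i t.length := by
    rw [factorAt_eq_iff]; intro k hk
    exact (factorAt_eq_iff.mp hwin k (by omega)).symm
  unfold OccT at *
  rw [heq]; exact h

lemma notRS_window {t : List (Fin 2)} (hRSu : ∀ z', IsRS w t.length z' → z' = t)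
    {i : ℕ} (h : ¬ OccT w t (i+1)) : ¬ IsRS w (t.length+1) (factorAt w i (t.length+1)) := by
  intro hRS
  have := RS_tail hRS
  rw [factorAt_tail] at this
  exact h (hRSu _ this)

lemma notLS_window {t : List (Fin 2)} (hLSu : ∀ z', IsLS w t.length z' → z' = t)
    {i : ℕ} (h : ¬ OccT w t i) : ¬ IsLS w (t.length+1) (factorAt w i (t.length+1)) := by
  intro hLS
  have := LS_dropLast hLS
  rw [show t.length + 1 = t.length + 1 from rfl] at this
  have h2 : (factorAt w i (t.length+1)).dropLast = factorAt w i t.length :=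
    factorAt_dropLast w i t.length
  rw [h2] at this
  exact h (hLSu _ this)

/-- forward determinism along a return to t -/
lemma same_ret {t : List (Fin 2)} (hRSu : ∀ z', IsRS w t.length z' → z' = t) :
    ∀ d i i', 1 ≤ d → factorAt w i (t.length+1) = factorAt w i' (t.length+1) →
    OccT w t (i + d) → (∀ e, 1 ≤ e → e < d → ¬ OccT w t (i + e)) →
    (OccT w t (i' + d) ∧ (∀ e, 1 ≤ e → e < d → ¬ OccT w t (i' + e)) ∧
     ∀ c, c < d + t.length → w (i + c) = w (i' + c)) := by
  intro d
  induction d with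
  | zero => intro i i' h; omega
  | succ d ih =>
    intro i i' _ hwin hocc hfree
    rcases Nat.eq_zero_or_pos d with rfl | hd
    · refine ⟨?_, by omega, ?_⟩
      · show OccT w t (i' + 1)
        have h1 : OccT w t (i + 1) := hocc
        have htl := congrArg List.tail hwin
        rw [factorAt_tail, factorAt_tail] at htl
        unfold OccT at *
        rw [← htl]; exact h1
      · intro c hc
        exact factorAt_eq_iff.mp hwin c (by omega)
    · have hno1 : ¬ OccT w t (i + 1) := hfree 1 le_rfl (by omega)
      have hnot := notRS_window hRSu hno1
      have hnext : w (i + (t.length+1)) = w (i' + (t.length+1)) :=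
        next_letter hwin hnot
      have hwin1 : factorAt w (i+1) (t.length+1) = factorAt w (i'+1) (t.length+1) := by
        rw [factorAt_eq_iff]
        intro k hk
        rcases Nat.lt_or_ge k t.length with h | h
        · have := factorAt_eq_iff.mp hwin (k+1) (by omega)
          have e1 : i + 1 + k = i + (k+1) := by omega
          have e2 : i' + 1 + k = i' + (k+1) := by omega
          rw [e1, e2]; exact this
        · have hkl : k = t.length := by omega
          subst hkl
          have e1 : i + 1 + t.length = i + (t.length + 1) := by omega
          have e2 : i' + 1 + t.length = i' + (t.length + 1) := by omega
          rw [e1, e2]; exact hnext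
      have hocc1 : OccT w t ((i+1) + d) := by
        have : (i+1) + d = i + (d+1) := by omega
        rw [this]; exact hocc
      have hfree1 : ∀ e, 1 ≤ e → e < d → ¬ OccT w t ((i+1) + e) := by
        intro e he1 he2
        have : (i+1) + e = i + (e+1) := by omega
        rw [this]; exact hfree (e+1) (by omega) (by omega)
      obtain ⟨ho', hf', hl'⟩ := ih (i+1) (i'+1) hd hwin1 hocc1 hfree1
      refine ⟨?_, ?_, ?_⟩
      · have : i' + (d+1) = (i'+1) + d := by omega
        rw [this]; exact ho'
      · intro e he1 he2
        rcases Nat.eq_or_lt_of_le he1 with rfl | he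
        · intro hOcc
          exact hno1 (occT_of_window (i := i'+1) (j := i+1) hwin1.symm hOcc)
        · have : i' + e = (i'+1) + (e-1) := by omega
          rw [this]
          exact hf' (e-1) (by omega) (by omega)
      · intro c hc
        rcases Nat.eq_zero_or_pos c with rfl | hcp
        · simpa using factorAt_eq_iff.mp hwin 0 (by omega)
        · have e1 : i + c = (i+1) + (c-1) := by omega
          have e2 : i' + c = (i'+1) + (c-1) := by omega
          rw [e1, e2]
          exact hl' (c-1) (by omega)

/-- backward determinism to the previous occurrence of t -/
lemma same_prv {t : List (Fin 2)} (hLSu : ∀ z', IsLS w t.length z' → z' = t) :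
    ∀ s b j, factorAt w (b + s) (t.length+1) = factorAt w j (t.length+1) →
    OccT w t b → (∀ e, 1 ≤ e → e ≤ s → ¬ OccT w t (b + e)) →
    (∃ b₀, b₀ ≤ j ∧ OccT w t b₀) →
    ∃ b', j = b' + s ∧ OccT w t b' ∧ (∀ e, 1 ≤ e → e ≤ s → ¬ OccT w t (b' + e)) ∧
      ∀ c, c < s + t.length + 1 → w (b + c) = w (b' + c) := by
  intro s
  induction s with
  | zero =>
    intro b j hwin hb _ _
    refine ⟨j, by omega, ?_, by omega, ?_⟩
    · exact occT_of_window (by simpa using hwin) hb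
    · intro c hc
      have := factorAt_eq_iff.mp hwin c (by omega)
      simpa using this
  | succ s ih =>
    intro b j hwin hb hfree hcov
    have hnoc : ¬ OccT w t (b + (s+1)) := hfree (s+1) (by omega) le_rfl
    have hnoj : ¬ OccT w t j := by
      intro h
      exact hnoc (occT_of_window hwin.symm h)
    obtain ⟨b₀, hb₀j, hb₀⟩ := hcov
    have hj1 : 1 ≤ j := by
      rcases Nat.eq_zero_or_pos j with rfl | h
      · exfalso; apply hnoj
        have : b₀ = 0 := by omega
        rwa [this] at hb₀
      · exact h
    obtain ⟨j', rfl⟩ : ∃ j', j = j' + 1 := ⟨j - 1, by omega⟩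
    have hnot := notLS_window hLSu hnoc
    have hwin' : factorAt w ((b+s)+1) (t.length+1) = factorAt w (j'+1) (t.length+1) := by
      have e1 : (b+s)+1 = b + (s+1) := by omega
      rw [e1]; exact hwin
    have hprev : w (b+s) = w j' := by
      apply prev_letter hwin'
      have e1 : (b+s)+1 = b + (s+1) := by omega
      rw [e1]; exact hnot
    have hwin2 : factorAt w (b + s) (t.length+1) = factorAt w j' (t.length+1) := by
      rw [factorAt_eq_iff]
      intro k hk
      rcases Nat.eq_zero_or_pos k with rfl | hkp
      · simpa using hprev
      · have := factorAt_eq_iff.mp hwin (k-1) (by omega)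
        have e1 : b + s + k = b + (s+1) + (k-1) := by omega
        have e2 : j' + k = (j'+1) + (k-1) := by omega
        rw [e1, e2]; exact this
    have hcov' : ∃ b₀, b₀ ≤ j' ∧ OccT w t b₀ := by
      refine ⟨b₀, ?_, hb₀⟩
      rcases Nat.eq_or_lt_of_le hb₀j with rfl | h
      · exact absurd hb₀ hnoj
      · omega
    obtain ⟨b', hj'eq, hb', hf', hl'⟩ := ih b j' hwin2 hb
      (fun e he1 he2 => hfree e he1 (by omega)) hcov'
    refine ⟨b', by omega, hb', ?_, ?_⟩
    · intro e he1 he2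
      rcases Nat.eq_or_lt_of_le he2 with rfl | h
      · have : b' + (s+1) = j' + 1 := by omega
        rw [this]; exact hnoj
      · exact hf' e he1 (by omega)
    · intro c hc
      rcases Nat.lt_or_ge c (s + t.length + 1) with h | h
      · exact hl' c h
      · have hcl : c = s + t.length + 1 := by omega
        subst hcl
        have := factorAt_eq_iff.mp hwin t.length (by omega)
        have e1 : b + (s + t.length + 1) = b + (s+1) + t.length := by omega
        have e2 : b' + (s + t.length + 1) = (j'+1) + t.length := by omega
        rw [e1, e2]; exact this

lemma fin2_resolve : ∀ (x y c : Fin 2), x ≠ y → c ≠ y → c = x := by decide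

lemma boundary_window {t : List (Fin 2)} {p : ℕ} (hp : OccT w t p) :
    factorAt w p (t.length+1) = t ++ [w (p + t.length)] := by
  rw [factorAt_succ, hp]

lemma rev_win_eq {i n : ℕ} {u : List (Fin 2)} (hu : u.length = n) :
    ((factorAt w i n).reverse = u ↔ ∀ k, (hk : k < n) → u[k]'(by omega) = w (i + (n - 1 - k))) := by
  constructor
  · intro h k hk
    have : u[k]'(by omega) = (factorAt w i n).reverse[k]'(by simp [factorAt_length, hk]) := by
      simp [h]
    rw [this, List.getElem_reverse]
    simp only [factorAt_length]
    exact factorAt_getElem w i n (n-1-k) (by omega)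
  · intro h
    apply List.ext_getElem (by simp [factorAt_length, hu])
    intro k h1 h2
    rw [List.getElem_reverse]
    simp only [factorAt_length] at h1 ⊢
    rw [factorAt_getElem w i n (n-1-k) (by omega)]
    exact (h k (by omega)).symm


lemma occT_iff {t : List (Fin 2)} {j : ℕ} :
    OccT w t j ↔ ∀ k, (hk : k < t.length) → w (j + k) = t[k]'hk := by
  unfold OccT
  rw [show (factorAt w j t.length = t) ↔ (t = factorAt w j t.length) from eq_comm,
    list_eq_factorAt_iff rfl]
  constructor <;> intro h k hk <;> exact (h k hk).symm

lemma xty_eq_iff {t : List (Fin 2)} {x y : Fin 2} {i : ℕ} :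
    x :: (t ++ [y]) = factorAt w i (t.length+2) ↔
      (w i = x ∧ OccT w t (i+1) ∧ w (i + t.length + 1) = y) := by
  rw [list_eq_factorAt_iff (by simp)]
  constructor
  · intro h
    refine ⟨?_, occT_iff.mpr ?_, ?_⟩
    · exact (h 0 (by omega)).symm
    · intro k hk
      have h1 := h (k+1) (by omega)
      rw [List.getElem_cons_succ, List.getElem_append_left (by omega)] at h1
      rw [show i + 1 + k = i + (k+1) by omega]
      exact h1.symm
    · have h1 := h (t.length+1) (by omega)
      rw [List.getElem_cons_succ, List.getElem_concat_length rfl] at h1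
      rw [show i + t.length + 1 = i + (t.length+1) by omega]
      exact h1.symm
  · rintro ⟨h1, h2, h3⟩
    intro k hk
    rcases Nat.eq_zero_or_pos k with rfl | hkp
    · simpa using h1.symm
    · rcases Nat.lt_or_ge k (t.length+1) with hlt | hge
      · obtain ⟨k', rfl⟩ : ∃ k', k = k' + 1 := ⟨k-1, by omega⟩
        rw [List.getElem_cons_succ, List.getElem_append_left (by omega)]
        have := occT_iff.mp h2 k' (by omega)
        rw [show i + 1 + k' = i + (k'+1) by omega] at this
        exact this.symm
      · have hkl : k = t.length + 1 := by omega
        subst hkl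
        rw [List.getElem_cons_succ, List.getElem_concat_length rfl]
        rw [show i + (t.length+1) = i + t.length + 1 by omega]
        exact h3.symm

lemma xty_mem_iff {t : List (Fin 2)} {x y : Fin 2} :
    x :: (t ++ [y]) ∈ Fw w (t.length+2) ↔
      ∃ i, w i = x ∧ OccT w t (i+1) ∧ w (i + t.length + 1) = y :=
  ⟨fun ⟨i, h⟩ => ⟨i, xty_eq_iff.mp h⟩, fun ⟨i, h⟩ => ⟨i, xty_eq_iff.mpr h⟩⟩


lemma fin2_two : ∀ (x y : Fin 2), x ≠ y → ∀ c, c = x ∨ c = y := by decide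

lemma getElem_idx {u : List (Fin 2)} {k k' : ℕ} (h : k = k') (hk : k < u.length) :
    u[k]'hk = u[k']'(h ▸ hk) := by cases h; rfl

lemma replicate_of_shift {t : List (Fin 2)} {c : Fin 2} {p : ℕ}
    (h0 : OccT w t p) (h1 : OccT w t (p+1)) (hc : w (p + t.length) = c) :
    t = List.replicate t.length c := by
  rcases Nat.eq_zero_or_pos t.length with hz | hpos
  · have : t = [] := List.eq_nil_of_length_eq_zero hz
    rw [this]; simp
  · have hstep : ∀ k, (hk : k + 1 < t.length) → t[k]'(by omega) = t[k+1]'hk := by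
      intro k hk
      have e1 := occT_iff.mp h0 (k+1) hk
      have e2 := occT_iff.mp h1 k (by omega)
      rw [show p + 1 + k = p + (k+1) by omega] at e2
      exact e2.symm.trans e1
    have hend : ∀ (hb : t.length - 1 < t.length), t[t.length - 1]'hb = c := by
      intro hb
      have e := occT_iff.mp h1 (t.length - 1) (by omega)
      rw [show p + 1 + (t.length - 1) = p + t.length by omega] at e
      exact e.symm.trans hc
    have hgen : ∀ d, d < t.length → ∀ (hb : t.length - 1 - d < t.length),
        t[t.length - 1 - d]'hb = c := by
      intro d
      induction d with
      | zero => intro _ hb; exact hend hb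
      | succ d ih =>
        intro hd hb
        have prev := ih (by omega) (by omega)
        have ej : t.length - 1 - (d+1) + 1 = t.length - 1 - d := by omega
        have e := hstep (t.length - 1 - (d+1)) (by omega)
        rw [e, getElem_idx ej]
        exact prev
    apply List.ext_getElem (by simp)
    intro k hk1 hk2
    rw [List.getElem_replicate]
    have := hgen (t.length - 1 - k) (by omega) (by omega)
    rw [getElem_idx (show t.length - 1 - (t.length - 1 - k) = k by omega)] at this
    exact this

lemma corner_repl0
    (haper : ¬ ∃ p, 1 ≤ p ∧ ∃ N, ∀ i, N ≤ i → w (i + p) = w i)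
    {x₀ x₁ : Fin 2} (hne : x₀ ≠ x₁) {n : ℕ}
    (hx0t : x₀ :: List.replicate n x₀ ∈ Fw w (n+1))
    (h01 : (x₀ :: (List.replicate n x₀ ++ [x₁])) ∉ Fw w (n+2)) : False := by
  obtain ⟨i₀, hi₀⟩ := hx0t
  have hP0 : ∀ k, k ≤ n → w (i₀ + k) = x₀ := by
    intro k hk
    have h1 := (list_eq_factorAt_iff (by simp)).mp hi₀ k (by omega)
    rcases Nat.eq_zero_or_pos k with rfl | hkp
    · rw [List.getElem_cons_zero] at h1
      exact h1.symm
    · obtain ⟨k', rfl⟩ : ∃ k', k = k' + 1 := ⟨k-1, by omega⟩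
      rw [List.getElem_cons_succ, List.getElem_replicate] at h1
      exact h1.symm
  have hstep : ∀ i, (∀ k, k ≤ n → w (i + k) = x₀) → (∀ k, k ≤ n → w (i+1+k) = x₀) := by
    intro i hP
    have hwin : x₀ :: (List.replicate n x₀ ++ [w (i + n + 1)]) = factorAt w i (n+2) := by
      apply (list_eq_factorAt_iff (by simp)).mpr
      intro k hk
      rcases Nat.eq_zero_or_pos k with rfl | hkp
      · simpa using (hP 0 (by omega)).symm
      · obtain ⟨k', rfl⟩ : ∃ k', k = k'+1 := ⟨k-1, by omega⟩
        rw [List.getElem_cons_succ]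
        rcases Nat.lt_or_ge k' n with h | h
        · rw [List.getElem_append_left (by simp; omega), List.getElem_replicate]
          exact (hP (k'+1) (by omega)).symm
        · have hkn : k' = n := by omega
          rw [getElem_idx hkn, List.getElem_concat_length (by simp)]
          congr 1
          omega
    have hy : w (i + n + 1) = x₀ := by
      by_contra hyy
      rcases fin2_two x₀ x₁ hne (w (i + n + 1)) with h | h
      · exact hyy h
      · rw [h] at hwin
        exact h01 ⟨i, hwin⟩
    intro k hk
    rcases Nat.lt_or_ge k n with h | h
    · rw [show i+1+k = i + (k+1) by omega]; exact hP (k+1) (by omega)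
    · have hkn : k = n := by omega
      rw [hkn, show i+1+n = i+n+1 by omega]; exact hy
  have hall : ∀ d k, k ≤ n → w (i₀ + d + k) = x₀ := by
    intro d
    induction d with
    | zero => exact hP0
    | succ d ih =>
      have hnext := hstep (i₀ + d) ih
      intro k hk
      rw [show i₀ + (d+1) + k = i₀ + d + 1 + k by omega]
      exact hnext k hk
  apply haper
  refine ⟨1, le_rfl, i₀, fun i hi => ?_⟩
  have h1 : w (i + 1) = x₀ := by
    have := hall (i + 1 - i₀) 0 (by omega)
    rwa [show i₀ + (i + 1 - i₀) + 0 = i + 1 by omega] at this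
  have h2 : w i = x₀ := by
    have := hall (i - i₀) 0 (by omega)
    rwa [show i₀ + (i - i₀) + 0 = i by omega] at this
  rw [h1, h2]

lemma corner_repl1
    (haper : ¬ ∃ p, 1 ≤ p ∧ ∃ N, ∀ i, N ≤ i → w (i + p) = w i)
    (hcomp : ∀ m, 1 ≤ m → (Fw w m).ncard = m + 1)
    {x₀ x₁ : Fin 2} (hne : x₀ ≠ x₁) {n : ℕ}
    (hx1t : x₁ :: List.replicate n x₁ ∈ Fw w (n+1))
    (h01 : (x₀ :: (List.replicate n x₁ ++ [x₁])) ∉ Fw w (n+2)) : False := by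
  have hstep : ∀ i, (∀ k, k ≤ n → w (i + 1 + k) = x₁) → (∀ k, k ≤ n → w (i + k) = x₁) := by
    intro i hQ
    have hwin : w i :: (List.replicate n x₁ ++ [x₁]) = factorAt w i (n+2) := by
      apply (list_eq_factorAt_iff (by simp)).mpr
      intro k hk
      rcases Nat.eq_zero_or_pos k with rfl | hkp
      · simp
      · obtain ⟨k', rfl⟩ : ∃ k', k = k'+1 := ⟨k-1, by omega⟩
        rw [List.getElem_cons_succ]
        rcases Nat.lt_or_ge k' n with h | h
        · rw [List.getElem_append_left (by simp; omega), List.getElem_replicate,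
            show i + (k'+1) = i + 1 + k' by omega]
          exact (hQ k' (by omega)).symm
        · have hkn : k' = n := by omega
          rw [getElem_idx hkn, List.getElem_concat_length (by simp),
            show i + (k'+1) = i + 1 + k' by omega, hkn]
          exact (hQ n le_rfl).symm
    have hwi : w i = x₁ := by
      by_contra hwi
      rcases fin2_two x₀ x₁ hne (w i) with h | h
      · rw [h] at hwin
        exact h01 ⟨i, hwin⟩
      · exact hwi h
    intro k hk
    rcases Nat.eq_zero_or_pos k with rfl | hkp
    · simpa using hwi
    · rw [show i + k = i + 1 + (k-1) by omega]
      exact hQ (k-1) (by omega)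
  have hQwin : ∀ i, x₁ :: List.replicate n x₁ = factorAt w i (n+1) →
      (∀ k, k ≤ n → w (i + k) = x₁) := by
    intro i hi k hk
    have h1 := (list_eq_factorAt_iff (by simp)).mp hi k (by omega)
    rcases Nat.eq_zero_or_pos k with rfl | hkp
    · rw [List.getElem_cons_zero] at h1
      exact h1.symm
    · obtain ⟨k', rfl⟩ : ∃ k', k = k' + 1 := ⟨k-1, by omega⟩
      rw [List.getElem_cons_succ, List.getElem_replicate] at h1
      exact h1.symm
  have hdown : ∀ i, (∀ k, k ≤ n → w (i + k) = x₁) → ∀ d, d ≤ i →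
      (∀ k, k ≤ n → w ((i - d) + k) = x₁) := by
    intro i hQ d
    induction d with
    | zero => intro _; simpa using hQ
    | succ d ih =>
      intro hd
      have hQd := ih (by omega)
      have heq : i - d = (i - (d+1)) + 1 := by omega
      rw [heq] at hQd
      exact hstep _ hQd
  have hax : ∀ j, w j = x₁ := by
    intro j
    obtain ⟨i, hij, hOi⟩ := recur haper hcomp hx1t j
    have := hdown i (hQwin i hOi) (i - j) (by omega) 0 (by omega)
    rwa [show i - (i - j) + 0 = j by omega] at this
  apply haper
  exact ⟨1, le_rfl, 0, fun i _ => by rw [hax (i+1), hax i]⟩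

lemma endgame
    (haper : ¬ ∃ p, 1 ≤ p ∧ ∃ N, ∀ i, N ≤ i → w (i + p) = w i)
    (hcomp : ∀ m, 1 ≤ m → (Fw w m).ncard = m + 1)
    {x₀ x₁ : Fin 2} (hne : x₀ ≠ x₁) {t : List (Fin 2)}
    (hpal : t.reverse = t)
    (h00 : x₀ :: (t ++ [x₀]) ∈ Fw w (t.length+2))
    (h11 : x₁ :: (t ++ [x₁]) ∈ Fw w (t.length+2))
    (h01 : x₀ :: (t ++ [x₁]) ∉ Fw w (t.length+2))
    (hC : ∀ u ∈ Fw w (t.length+1), u.reverse ∈ Fw w (t.length+1)) :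
    False := by
  classical
  have h00' : (x₀ :: (t ++ [x₀])).dropLast = x₀ :: t := by
    rw [show x₀ :: (t ++ [x₀]) = (x₀ :: t) ++ [x₀] by simp, List.dropLast_concat]
  have h11' : (x₁ :: (t ++ [x₁])).dropLast = x₁ :: t := by
    rw [show x₁ :: (t ++ [x₁]) = (x₁ :: t) ++ [x₁] by simp, List.dropLast_concat]
  have hx0t : (x₀ :: t) ∈ Fw w (t.length+1) := by
    have := Fw_dropLast (w := w) (n := t.length+1) h00
    rwa [h00'] at this
  have hx1t : (x₁ :: t) ∈ Fw w (t.length+1) := by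
    have := Fw_dropLast (w := w) (n := t.length+1) h11
    rwa [h11'] at this
  have htx0 : (t ++ [x₀]) ∈ Fw w (t.length+1) := by
    have := Fw_tail (w := w) (n := t.length+1) h00
    simpa using this
  have htx1 : (t ++ [x₁]) ∈ Fw w (t.length+1) := by
    have := Fw_tail (w := w) (n := t.length+1) h11
    simpa using this
  have htF : t ∈ Fw w t.length := by
    have := Fw_dropLast (w := w) (n := t.length) htx0
    rwa [List.dropLast_concat] at this
  have htRS : IsRS w t.length t := by
    constructor
    · rcases fin2_two x₀ x₁ hne 0 with h | h
      · rw [h]; exact htx0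
      · rw [h]; exact htx1
    · rcases fin2_two x₀ x₁ hne 1 with h | h
      · rw [h]; exact htx0
      · rw [h]; exact htx1
  have htLS : IsLS w t.length t := by
    constructor
    · rcases fin2_two x₀ x₁ hne 0 with h | h
      · rw [h]; exact hx0t
      · rw [h]; exact hx1t
    · rcases fin2_two x₀ x₁ hne 1 with h | h
      · rw [h]; exact hx0t
      · rw [h]; exact hx1t
  obtain ⟨ρ, hρRS, hρu⟩ := RS_unique hcomp t.length
  obtain ⟨lam, hlamLS, hlamu⟩ := LS_unique haper hcomp t.length
  have hRSu : ∀ z', IsRS w t.length z' → z' = t := by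
    intro z' h; rw [hρu z' h, ← hρu t htRS]
  have hLSu : ∀ z', IsLS w t.length z' → z' = t := by
    intro z' h; rw [hlamu z' h, ← hlamu t htLS]
  have hrecT : ∀ N, ∃ j, N ≤ j ∧ OccT w t j := by
    intro N
    obtain ⟨j, hj1, hj2⟩ := recur haper hcomp htF N
    exact ⟨j, hj1, hj2.symm⟩
  have corner0 : t = List.replicate t.length x₀ → False := by
    intro hrep
    apply corner_repl0 (w := w) haper hne (n := t.length)
    · have h := hx0t
      rw [hrep] at h
      simpa using h
    · intro hmem
      apply h01
      rw [hrep]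
      simpa using hmem
  have corner1 : t = List.replicate t.length x₁ → False := by
    intro hrep
    apply corner_repl1 (w := w) haper hcomp hne (n := t.length)
    · have h := hx1t
      rw [hrep] at h
      simpa using h
    · intro hmem
      apply h01
      rw [hrep]
      simpa using hmem
  -- the two boundary types
  obtain ⟨ip, hip1, hp₀, hip3⟩ := xty_mem_iff.mp h00
  obtain ⟨iq, hiq1, hq₀, hiq3⟩ := xty_mem_iff.mp h11
  have hχp : w ((ip+1) + t.length) = x₀ := by
    rw [show ip + 1 + t.length = ip + t.length + 1 by omega]; exact hip3
  have hχq : w ((iq+1) + t.length) = x₁ := by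
    rw [show iq + 1 + t.length = iq + t.length + 1 by omega]; exact hiq3
  -- return structure
  have hret : ∀ B, OccT w t B → ∃ d, (1 ≤ d ∧ OccT w t (B + d)) ∧
      ∀ e, 1 ≤ e → e < d → ¬ OccT w t (B + e) := by
    intro B hB
    obtain ⟨j, hj1, hj2⟩ := hrecT (B+1)
    have hex : ∃ d, 1 ≤ d ∧ OccT w t (B + d) :=
      ⟨j - B, by omega, by rw [show B + (j - B) = j by omega]; exact hj2⟩
    refine ⟨Nat.find hex, Nat.find_spec hex, ?_⟩
    intro e he1 he2 hocc
    exact Nat.find_min hex he2 ⟨he1, hocc⟩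
  obtain ⟨gA, ⟨hg1, hgocc⟩, hgfree⟩ := hret (ip+1) hp₀
  obtain ⟨gB, ⟨hh1, hhocc⟩, hhfree⟩ := hret (iq+1) hq₀
  obtain ⟨g', rfl⟩ : ∃ g', gA = g' + 1 := ⟨gA - 1, by omega⟩
  obtain ⟨h', rfl⟩ : ∃ h', gB = h' + 1 := ⟨gB - 1, by omega⟩
  -- uniformity between same-typed boundaries
  have huni : ∀ B B', OccT w t B → OccT w t B' → w (B + t.length) = w (B' + t.length) →
      ∀ d, 1 ≤ d → OccT w t (B + d) → (∀ e, 1 ≤ e → e < d → ¬ OccT w t (B + e)) →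
      (OccT w t (B' + d) ∧ (∀ e, 1 ≤ e → e < d → ¬ OccT w t (B' + e)) ∧
        ∀ c, c < d + t.length → w (B + c) = w (B' + c)) := by
    intro B B' hB hB' hχ d hd ho hf
    apply same_ret hRSu d B B' hd ?_ ho hf
    rw [boundary_window hB, boundary_window hB', hχ]
  -- g' ≥ 1 and h' ≥ 1 (else corner)
  have hg'pos : 1 ≤ g' := by
    by_contra hg0
    have hg0' : g' = 0 := by omega
    subst hg0'
    exact corner0 (replicate_of_shift hp₀ (by simpa using hgocc) hχp)
  have hh'pos : 1 ≤ h' := by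
    by_contra hh0
    have hh0' : h' = 0 := by omega
    subst hh0'
    exact corner1 (replicate_of_shift hq₀ (by simpa using hhocc) hχq)
  -- K4 : the last letter of the x₀-block is x₁
  have halpha : w ((ip+1) + g') = x₁ := by
    rcases fin2_two x₀ x₁ hne (w ((ip+1) + g')) with hA | hA
    swap
    · exact hA
    exfalso
    have hkey : ∀ B, OccT w t B → w (B + t.length) = x₀ →
        OccT w t (B + (g'+1)) ∧ w ((B + (g'+1)) + t.length) = x₀ := by
      intro B hB hχB
      obtain ⟨hocc', hfree', hlet'⟩ := huni (ip+1) B hp₀ hB (by rw [hχp, hχB])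
        (g'+1) (by omega) hgocc hgfree
      refine ⟨hocc', ?_⟩
      have hwB : w (B + g') = x₀ := by
        have := hlet' g' (by omega)
        rw [← this]; exact hA
      have hOcc1 : OccT w t (B + g' + 1) := by
        rw [show B + g' + 1 = B + (g'+1) by omega]; exact hocc'
      have hmem : x₀ :: (t ++ [w (B + g' + t.length + 1)]) ∈ Fw w (t.length+2) :=
        ⟨B + g', xty_eq_iff.mpr ⟨hwB, hOcc1, rfl⟩⟩
      have hval : w (B + g' + t.length + 1) = x₀ := by
        rcases fin2_two x₀ x₁ hne (w (B + g' + t.length + 1)) with hc | hc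
        · exact hc
        · rw [hc] at hmem; exact absurd hmem h01
      rw [show (B + (g'+1)) + t.length = B + g' + t.length + 1 by omega]
      exact hval
    have hchain : ∀ m, OccT w t ((ip+1) + m*(g'+1)) ∧
        w (((ip+1) + m*(g'+1)) + t.length) = x₀ := by
      intro m
      induction m with
      | zero => simpa using ⟨hp₀, hχp⟩
      | succ m ih =>
        have hk := hkey _ ih.1 ih.2
        have e : (ip+1) + (m+1)*(g'+1) = ((ip+1) + m*(g'+1)) + (g'+1) := by ring
        rw [e]
        exact hk
    apply haper
    refine ⟨g'+1, by omega, ip+1, fun i hi => ?_⟩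
    have hdm : (i - (ip+1)) / (g'+1) * (g'+1) + (i - (ip+1)) % (g'+1) = i - (ip+1) := by
      rw [Nat.mul_comm]; exact Nat.div_add_mod _ _
    have hmul : ((i - (ip+1)) / (g'+1) + 1) * (g'+1)
        = (i - (ip+1)) / (g'+1) * (g'+1) + (g'+1) := by ring
    have hmod : (i - (ip+1)) % (g'+1) < g'+1 := Nat.mod_lt _ (by omega)
    obtain ⟨hBm, hχm⟩ := hchain ((i - (ip+1)) / (g'+1))
    obtain ⟨hBm1, hχm1⟩ := hchain ((i - (ip+1)) / (g'+1) + 1)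
    have hl1 := (huni (ip+1) _ hp₀ hBm (by rw [hχp, hχm]) (g'+1) (by omega) hgocc hgfree).2.2
    have hl2 := (huni (ip+1) _ hp₀ hBm1 (by rw [hχp, hχm1]) (g'+1) (by omega) hgocc hgfree).2.2
    have e1 := hl1 ((i - (ip+1)) % (g'+1)) (by omega)
    have e2 := hl2 ((i - (ip+1)) % (g'+1)) (by omega)
    have p1 : (ip+1) + (i - (ip+1)) / (g'+1) * (g'+1) + (i - (ip+1)) % (g'+1) = i := by
      omega
    have p2 : (ip+1) + ((i - (ip+1)) / (g'+1) + 1) * (g'+1) + (i - (ip+1)) % (g'+1)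
        = i + (g'+1) := by
      rw [hmul]; omega
    rw [show (ip+1) + (i - (ip+1)) / (g'+1) * (g'+1) + (i - (ip+1)) % (g'+1)
      = (ip+1) + (i - (ip+1)) / (g'+1) * (g'+1) + (i - (ip+1)) % (g'+1) from rfl] at e1
    -- e1 : w ((ip+1) + r) = w (((ip+1) + m*(q)) + r), with m*(q) etc.
    rw [show ((ip+1) + (i - (ip+1)) / (g'+1) * (g'+1)) + (i - (ip+1)) % (g'+1) = i by omega] at e1
    rw [show ((ip+1) + ((i - (ip+1)) / (g'+1) + 1) * (g'+1)) + (i - (ip+1)) % (g'+1)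
      = i + (g'+1) by rw [hmul]; omega] at e2
    rw [← e1, ← e2]
  -- β : the last letter of the x₁-block is x₀
  have hbeta : w ((iq+1) + h') = x₀ := by
    rcases fin2_two x₀ x₁ hne (w ((iq+1) + h')) with hY | hY
    · exact hY
    exfalso
    -- occurrence of x₀ :: t at a large position
    obtain ⟨j, hjN, hjw⟩ := recur haper hcomp hx0t ((iq+1)+1)
    have hwj : w j = x₀ := by
      have := (list_eq_factorAt_iff (by simp)).mp hjw 0 (by omega)
      rw [List.getElem_cons_zero] at this
      simpa using this.symm
    have hOj1 : OccT w t (j+1) := by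
      apply occT_iff.mpr
      intro k hk
      have h1 := (list_eq_factorAt_iff (by simp)).mp hjw (k+1) (by omega)
      rw [List.getElem_cons_succ] at h1
      rw [show j+1+k = j + (k+1) by omega]
      exact h1.symm
    -- previous boundary
    have hBex : ∃ B, B ≤ j ∧ OccT w t B ∧ ∀ e, B < e → e ≤ j → ¬ OccT w t e := by
      refine ⟨Nat.findGreatest (fun e => OccT w t e) j, Nat.findGreatest_le _, ?_, ?_⟩
      · exact Nat.findGreatest_spec (m := iq+1) (by omega) hq₀
      · intro e he1 he2 hocc
        have := Nat.le_findGreatest (P := fun e => OccT w t e) he2 hocc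
        omega
    obtain ⟨B, hBle, hBocc, hBmax⟩ := hBex
    have hdocc : OccT w t (B + (j + 1 - B)) := by
      rw [show B + (j+1-B) = j+1 by omega]; exact hOj1
    have hdfree : ∀ e, 1 ≤ e → e < j+1-B → ¬ OccT w t (B + e) :=
      fun e he1 he2 => hBmax (B+e) (by omega) (by omega)
    rcases fin2_two x₀ x₁ hne (w (B + t.length)) with hχB | hχB
    · obtain ⟨ho2, hf2, hl2⟩ := huni (ip+1) B hp₀ hBocc (by rw [hχp, hχB])
        (g'+1) (by omega) hgocc hgfree
      have hdeq : j + 1 - B = g' + 1 := by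
        rcases lt_trichotomy (j+1-B) (g'+1) with hlt | heq | hgt
        · exact absurd hdocc (hf2 (j+1-B) (by omega) hlt)
        · exact heq
        · exact absurd ho2 (hdfree (g'+1) (by omega) hgt)
      have hlet := hl2 g' (by omega)
      -- w ((ip+1)+g') = w (B + g'), and B + g' = j
      rw [halpha] at hlet
      rw [show B + g' = j by omega] at hlet
      rw [hwj] at hlet
      exact hne hlet.symm
    · obtain ⟨ho2, hf2, hl2⟩ := huni (iq+1) B hq₀ hBocc (by rw [hχq, hχB])
        (h'+1) (by omega) hhocc hhfree
      have hdeq : j + 1 - B = h' + 1 := by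
        rcases lt_trichotomy (j+1-B) (h'+1) with hlt | heq | hgt
        · exact absurd hdocc (hf2 (j+1-B) (by omega) hlt)
        · exact heq
        · exact absurd ho2 (hdfree (h'+1) (by omega) hgt)
      have hlet := hl2 h' (by omega)
      rw [hY] at hlet
      rw [show B + h' = j by omega] at hlet
      rw [hwj] at hlet
      exact hne hlet.symm
  -- the reversal chain
  have hwinp : factorAt w (ip+1) (t.length+1) = t ++ [x₀] := by
    rw [boundary_window hp₀, hχp]
  have hwinq : factorAt w (iq+1) (t.length+1) = t ++ [x₁] := by
    rw [boundary_window hq₀, hχq]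
  have hchain : ∀ s, s ≤ g' → s ≤ h' ∧
      (factorAt w ((ip+1)+s) (t.length+1)).reverse
        = factorAt w ((iq+1) + (h' - s)) (t.length+1) := by
    intro s
    induction s with
    | zero =>
      intro _
      constructor
      · omega
      · have hrev : (factorAt w ((ip+1)+0) (t.length+1)).reverse = x₀ :: t := by
          rw [show (ip+1)+0 = ip+1 by omega, hwinp]
          simp [hpal]
        rw [hrev]
        have : x₀ :: t = factorAt w ((iq+1) + (h' - 0)) (t.length+1) := by
          apply (list_eq_factorAt_iff (by simp)).mpr
          intro k hk
          rcases Nat.eq_zero_or_pos k with rfl | hkp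
          · rw [List.getElem_cons_zero]
            rw [show (iq+1) + (h' - 0) + 0 = (iq+1) + h' by omega, hbeta]
          · obtain ⟨k', rfl⟩ : ∃ k', k = k' + 1 := ⟨k-1, by omega⟩
            rw [List.getElem_cons_succ]
            have hocc2 : OccT w t ((iq+1)+(h'+1)) := hhocc
            have := occT_iff.mp hocc2 k' (by omega)
            rw [show (iq+1) + (h'-0) + (k'+1) = (iq+1)+(h'+1) + k' by omega]
            exact this.symm
        exact this
    | succ s ih =>
      intro hs1
      obtain ⟨hsh, hInv⟩ := ih (by omega)
      -- first, s < h'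
      have hslt : s < h' := by
        rcases Nat.lt_or_ge s h' with h | h
        · exact h
        · exfalso
          rw [show h' - s = 0 by omega] at hInv
          rw [show (iq+1) + 0 = iq + 1 by omega, hwinq] at hInv
          have hXs : factorAt w ((ip+1)+s) (t.length+1) = x₁ :: t := by
            have := congrArg List.reverse hInv
            rw [List.reverse_reverse] at this
            rw [this]
            simp [hpal]
          have hOccInt : OccT w t ((ip+1) + (s+1)) := by
            apply occT_iff.mpr
            intro k hk
            have h1 := (list_eq_factorAt_iff (w := w) (i := (ip+1)+s) (by simp)).mp
              hXs.symm (k+1) (by omega)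
            rw [List.getElem_cons_succ] at h1
            rw [show (ip+1) + (s+1) + k = (ip+1)+s + (k+1) by omega]
            exact h1.symm
          exact hgfree (s+1) (by omega) (by omega) hOccInt
      -- k := h' - s ≥ 1; interior of the q-block: no occurrence at (iq+1)+(h'-s)
      have hNoOcc : ¬ OccT w t ((iq+1) + (h' - s)) := by
        apply hhfree (h' - s) (by omega) (by omega)
      -- rev X_{s+1} = c :: z where z = factorAt w ((iq+1)+(h'-s)) t.length
      have hInvLet : ∀ e, (he : e < t.length + 1) →
          w ((iq+1) + (h'-s) + e) = w ((ip+1) + s + (t.length - e)) := by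
        intro e he
        have h1 := (rev_win_eq (by simp [factorAt_length])).mp hInv e he
        have h2 := factorAt_getElem w ((iq+1) + (h'-s)) (t.length+1) e he
        rw [h2] at h1
        rw [h1]
        congr 1 <;> omega
      have hrevform : (factorAt w ((ip+1)+(s+1)) (t.length+1)).reverse
          = w ((ip+1) + (s+1) + t.length) :: factorAt w ((iq+1) + (h'-s)) t.length := by
        apply (rev_win_eq (by simp [factorAt_length])).mpr
        intro e he
        rcases Nat.eq_zero_or_pos e with rfl | hep
        · rw [List.getElem_cons_zero]
          congr 1 <;> omega
        · obtain ⟨e', rfl⟩ : ∃ e', e = e' + 1 := ⟨e-1, by omega⟩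
          rw [List.getElem_cons_succ, factorAt_getElem w _ t.length e' (by omega)]
          have := hInvLet e' (by omega)
          rw [this]
          congr 1 <;> omega
      -- memberships as left extensions of z
      have hz : factorAt w ((iq+1) + (h'-s)) t.length ≠ t := hNoOcc
      have hzLS : ¬ IsLS w t.length (factorAt w ((iq+1) + (h'-s)) t.length) := by
        intro hLS
        exact hz (hLSu _ hLS)
      have hm1 : w ((ip+1) + (s+1) + t.length) :: factorAt w ((iq+1) + (h'-s)) t.length
          ∈ Fw w (t.length+1) := by
        rw [← hrevform]
        exact hC _ (win_mem w ((ip+1)+(s+1)) (t.length+1))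
      have hm2 : w ((iq+1) + (h'-s-1)) :: factorAt w ((iq+1) + (h'-s)) t.length
          ∈ Fw w (t.length+1) := by
        have : factorAt w ((iq+1) + (h'-s-1)) (t.length+1)
            = w ((iq+1) + (h'-s-1)) :: factorAt w ((iq+1) + (h'-s-1) + 1) t.length :=
          factorAt_cons w _ t.length
        rw [show (iq+1) + (h'-s-1) + 1 = (iq+1) + (h'-s) by omega] at this
        rw [← this]
        exact win_mem w _ _
      have hcc := left_ext_unique hzLS hm1 hm2
      constructor
      · omega
      · rw [hrevform, hcc]
        have e1 : factorAt w ((iq+1) + (h'-(s+1))) (t.length+1)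
            = w ((iq+1) + (h'-s-1)) :: factorAt w ((iq+1) + (h'-s)) t.length := by
          rw [show (iq+1) + (h'-(s+1)) = (iq+1) + (h'-s-1) by omega]
          rw [factorAt_cons]
          rw [show (iq+1) + (h'-s-1) + 1 = (iq+1) + (h'-s) by omega]
        rw [e1]
  -- chain termination: h' = g'
  obtain ⟨hgh', hInvg⟩ := hchain g' le_rfl
  have hXg : factorAt w ((ip+1)+g') (t.length+1) = x₁ :: t := by
    have hx : x₁ :: t = factorAt w ((ip+1)+g') (t.length+1) := by
      apply (list_eq_factorAt_iff (by simp)).mpr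
      intro k hk
      rcases Nat.eq_zero_or_pos k with rfl | hkp
      · rw [List.getElem_cons_zero, show (ip+1)+g'+0 = (ip+1)+g' by omega, halpha]
      · obtain ⟨k', rfl⟩ : ∃ k', k = k' + 1 := ⟨k-1, by omega⟩
        rw [List.getElem_cons_succ]
        have := occT_iff.mp hgocc k' (by omega)
        rw [show (ip+1) + g' + (k'+1) = (ip+1)+(g'+1) + k' by omega]
        exact this.symm
    exact hx.symm
  have hq_eq : factorAt w ((iq+1) + (h'-g')) (t.length+1) = t ++ [x₁] := by
    rw [← hInvg, hXg]
    simp [hpal]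
  have hOccq : OccT w t ((iq+1) + (h'-g')) := by
    apply occT_iff.mpr
    intro k hk
    have h1 := (list_eq_factorAt_iff (by simp)).mp hq_eq.symm k (by omega)
    rw [List.getElem_append_left (by omega)] at h1
    exact h1.symm
  have hgh : h' = g' := by
    by_contra hne2
    exact hhfree (h'-g') (by omega) (by omega) hOccq
  -- distinctness of the loop windows
  have hdistinct : ∀ s s', s < g'+1 → s' < h'+1 →
      factorAt w ((ip+1)+s) (t.length+1) = factorAt w ((iq+1)+s') (t.length+1) → False := by
    intro s s' hs hs' heq
    obtain ⟨b', hb'j, hb'occ, hb'free, hb'let⟩ := same_prv hLSu s (ip+1) ((iq+1)+s') heq hp₀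
      (fun e he1 he2 => hgfree e he1 (by omega)) ⟨iq+1, by omega, hq₀⟩
    rcases lt_trichotomy b' (iq+1) with hlt | heqb | hgt
    · exact hb'free ((iq+1)-b') (by omega) (by omega)
        (by rw [show b' + ((iq+1)-b') = iq+1 by omega]; exact hq₀)
    · have hl := hb'let t.length (by omega)
      rw [heqb] at hl
      rw [hχp, hχq] at hl
      exact hne hl
    · exact hhfree (b'-(iq+1)) (by omega) (by omega)
        (by rw [show (iq+1) + (b'-(iq+1)) = b' by omega]; exact hb'occ)
  have hinjA : ∀ s s', s < g'+1 → s' < g'+1 →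
      factorAt w ((ip+1)+s) (t.length+1) = factorAt w ((ip+1)+s') (t.length+1) → s = s' := by
    intro s s' hs hs' heq
    obtain ⟨b', hb'j, hb'occ, hb'free, hb'let⟩ := same_prv hLSu s (ip+1) ((ip+1)+s') heq hp₀
      (fun e he1 he2 => hgfree e he1 (by omega)) ⟨ip+1, by omega, hp₀⟩
    rcases lt_trichotomy b' (ip+1) with hlt | heqb | hgt
    · exfalso
      exact hb'free ((ip+1)-b') (by omega) (by omega)
        (by rw [show b' + ((ip+1)-b') = ip+1 by omega]; exact hp₀)
    · omega
    · exfalso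
      exact hgfree (b'-(ip+1)) (by omega) (by omega)
        (by rw [show (ip+1) + (b'-(ip+1)) = b' by omega]; exact hb'occ)
  have hinjB : ∀ s s', s < h'+1 → s' < h'+1 →
      factorAt w ((iq+1)+s) (t.length+1) = factorAt w ((iq+1)+s') (t.length+1) → s = s' := by
    intro s s' hs hs' heq
    obtain ⟨b', hb'j, hb'occ, hb'free, hb'let⟩ := same_prv hLSu s (iq+1) ((iq+1)+s') heq hq₀
      (fun e he1 he2 => hhfree e he1 (by omega)) ⟨iq+1, by omega, hq₀⟩
    rcases lt_trichotomy b' (iq+1) with hlt | heqb | hgt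
    · exfalso
      exact hb'free ((iq+1)-b') (by omega) (by omega)
        (by rw [show b' + ((iq+1)-b') = iq+1 by omega]; exact hq₀)
    · omega
    · exfalso
      exact hhfree (b'-(iq+1)) (by omega) (by omega)
        (by rw [show (iq+1) + (b'-(iq+1)) = b' by omega]; exact hb'occ)
  -- cardinality bound: (g'+1) + (h'+1) ≤ t.length + 2
  have hcard : (g'+1) + (h'+1) ≤ t.length + 2 := by
    set A := (Finset.range (g'+1)).image (fun s => factorAt w ((ip+1)+s) (t.length+1)) with hA
    set B := (Finset.range (h'+1)).image (fun s => factorAt w ((iq+1)+s) (t.length+1)) with hB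
    have hsub : A ∪ B ⊆ FwF w (t.length+1) := by
      intro u hu
      rcases Finset.mem_union.mp hu with hu | hu <;>
      · obtain ⟨s, _, rfl⟩ := Finset.mem_image.mp hu
        exact mem_FwF.mpr (win_mem _ _ _)
    have h1 : A.card = g'+1 := by
      rw [hA, Finset.card_image_of_injOn, Finset.card_range]
      intro s hs s' hs' heq
      exact hinjA s s' (Finset.mem_range.mp hs) (Finset.mem_range.mp hs') heq
    have h2 : B.card = h'+1 := by
      rw [hB, Finset.card_image_of_injOn, Finset.card_range]
      intro s hs s' hs' heq
      exact hinjB s s' (Finset.mem_range.mp hs) (Finset.mem_range.mp hs') heq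
    have hdisj : Disjoint A B := by
      rw [Finset.disjoint_left]
      intro u huA huB
      obtain ⟨s, hs, rfl⟩ := Finset.mem_image.mp huA
      obtain ⟨s', hs', heq⟩ := Finset.mem_image.mp huB
      exact hdistinct s s' (Finset.mem_range.mp hs) (Finset.mem_range.mp hs') heq.symm
    calc (g'+1) + (h'+1) = A.card + B.card := by rw [h1, h2]
    _ = (A ∪ B).card := (Finset.card_union_of_disjoint hdisj).symm
    _ ≤ (FwF w (t.length+1)).card := Finset.card_le_card hsub
    _ = t.length + 2 := cardFwF hcomp (t.length+1)
  have hgle : g' + 1 ≤ t.length := by omega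
  -- finale
  have ht0 : t[t.length - (g'+1)]'(by omega) = x₀ := by
    have h1 := occT_iff.mp hgocc (t.length - (g'+1)) (by omega)
    rw [show (ip+1) + (g'+1) + (t.length - (g'+1)) = (ip+1) + t.length by omega] at h1
    exact h1.symm.trans hχp
  have ht1 : t[t.length - (h'+1)]'(by omega) = x₁ := by
    have h1 := occT_iff.mp hhocc (t.length - (h'+1)) (by omega)
    rw [show (iq+1) + (h'+1) + (t.length - (h'+1)) = (iq+1) + t.length by omega] at h1
    exact h1.symm.trans hχq
  rw [getElem_idx (show t.length - (h'+1) = t.length - (g'+1) by omega)] at ht1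
  exact hne (ht0.symm.trans ht1)

/-- a two-sided extension of a non-bispecial factor is determined -/
lemma nonspecial_fill
    (haper : ¬ ∃ p, 1 ≤ p ∧ ∃ N, ∀ i, N ≤ i → w (i + p) = w i)
    (hcomp : ∀ m, 1 ≤ m → (Fw w m).ncard = m + 1)
    {n : ℕ} {z : List (Fin 2)} (hz : ¬ IsRS w n z ∨ ¬ IsLS w n z)
    {x y : Fin 2} (hxz : x :: z ∈ Fw w (n+1)) (hzy : z ++ [y] ∈ Fw w (n+1)) :
    x :: (z ++ [y]) ∈ Fw w (n+2) := by
  have hzlen : z.length = n := by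
    have := Fw_length hzy; simp at this; omega
  rcases hz with hz | hz
  · -- not right special : extend an occurrence of x :: z to the right
    obtain ⟨j, hj⟩ := hxz
    have hwj : factorAt w j (n+2) = (x :: z) ++ [w (j + (n+1))] := by
      rw [show n + 2 = (n+1)+1 from rfl, factorAt_succ, ← hj]
    have hmem2 : (x :: z) ++ [w (j + (n+1))] ∈ Fw w (n+2) := by
      rw [← hwj]; exact win_mem w j (n+2)
    have hz' : z ++ [w (j + (n+1))] ∈ Fw w (n+1) := by
      have := Fw_tail (w := w) (n := n+1) hmem2
      simpa using this
    have hyy := ext_unique hz hzy hz'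
    rw [hyy]
    simpa using hmem2
  · -- not left special : extend an occurrence of z ++ [y] to the left
    obtain ⟨j, hjN, hj⟩ := recur haper hcomp hzy 1
    obtain ⟨j', rfl⟩ : ∃ j', j = j' + 1 := ⟨j - 1, by omega⟩
    have hwj : factorAt w j' (n+2) = w j' :: (z ++ [y]) := by
      rw [show n + 2 = (n+1)+1 from rfl, factorAt_cons, ← hj]
    have hmem2 : w j' :: (z ++ [y]) ∈ Fw w (n+2) := by
      rw [← hwj]; exact win_mem w j' (n+2)
    have hz' : w j' :: z ∈ Fw w (n+1) := by
      have := Fw_dropLast (w := w) (n := n+1) hmem2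
      rw [show w j' :: (z ++ [y]) = (w j' :: z) ++ [y] by simp, List.dropLast_concat] at this
      exact this
    have hxx := left_ext_unique hz hxz hz'
    rw [hxx]
    exact hmem2

theorem Crev
    (haper : ¬ ∃ p, 1 ≤ p ∧ ∃ N, ∀ i, N ≤ i → w (i + p) = w i)
    (hcomp : ∀ m, 1 ≤ m → (Fw w m).ncard = m + 1) :
    ∀ k, ∀ u ∈ Fw w k, u.reverse ∈ Fw w k := by
  intro k
  induction k using Nat.strong_induction_on with
  | _ k IH =>
  match k with
  | 0 => intro u hu; rw [Fw_zero] at hu ⊢; simp_all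
  | 1 =>
    rintro u ⟨i, rfl⟩
    have h1 : factorAt w i 1 = [w i] := by
      simp [factorAt, List.range_succ]
    rw [h1]
    exact ⟨i, h1.symm⟩
  | 2 =>
    rintro u ⟨i, rfl⟩
    have hform : factorAt w i 2 = [w i, w (i+1)] := by
      simp [factorAt, List.range_succ]
    rw [hform]
    by_cases heq : w i = w (i+1)
    · have hr : [w i, w (i+1)].reverse = [w (i+1), w i] := by simp
      rw [hr]
      exact ⟨i, by rw [hform, heq]⟩
    · have hr : [w i, w (i+1)].reverse = [w (i+1), w i] := by simp
      rw [hr]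
      by_contra hno
      -- propagate: w j = w (i+1) → w (j+1) = w (i+1)
      have hprop : ∀ j, w j = w (i+1) → w (j+1) = w (i+1) := by
        intro j hj
        by_contra hj1
        apply hno
        have hformj : factorAt w j 2 = [w j, w (j+1)] := by
          simp [factorAt, List.range_succ]
        have hw1 : w (j+1) = w i := by
          rcases fin2_two (w i) (w (i+1)) heq (w (j+1)) with h | h
          · exact h
          · exact absurd h hj1
        exact ⟨j, by rw [hformj, hj, hw1]⟩
      have hall : ∀ d, w (i + 1 + d) = w (i+1) := by
        intro d
        induction d with
        | zero => rfl
        | succ d ih =>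
          have := hprop (i+1+d) ih
          rwa [show i+1+(d+1) = (i+1+d)+1 by omega]
      apply haper
      refine ⟨1, le_rfl, i+1, fun j hj => ?_⟩
      have h1 := hall (j - (i+1))
      have h2 := hall (j + 1 - (i+1))
      rw [show i + 1 + (j - (i+1)) = j by omega] at h1
      rw [show i + 1 + (j + 1 - (i+1)) = j + 1 by omega] at h2
      rw [h1, h2]
  | (n+3) =>
    rintro u ⟨i, rfl⟩
    -- decompose the window
    have hz : factorAt w (i+1) (n+1) ∈ Fw w (n+1) := win_mem w (i+1) (n+1)
    set z := factorAt w (i+1) (n+1) with hzdef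
    have hzlen : z.length = n+1 := factorAt_length w (i+1) (n+1)
    have hu_eq : factorAt w i (n+3) = w i :: (z ++ [w (i + (n+2))]) := by
      rw [show n+3 = (n+2)+1 from rfl, factorAt_cons, show n+2 = (n+1)+1 from rfl,
        factorAt_succ, ← hzdef]
      rw [show i + 1 + (n+1) = i + (n+2) by omega]
    have hxz : w i :: z ∈ Fw w (n+2) := by
      have := Fw_dropLast (w := w) (n := n+2) (u := factorAt w i (n+3))
        (win_mem w i (n+3))
      rw [hu_eq, show w i :: (z ++ [w (i+(n+2))]) = (w i :: z) ++ [w (i+(n+2))] by simp,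
        List.dropLast_concat] at this
      exact this
    have hzy : z ++ [w (i + (n+2))] ∈ Fw w (n+2) := by
      have := Fw_tail (w := w) (n := n+2) (u := factorAt w i (n+3))
        (win_mem w i (n+3))
      rw [hu_eq] at this
      simpa using this
    -- goal form
    rw [hu_eq]
    have hrev : (w i :: (z ++ [w (i + (n+2))])).reverse
        = w (i + (n+2)) :: (z.reverse ++ [w i]) := by simp
    rw [hrev]
    -- reversed pieces are factors by induction
    have hzR : z.reverse ∈ Fw w (n+1) := IH (n+1) (by omega) z hz
    have hxzR : z.reverse ++ [w i] ∈ Fw w (n+2) := by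
      have := IH (n+2) (by omega) _ hxz
      simpa using this
    have hzyR : w (i + (n+2)) :: z.reverse ∈ Fw w (n+2) := by
      have := IH (n+2) (by omega) _ hzy
      simpa using this
    by_cases hbis : IsRS w (n+1) z.reverse ∧ IsLS w (n+1) z.reverse
    · -- bispecial case
      obtain ⟨hbR, hbL⟩ := hbis
      -- z itself is bispecial: its extensions are reversals of extensions of z.reverse
      have hzRS : IsRS w (n+1) z := by
        constructor
        · have h0 : (0 : Fin 2) :: z.reverse ∈ Fw w (n+2) := hbL.1
          have := IH (n+2) (by omega) _ h0
          simpa using this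
        · have h1 : (1 : Fin 2) :: z.reverse ∈ Fw w (n+2) := hbL.2
          have := IH (n+2) (by omega) _ h1
          simpa using this
      have hzLS : IsLS w (n+1) z := by
        constructor
        · have h0 : z.reverse ++ [(0 : Fin 2)] ∈ Fw w (n+2) := hbR.1
          have := IH (n+2) (by omega) _ h0
          simpa using this
        · have h1 : z.reverse ++ [(1 : Fin 2)] ∈ Fw w (n+2) := hbR.2
          have := IH (n+2) (by omega) _ h1
          simpa using this
      -- z is a palindrome by uniqueness of the right special factor
      obtain ⟨ρ, hρRS, hρu⟩ := RS_unique hcomp (n+1)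
      have hpal : z.reverse = z := by
        rw [hρu _ hbR, ← hρu _ hzRS]
      rw [hpal]
      set x := w i with hxdef
      set y := w (i + (n+2)) with hydef
      by_cases hxy : x = y
      · rw [← hxy]
        have hU := win_mem w i (n+3)
        rw [hu_eq] at hU
        rw [← hxy] at hU
        exact hU
      · -- letters differ: if the target is missing, run the endgame
        by_contra hno
        -- h00 : y :: (z ++ [y]) ∈ Fw
        have hyz : y :: z ∈ Fw w (n+2) := by
          rcases fin2_two 0 1 (by decide) y with h | h
          · rw [h]; exact hzLS.1
          · rw [h]; exact hzLS.2
        obtain ⟨j, hj⟩ := hyz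
        have hwj : factorAt w j (n+3) = (y :: z) ++ [w (j + (n+2))] := by
          rw [show n+3 = (n+2)+1 from rfl, factorAt_succ, ← hj]
        have hcy : w (j + (n+2)) = y := by
          rcases fin2_two x y hxy (w (j + (n+2))) with h | h
          · exfalso
            apply hno
            have : (y :: z) ++ [w (j+(n+2))] ∈ Fw w (n+3) := by
              rw [← hwj]; exact win_mem w j (n+3)
            rw [h] at this
            simpa using this
          · exact h
        have h00 : y :: (z ++ [y]) ∈ Fw w (n+3) := by
          have : (y :: z) ++ [w (j+(n+2))] ∈ Fw w (n+3) := by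
            rw [← hwj]; exact win_mem w j (n+3)
          rw [hcy] at this
          simpa using this
        -- h11 : x :: (z ++ [x]) ∈ Fw
        have hzx : z ++ [x] ∈ Fw w (n+2) := by
          rcases fin2_two 0 1 (by decide) x with h | h
          · rw [h]; exact hzRS.1
          · rw [h]; exact hzRS.2
        obtain ⟨j2, hj2N, hj2⟩ := recur haper hcomp hzx 1
        obtain ⟨j2', rfl⟩ : ∃ a, j2 = a + 1 := ⟨j2 - 1, by omega⟩
        have hwj2 : factorAt w j2' (n+3) = w j2' :: (z ++ [x]) := by
          rw [show n+3 = (n+2)+1 from rfl, factorAt_cons, ← hj2]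
        have hcx : w j2' = x := by
          rcases fin2_two x y hxy (w j2') with h | h
          · exact h
          · exfalso
            apply hno
            have : w j2' :: (z ++ [x]) ∈ Fw w (n+3) := by
              rw [← hwj2]; exact win_mem w j2' (n+3)
            rw [h] at this
            exact this
        have h11 : x :: (z ++ [x]) ∈ Fw w (n+3) := by
          have : w j2' :: (z ++ [x]) ∈ Fw w (n+3) := by
            rw [← hwj2]; exact win_mem w j2' (n+3)
          rwa [hcx] at this
        -- endgame
        have hCC : ∀ v ∈ Fw w (z.length+1), v.reverse ∈ Fw w (z.length+1) := by
          rw [hzlen]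
          exact fun v hv => IH (n+2) (by omega) v hv
        have h00' : y :: (z ++ [y]) ∈ Fw w (z.length+2) := by rw [hzlen]; exact h00
        have h11' : x :: (z ++ [x]) ∈ Fw w (z.length+2) := by rw [hzlen]; exact h11
        have h01' : y :: (z ++ [x]) ∉ Fw w (z.length+2) := by
          rw [hzlen]
          intro hmem
          exact hno (by simpa using hmem)
        exact endgame haper hcomp (Ne.symm hxy) hpal h00' h11' h01' hCC
    · -- non-bispecial case
      have hz' : ¬ IsRS w (n+1) z.reverse ∨ ¬ IsLS w (n+1) z.reverse := by
        by_cases hR : IsRS w (n+1) z.reverse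
        · right; intro hL; exact hbis ⟨hR, hL⟩
        · left; exact hR
      have := nonspecial_fill haper hcomp hz' hzyR hxzR
      simpa using this

/-- indicator of the letter 1 -/
def ind (a : Fin 2) : ℤ := if a = 1 then 1 else 0

lemma ind_bounds (a : Fin 2) : 0 ≤ ind a ∧ ind a ≤ 1 := by
  unfold ind; split <;> omega

lemma ind_inj {a b : Fin 2} (h : ind a = ind b) : a = b := by
  fin_cases a <;> fin_cases b <;> simp_all [ind]

/-- number of 1s in the window of length n at i -/
def cnt (w : ℕ → Fin 2) (i n : ℕ) : ℤ := (((factorAt w i n).count 1 : ℕ) : ℤ)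

lemma cnt_zero (i : ℕ) : cnt w i 0 = 0 := by simp [cnt, factorAt]

lemma cnt_succ (i n : ℕ) : cnt w i (n+1) = cnt w i n + ind (w (i+n)) := by
  unfold cnt ind
  rw [factorAt_succ, List.count_append]
  push_cast
  congr 1
  rcases fin2_two 0 1 (by decide) (w (i+n)) with h | h <;> rw [h] <;> simp

lemma cnt_cons (i n : ℕ) : cnt w i (n+1) = ind (w i) + cnt w (i+1) n := by
  unfold cnt ind
  rw [factorAt_cons, List.count_cons]
  push_cast
  rcases fin2_two 0 1 (by decide) (w i) with h | h <;> rw [h] <;> simp <;> ring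

lemma cnt_add (i a b : ℕ) : cnt w i (a+b) = cnt w i a + cnt w (i+a) b := by
  unfold cnt
  rw [factorAt_add, List.count_append]
  push_cast
  ring

lemma cnt_step (i m : ℕ) (hm : 1 ≤ m) :
    cnt w (i+1) m ≤ cnt w i m + 1 ∧ cnt w i m ≤ cnt w (i+1) m + 1 := by
  obtain ⟨n, rfl⟩ : ∃ n, m = n + 1 := ⟨m-1, by omega⟩
  have h1 := cnt_cons (w := w) i n
  have h2 := cnt_succ (w := w) (i+1) n
  have b1 := ind_bounds (w i)
  have b2 := ind_bounds (w (i+1+n))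
  omega

lemma ivt_up (f : ℕ → ℤ) (hstep : ∀ i, f (i+1) ≤ f i + 1) (a : ℕ) (v : ℤ) (h1 : f a ≤ v) :
    ∀ b, a ≤ b → v ≤ f b → ∃ j, f j = v := by
  intro b
  induction b with
  | zero =>
    intro hab h2
    obtain rfl : a = 0 := by omega
    exact ⟨0, by omega⟩
  | succ b ih =>
    intro hab h2
    rcases Nat.eq_or_lt_of_le hab with rfl | hab'
    · exact ⟨b+1, by omega⟩
    · by_cases hv : v ≤ f b
      · exact ih (by omega) hv
      · push_neg at hv
        have := hstep b
        exact ⟨b+1, by omega⟩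

lemma ivt (f : ℕ → ℤ) (hstep : ∀ i, f (i+1) ≤ f i + 1 ∧ f i ≤ f (i+1) + 1)
    (a b : ℕ) (v : ℤ) (h1 : f a ≤ v) (h2 : v ≤ f b) : ∃ j, f j = v := by
  rcases le_or_gt a b with hab | hab
  · exact ivt_up f (fun i => (hstep i).1) a v h1 b hab h2
  · obtain ⟨j, hj⟩ := ivt_up (fun p => -(f p))
      (fun i => by show -(f (i+1)) ≤ -(f i) + 1; have := (hstep i).2; omega)
      b (-v) (by show -(f b) ≤ -v; omega) a (by omega) (by show -v ≤ -(f a); omega)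
    have h3 : -(f j) = -v := hj
    exact ⟨j, by omega⟩

/-- the final contradiction: 0t0 and 1t1 cannot both be factors (t a palindrome) -/
lemma final_contra
    (haper : ¬ ∃ p, 1 ≤ p ∧ ∃ N, ∀ i, N ≤ i → w (i + p) = w i)
    (hcomp : ∀ m, 1 ≤ m → (Fw w m).ncard = m + 1)
    {t : List (Fin 2)} (hpal : t.reverse = t)
    (h00 : (0 : Fin 2) :: (t ++ [0]) ∈ Fw w (t.length+2))
    (h11 : (1 : Fin 2) :: (t ++ [1]) ∈ Fw w (t.length+2)) : False := by
  have htx0 : (t ++ [0]) ∈ Fw w (t.length+1) := by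
    have := Fw_tail (w := w) (n := t.length+1) h00
    simpa using this
  have htx1 : (t ++ [1]) ∈ Fw w (t.length+1) := by
    have := Fw_tail (w := w) (n := t.length+1) h11
    simpa using this
  have htRS : IsRS w t.length t := ⟨htx0, htx1⟩
  obtain ⟨ρ1, hρ1RS, hρ1u⟩ := RS_unique hcomp t.length
  have hRSu : ∀ z', IsRS w t.length z' → z' = t := by
    intro z' h; rw [hρ1u z' h, ← hρ1u t htRS]
  obtain ⟨ρ2, hρ2RS, hρ2u⟩ := RS_unique hcomp (t.length+1)
  have hρ2len : ρ2.length = t.length+1 := IsRS_length hρ2RS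
  obtain ⟨c, ρ2', rfl⟩ : ∃ c ρ2', ρ2 = c :: ρ2' := by
    cases ρ2 with
    | nil => simp at hρ2len
    | cons c l => exact ⟨c, l, rfl⟩
  have hρ2t : ρ2' = t := by
    have := RS_tail (w := w) (n := t.length) hρ2RS
    simpa using hRSu _ this
  rw [hρ2t] at hρ2RS hρ2u
  have hrevm : ((0 : Fin 2) :: (t ++ [1])).reverse = (1 : Fin 2) :: (t ++ [0]) := by
    simp [hpal]
  by_cases h01m : (0 : Fin 2) :: (t ++ [1]) ∈ Fw w (t.length+2)
  · by_cases h10m : (1 : Fin 2) :: (t ++ [0]) ∈ Fw w (t.length+2)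
    · have hRS0 : IsRS w (t.length+1) ((0 : Fin 2) :: t) := by
        constructor
        · rw [show ((0:Fin 2) :: t) ++ [(0:Fin 2)] = (0:Fin 2) :: (t ++ [0]) by simp]
          exact h00
        · rw [show ((0:Fin 2) :: t) ++ [(1:Fin 2)] = (0:Fin 2) :: (t ++ [1]) by simp]
          exact h01m
      have hRS1 : IsRS w (t.length+1) ((1 : Fin 2) :: t) := by
        constructor
        · rw [show ((1:Fin 2) :: t) ++ [(0:Fin 2)] = (1:Fin 2) :: (t ++ [0]) by simp]
          exact h10m
        · rw [show ((1:Fin 2) :: t) ++ [(1:Fin 2)] = (1:Fin 2) :: (t ++ [1]) by simp]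
          exact h11
      have e0 := hρ2u _ hRS0
      have e1 := hρ2u _ hRS1
      rw [← e1] at e0
      simp at e0
    · apply h10m
      rw [← hrevm]
      exact Crev haper hcomp (t.length+2) _ h01m
  · by_cases h10m : (1 : Fin 2) :: (t ++ [0]) ∈ Fw w (t.length+2)
    · apply h01m
      have := Crev haper hcomp (t.length+2) _ h10m
      have hrev2 : ((1 : Fin 2) :: (t ++ [0])).reverse = (0 : Fin 2) :: (t ++ [1]) := by
        simp [hpal]
      rwa [hrev2] at this
    · rcases fin2_two 0 1 (by decide) c with hc | hc
      · apply h01m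
        have := hρ2RS.2
        rw [show (c :: t) ++ [(1:Fin 2)] = c :: (t ++ [1]) by simp, hc] at this
        exact this
      · apply h10m
        have := hρ2RS.1
        rw [show (c :: t) ++ [(0:Fin 2)] = c :: (t ++ [0]) by simp, hc] at this
        exact this

theorem balance
    (haper : ¬ ∃ p, 1 ≤ p ∧ ∃ N, ∀ i, N ≤ i → w (i + p) = w i)
    (hcomp : ∀ m, 1 ≤ m → (Fw w m).ncard = m + 1) :
    ∀ m i i', cnt w i' m ≤ cnt w i m + 1 := by
  classical
  by_contra hneg
  push_neg at hneg
  have hex : ∃ m, ∃ i i', cnt w i m + 2 ≤ cnt w i' m := by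
    obtain ⟨m, i, i', h⟩ := hneg; exact ⟨m, i, i', by omega⟩
  obtain ⟨i, i0, hii⟩ := Nat.find_spec hex
  have hbal : ∀ j, j < Nat.find hex → ∀ a b, cnt w b j ≤ cnt w a j + 1 := by
    intro j hj a b
    by_contra hc
    exact Nat.find_min hex hj ⟨a, b, by omega⟩
  revert hii hbal
  generalize Nat.find hex = m
  intro hii hbal
  have hm2 : 2 ≤ m := by
    by_contra hlt
    push_neg at hlt
    interval_cases m
    · rw [cnt_zero] at hii
      rw [cnt_zero] at hii
      omega
    · have e1 : cnt w i 1 = ind (w (i+0)) := by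
        have := cnt_succ (w := w) i 0
        rw [cnt_zero] at this
        simpa using this
      have e2 : cnt w i0 1 = ind (w (i0+0)) := by
        have := cnt_succ (w := w) i0 0
        rw [cnt_zero] at this
        simpa using this
      have b1 := ind_bounds (w (i+0))
      have b2 := ind_bounds (w (i0+0))
      omega
  obtain ⟨j, hj0⟩ := ivt (fun p => cnt w p m) (fun p => cnt_step p m (by omega))
    i i0 (cnt w i m + 2) (by show cnt w i m ≤ cnt w i m + 2; omega) hii
  have hj : cnt w j m = cnt w i m + 2 := hj0
  have hDsucc : ∀ k, (cnt w j (k+1) - cnt w i (k+1))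
      = (cnt w j k - cnt w i k) + (ind (w (j+k)) - ind (w (i+k))) := by
    intro k
    rw [cnt_succ, cnt_succ]; ring
  have hD : ∀ k, 1 ≤ k → k ≤ m-1 → cnt w j k - cnt w i k = 1 := by
    intro k h1 h2
    have hb1 := hbal k (by omega) i j
    have hb1' := hbal k (by omega) j i
    have e1 : cnt w i m = cnt w i k + cnt w (i+k) (m-k) := by
      have := cnt_add (w := w) i k (m-k)
      rwa [show k + (m-k) = m by omega] at this
    have e2 : cnt w j m = cnt w j k + cnt w (j+k) (m-k) := by
      have := cnt_add (w := w) j k (m-k)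
      rwa [show k + (m-k) = m by omega] at this
    have hb2 := hbal (m-k) (by omega) (i+k) (j+k)
    have hb2' := hbal (m-k) (by omega) (j+k) (i+k)
    omega
  have hD0 : cnt w j 0 - cnt w i 0 = 0 := by rw [cnt_zero, cnt_zero]; ring
  have hlow : ind (w (j+0)) = 1 ∧ ind (w (i+0)) = 0 := by
    have hs := hDsucc 0
    have h1 := hD 1 le_rfl (by omega)
    have hone : (0:ℕ) + 1 = 1 := rfl
    rw [hone] at hs
    have b1 := ind_bounds (w (j+0))
    have b2 := ind_bounds (w (i+0))
    omega
  have htop : ind (w (j+(m-1))) = 1 ∧ ind (w (i+(m-1))) = 0 := by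
    have hs := hDsucc (m-1)
    rw [show m - 1 + 1 = m by omega] at hs
    have h1 := hD (m-1) (by omega) (by omega)
    have b1 := ind_bounds (w (j+(m-1)))
    have b2 := ind_bounds (w (i+(m-1)))
    omega
  have hmid : ∀ k, 1 ≤ k → k ≤ m-2 → w (j+k) = w (i+k) := by
    intro k h1 h2
    have hs := hDsucc k
    have e1 := hD k (by omega) (by omega)
    have e2 := hD (k+1) (by omega) (by omega)
    have b1 := ind_bounds (w (j+k))
    have b2 := ind_bounds (w (i+k))
    apply ind_inj
    omega
  have hD'succ : ∀ k, k+1 ≤ m → (cnt w j (k+1) - cnt w (i + (m-(k+1))) (k+1))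
      = (cnt w j k - cnt w (i + (m-k)) k) + (ind (w (j+k)) - ind (w (i + (m-(k+1))))) := by
    intro k hk
    have e1 := cnt_succ (w := w) j k
    have e2 := cnt_cons (w := w) (i + (m-(k+1))) k
    rw [show i + (m-(k+1)) + 1 = i + (m-k) by omega] at e2
    rw [e1, e2]; ring
  have hD' : ∀ k, 1 ≤ k → k ≤ m-1 → cnt w j k - cnt w (i + (m-k)) k = 1 := by
    intro k h1 h2
    have hb1 := hbal k (by omega) (i + (m-k)) j
    have hb1' := hbal k (by omega) j (i + (m-k))
    have e1 : cnt w i m = cnt w i (m-k) + cnt w (i+(m-k)) k := by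
      have := cnt_add (w := w) i (m-k) k
      rwa [show (m-k) + k = m by omega] at this
    have e2 : cnt w j m = cnt w j k + cnt w (j+k) (m-k) := by
      have := cnt_add (w := w) j k (m-k)
      rwa [show k + (m-k) = m by omega] at this
    have hb2 := hbal (m-k) (by omega) i (j+k)
    have hb2' := hbal (m-k) (by omega) (j+k) i
    omega
  have hpalsrc : ∀ k, 1 ≤ k → k ≤ m-2 → w (j+k) = w (i + (m-(k+1))) := by
    intro k h1 h2
    have hs := hD'succ k (by omega)
    have e1 := hD' k (by omega) (by omega)
    have e2 := hD' (k+1) (by omega) (by omega)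
    apply ind_inj
    omega
  -- letters
  have hwi : w i = 0 := by
    have := hlow.2
    rw [show i + 0 = i by omega] at this
    rcases fin2_two 0 1 (by decide) (w i) with h | h
    · exact h
    · rw [h] at this; simp [ind] at this
  have hwj : w j = 1 := by
    have := hlow.1
    rw [show j + 0 = j by omega] at this
    rcases fin2_two 0 1 (by decide) (w j) with h | h
    · rw [h] at this; simp [ind] at this
    · exact h
  have hwi' : w (i + (m-1)) = 0 := by
    have := htop.2
    rcases fin2_two 0 1 (by decide) (w (i+(m-1))) with h | h
    · exact h
    · rw [h] at this; simp [ind] at this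
  have hwj' : w (j + (m-1)) = 1 := by
    have := htop.1
    rcases fin2_two 0 1 (by decide) (w (j+(m-1))) with h | h
    · rw [h] at this; simp [ind] at this
    · exact h
  -- assemble the word t
  apply final_contra haper hcomp
    (t := factorAt w (i+1) (m-2)) ?hpal ?h00 ?h11
  case hpal =>
    apply List.ext_getElem (by simp)
    intro k hk1 hk2
    rw [List.getElem_reverse]
    simp only [factorAt_length] at hk1 hk2 ⊢
    rw [factorAt_getElem w (i+1) (m-2) k hk2,
      factorAt_getElem w (i+1) (m-2) (m-2-1-k) (by omega)]
    -- w (i+1+(m-2-1-k)) = w (i+1+k)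
    have hA := hpalsrc (k+1) (by omega) (by omega)
    have hB := hmid (k+1) (by omega) (by omega)
    rw [show i + 1 + (m-2-1-k) = i + (m - (k+1+1)) by omega, ← hA, hB,
      show i + (k+1) = i + 1 + k by omega]
  case h00 =>
    refine ⟨i, xty_eq_iff.mpr ?_⟩
    rw [factorAt_length]
    refine ⟨hwi, ?_, ?_⟩
    · unfold OccT; rw [factorAt_length]
    · rw [show i + (m-2) + 1 = i + (m-1) by omega]; exact hwi'
  case h11 =>
    refine ⟨j, xty_eq_iff.mpr ?_⟩
    rw [factorAt_length]
    refine ⟨hwj, ?_, ?_⟩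
    · unfold OccT
      rw [factorAt_length]
      rw [factorAt_eq_iff]
      intro k hk
      have := hmid (k+1) (by omega) (by omega)
      rw [show j + 1 + k = j + (k+1) by omega, show i + 1 + k = i + (k+1) by omega]
      exact this
    · rw [show j + (m-2) + 1 = j + (m-1) by omega]; exact hwj'

lemma count01 (l : List (Fin 2)) : l.count 0 + l.count 1 = l.length := by
  induction l with
  | nil => simp
  | cons a l ih =>
    rw [List.count_cons, List.count_cons]
    fin_cases a <;> simp <;> omega

lemma multiset_eq_of_cnt {p q n : ℕ}
    (h : cnt w p n = cnt w q n) :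
    ((factorAt w p n : List (Fin 2)) : Multiset (Fin 2))
      = ((factorAt w q n : List (Fin 2)) : Multiset (Fin 2)) := by
  have hcount : (factorAt w p n).count 1 = (factorAt w q n).count 1 := by
    have := h
    unfold cnt at this
    exact_mod_cast this
  have hlen : (factorAt w p n).length = (factorAt w q n).length := by
    rw [factorAt_length, factorAt_length]
  have hc0 : (factorAt w p n).count 0 = (factorAt w q n).count 0 := by
    have h1 := count01 (factorAt w p n)
    have h2 := count01 (factorAt w q n)
    omega
  apply Multiset.ext.mpr
  intro a
  rw [Multiset.coe_count, Multiset.coe_count]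
  fin_cases a
  · exact hc0
  · exact hcount

end S17

/-- every Sturmian word (aperiodic binary word with exactly `m + 1`
factors of each length `m ≥ 1`) has exactly 2 Abelian factors of every length. -/
theorem stmt17 (w : ℕ → Fin 2)
    (haper : ¬ ∃ p, 1 ≤ p ∧ ∃ N, ∀ i, N ≤ i → w (i + p) = w i)
    (hcomp : ∀ m, 1 ≤ m →
      {u : List (Fin 2) | ∃ i, u = factorAt w i m}.ncard = m + 1) :
    ∀ m, 1 ≤ m → (abelianFactors w m).ncard = 2 := by
  intro m hm
  have hcomp' : ∀ m, 1 ≤ m → (S17.Fw w m).ncard = m + 1 := hcomp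
  have hbal := S17.balance haper hcomp'
  -- the count takes two distinct values
  have hnotconst : ∃ i₁, S17.cnt w i₁ m ≠ S17.cnt w 0 m := by
    by_contra hc
    push_neg at hc
    apply haper
    refine ⟨m, hm, 0, fun i _ => ?_⟩
    have h1 := S17.cnt_succ (w := w) i (m-1)
    have h2 := S17.cnt_cons (w := w) i (m-1)
    rw [show m - 1 + 1 = m by omega] at h1 h2
    have e1 := hc i
    have e2 := hc (i+1)
    apply S17.ind_inj
    have hpos : i + (m-1) = i + m - 1 := by omega
    -- from h1, h2 : cnt i m = cnt i (m-1) + ind (w (i+(m-1))) = ind (w i) + cnt (i+1) (m-1)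
    -- need another relation: cnt i (m-1+1)... use window shift:
    -- cnt (i) m and cnt (i+1) m equal; cnt i m = ind (w i) + cnt (i+1) (m-1);
    -- cnt (i+1) m = cnt (i+1) (m-1) + ind (w (i+1+(m-1)))
    have h3 := S17.cnt_succ (w := w) (i+1) (m-1)
    rw [show m - 1 + 1 = m by omega] at h3
    have : S17.cnt w i m = S17.cnt w (i+1) m := by rw [e1, ← e2]
    rw [show i + 1 + (m-1) = i + m by omega] at h3
    omega
  obtain ⟨i₁, hi₁⟩ := hnotconst
  have hab : ∃ a b, S17.cnt w b m = S17.cnt w a m + 1 := by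
    rcases lt_or_gt_of_ne hi₁ with h | h
    · exact ⟨i₁, 0, by have := hbal m i₁ 0; omega⟩
    · exact ⟨0, i₁, by have := hbal m 0 i₁; omega⟩
  obtain ⟨a, b, hab⟩ := hab
  have hall : ∀ p, S17.cnt w p m = S17.cnt w a m ∨ S17.cnt w p m = S17.cnt w b m := by
    intro p
    have h1 := hbal m a p
    have h2 := hbal m p a
    have h3 := hbal m b p
    have h4 := hbal m p b
    omega
  have hset : abelianFactors w m
      = {((factorAt w a m : List (Fin 2)) : Multiset (Fin 2)),
         ((factorAt w b m : List (Fin 2)) : Multiset (Fin 2))} := by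
    ext s
    constructor
    · rintro ⟨p, rfl⟩
      rcases hall p with h | h
      · left; exact S17.multiset_eq_of_cnt h
      · right
        show _ ∈ ({((factorAt w b m : List (Fin 2)) : Multiset (Fin 2))} : Set _)
        rw [Set.mem_singleton_iff]
        exact S17.multiset_eq_of_cnt h
    · intro hs
      rcases hs with rfl | hs
      · exact ⟨a, rfl⟩
      · rw [Set.mem_singleton_iff] at hs
        rw [hs]
        exact ⟨b, rfl⟩
  rw [hset]
  apply Set.ncard_pair
  intro heq
  have hcount := congrArg (fun s => Multiset.count 1 s) heq
  simp only [Multiset.coe_count] at hcount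
  have : S17.cnt w a m = S17.cnt w b m := by
    unfold S17.cnt
    exact_mod_cast hcount
  omega
end
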